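/- arXiv:0906.0219 — 9 statements merged into one kernel-verified Lean document; each statement's English description precedes it below -/
import Mathlib

section
/- Let T : A(X,E) → A(Y,F) be a linear map that preserves common zeros, where A(X,E) and A(Y,F) are almost normally multiplicative vector subspaces of C(X,E) and C(Y,F). Then for every x ∈ X the set Z_x := ⋂_{f ∈ A(X,E), f(x)=0} cl_{βY}(ι_Y(Z(Tf))) is nonempty. -/
open Set Filter Topology

/-- The zero set of a function. -/
def zeroSet {α β : Type*} [Zero β] (f : α → β) : Set α := {x | f x = 0}

/-- A vector subspace `AX` of `C(X)` is almost normal if all its members are continuous and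
for every pair of subsets `P`, `Q` of `X` whose closures in the Stone–Čech compactification
`βX` are disjoint, there is `f ∈ AX` with `f = 0` on `P` and `f = 1` on `Q`. -/
def AlmostNormal (X : Type*) [TopologicalSpace X] (AX : Submodule ℝ (X → ℝ)) : Prop :=
  (∀ φ ∈ AX, Continuous φ) ∧
  ∀ P Q : Set X,
    Disjoint (closure (stoneCechUnit '' P)) (closure (stoneCechUnit '' Q)) →
      ∃ φ ∈ AX, (∀ x ∈ P, φ x = 0) ∧ (∀ x ∈ Q, φ x = 1)

/-- A vector subspace `AXE` of `C(X,E)` is almost normally multiplicative if all its members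
are continuous, it contains the constant functions, and there is an almost normal subspace
`AX` of `C(X)` such that `φ • f ∈ AXE` whenever `φ ∈ AX` and `f ∈ AXE`. -/
def AlmostNormallyMultiplicative (X E : Type*) [TopologicalSpace X] [TopologicalSpace E]
    [AddCommGroup E] [Module ℝ E] (AXE : Submodule ℝ (X → E)) : Prop :=
  (∀ f ∈ AXE, Continuous f) ∧
  (∀ u : E, (fun _ : X => u) ∈ AXE) ∧
  ∃ AX : Submodule ℝ (X → ℝ), AlmostNormal X AX ∧
    ∀ φ ∈ AX, ∀ f ∈ AXE, (fun x => φ x • f x) ∈ AXE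

/-- A map `T` between subspaces of `C(X,E)` and `C(Y,F)` preserves common zeros if for every
`k ∈ ℕ` and every finite family `f₁, …, f_k`, the zero sets of the `fᵢ` have a common point
iff the zero sets of the `T fᵢ` do. -/
def PreservesCommonZeros {X Y E F : Type*} [TopologicalSpace X] [TopologicalSpace Y]
    [AddCommGroup E] [Module ℝ E] [AddCommGroup F] [Module ℝ F]
    {AXE : Submodule ℝ (X → E)} {AYF : Submodule ℝ (Y → F)}
    (T : AXE → AYF) : Prop :=
  ∀ (k : ℕ) (f : Fin (k + 1) → AXE),
    (⋂ i, zeroSet ((f i : X → E))).Nonempty ↔ (⋂ i, zeroSet ((T (f i) : Y → F))).Nonempty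

/-- The set `Z_x ⊆ βY`: the intersection, over all `f` in the subspace vanishing at `x`, of the
closures in `βY` of the zero sets of `T f`. -/
def Zx {X Y E F : Type*} [TopologicalSpace X] [TopologicalSpace Y]
    [AddCommGroup E] [Module ℝ E] [AddCommGroup F] [Module ℝ F]
    {AXE : Submodule ℝ (X → E)} {AYF : Submodule ℝ (Y → F)}
    (T : AXE → AYF) (x : X) : Set (StoneCech Y) :=
  ⋂ (f : AXE) (_ : (f : X → E) x = 0), closure (stoneCechUnit '' zeroSet ((T f : Y → F)))

theorem zx_nonempty {X Y E F : Type*}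
    [TopologicalSpace X] [T2Space X] [CompletelyRegularSpace X]
    [TopologicalSpace Y] [T2Space Y] [CompletelyRegularSpace Y]
    [AddCommGroup E] [Module ℝ E] [TopologicalSpace E] [IsTopologicalAddGroup E]
    [ContinuousSMul ℝ E] [T2Space E] [Nontrivial E]
    [AddCommGroup F] [Module ℝ F] [TopologicalSpace F] [IsTopologicalAddGroup F]
    [ContinuousSMul ℝ F] [T2Space F] [Nontrivial F]
    {AXE : Submodule ℝ (X → E)} {AYF : Submodule ℝ (Y → F)}
    (hAXE : AlmostNormallyMultiplicative X E AXE)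
    (hAYF : AlmostNormallyMultiplicative Y F AYF)
    (T : AXE →ₗ[ℝ] AYF) (hT : PreservesCommonZeros (T : AXE → AYF))
    (x : X) : (Zx (T : AXE → AYF) x).Nonempty := by
  classical
  -- Y is nonempty
  have hYne : Nonempty Y := by
    have h0 := (hT 0 (fun _ => 0)).mp ⟨x, by simp [zeroSet]⟩
    obtain ⟨y, _⟩ := h0
    exact ⟨y⟩
  haveI := hYne
  haveI : Nonempty (StoneCech Y) := ⟨stoneCechUnit (Classical.arbitrary Y)⟩
  set ι := {f : AXE // (f : X → E) x = 0}
  set S : ι → Set (StoneCech Y) :=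
    fun p => closure (stoneCechUnit '' zeroSet ((T p.1 : Y → F))) with hS
  have hZx : Zx (T : AXE → AYF) x = ⋂ p : ι, S p := by
    rw [Set.iInter_subtype]
    rfl
  rw [hZx]
  by_contra hemp
  rw [Set.not_nonempty_iff_eq_empty] at hemp
  have hclosed : ∀ p : ι, IsClosed (S p) := fun p => isClosed_closure
  obtain ⟨t, ht⟩ := IsCompact.elim_finite_subfamily_closed (isCompact_univ (X := StoneCech Y))
    S hclosed (by rw [Set.univ_inter, hemp])
  rw [Set.univ_inter] at ht
  rcases Finset.eq_empty_or_nonempty t with rfl | htne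
  · simp only [Finset.notMem_empty, Set.iInter_of_empty, Set.iInter_univ] at ht
    exact (Set.univ_nonempty (α := StoneCech Y)).ne_empty ht
  · obtain ⟨k, hk⟩ := Nat.exists_eq_succ_of_ne_zero (Finset.card_ne_zero_of_mem htne.choose_spec)
    set e : Fin t.card ≃ t := t.equivFin.symm
    set g : Fin (k + 1) → AXE := fun i => ((e (Fin.cast hk.symm i) : t) : ι).1 with hg
    have hx : (⋂ i, zeroSet ((g i : X → E))).Nonempty := by
      refine ⟨x, Set.mem_iInter.2 fun i => ?_⟩
      exact ((e (Fin.cast hk.symm i) : t) : ι).2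
    obtain ⟨y, hy⟩ := (hT k g).mp hx
    rw [Set.mem_iInter] at hy
    have : stoneCechUnit y ∈ ⋂ p ∈ t, S p := by
      refine Set.mem_iInter₂.2 fun p hp => ?_
      have hj : ∃ i : Fin (k + 1), g i = p.1 := by
        refine ⟨Fin.cast hk (t.equivFin ⟨p, hp⟩), ?_⟩
        simp [hg, e]
      obtain ⟨i, hi⟩ := hj
      have : y ∈ zeroSet ((T p.1 : Y → F)) := hi ▸ hy i
      exact subset_closure ⟨y, this, rfl⟩
    rw [ht] at this
    exact this
end

section
/- Let T : A(X,E) → A(Y,F) be a surjective linear map that preserves common zeros, where A(X,E) and A(Y,F) are almost normally multiplicative vector subspaces of C(X,E) and C(Y,F). If x ∈ X and y ∈ Z_x, then for every f ∈ A(X,E), setting u = f(x), the point y lies in the closure in βY of ι_Y({y' ∈ Y : (Tf)(y') = (T𝐮)(y')}); consequently (Tf)^β(y) = (T𝐮)^β(y). -/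
open Set Filter Topology

/-- The unique continuous extension `g^β : βY → βF` of a continuous map `g : Y → F`. -/
noncomputable def betaExt {Y F : Type*} [TopologicalSpace Y] [TopologicalSpace F]
    {g : Y → F} (hg : Continuous g) : StoneCech Y → StoneCech F :=
  stoneCechExtend (continuous_stoneCechUnit.comp hg)

theorem formula_on_Zx {X Y E F : Type*}
    [TopologicalSpace X] [T2Space X] [CompletelyRegularSpace X]
    [TopologicalSpace Y] [T2Space Y] [CompletelyRegularSpace Y]
    [AddCommGroup E] [Module ℝ E] [TopologicalSpace E] [IsTopologicalAddGroup E]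
    [ContinuousSMul ℝ E] [T2Space E] [Nontrivial E]
    [AddCommGroup F] [Module ℝ F] [TopologicalSpace F] [IsTopologicalAddGroup F]
    [ContinuousSMul ℝ F] [T2Space F] [Nontrivial F]
    {AXE : Submodule ℝ (X → E)} {AYF : Submodule ℝ (Y → F)}
    (hAXE : AlmostNormallyMultiplicative X E AXE)
    (hAYF : AlmostNormallyMultiplicative Y F AYF)
    (T : AXE →ₗ[ℝ] AYF) (hTsurj : Function.Surjective T)
    (hT : PreservesCommonZeros (T : AXE → AYF))
    (x : X) (y : StoneCech Y) (hy : y ∈ Zx (T : AXE → AYF) x) (f : AXE) :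
    y ∈ closure (stoneCechUnit ''
        {y' : Y | (T f : Y → F) y' =
          (T ⟨fun _ => (f : X → E) x, hAXE.2.1 _⟩ : Y → F) y'}) ∧
    betaExt (hAYF.1 _ (T f).2) y =
      betaExt (hAYF.1 _ (T ⟨fun _ => (f : X → E) x, hAXE.2.1 _⟩).2) y := by
  set u := (f : X → E) x
  set c : AXE := ⟨fun _ => u, hAXE.2.1 _⟩ with hc
  set g : AXE := f - c with hg
  have hgx : (g : X → E) x = 0 := by
    simp [hg, hc, u]
  have hzs : zeroSet ((T g : Y → F)) =
      {y' : Y | (T f : Y → F) y' = (T c : Y → F) y'} := by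
    ext y'
    simp [zeroSet, hg, map_sub, sub_eq_zero]
  have h1 : y ∈ closure (stoneCechUnit ''
      {y' : Y | (T f : Y → F) y' = (T c : Y → F) y'}) := by
    have := hy
    rw [Zx, Set.mem_iInter] at this
    have := Set.mem_iInter.1 (this g) hgx
    rwa [hzs] at this
  refine ⟨h1, ?_⟩
  have heq : Set.EqOn (betaExt (hAYF.1 _ (T f).2)) (betaExt (hAYF.1 _ (T c).2))
      (stoneCechUnit '' {y' : Y | (T f : Y → F) y' = (T c : Y → F) y'}) := by
    rintro _ ⟨y', hy', rfl⟩
    have h2 := congrFun (stoneCechExtend_extends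
      (continuous_stoneCechUnit.comp (hAYF.1 _ (T f).2))) y'
    have h3 := congrFun (stoneCechExtend_extends
      (continuous_stoneCechUnit.comp (hAYF.1 _ (T c).2))) y'
    simp only [Function.comp_apply] at h2 h3
    simp only [betaExt, h2, h3, Function.comp_apply]
    exact congrArg _ hy'
  exact (heq.closure (continuous_stoneCechExtend _) (continuous_stoneCechExtend _)) h1
end

section
/- Let T : A(X,E) → A(Y,F) be a surjective linear map that preserves common zeros, where A(X,E) and A(Y,F) are almost normally multiplicative vector subspaces of C(X,E) and C(Y,F). If x_1, x_2 ∈ X and x_1 ≠ x_2, then Z_{x_1} ∩ Z_{x_2} = ∅. -/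
open Set Filter Topology

open Pointwise NNReal

lemma stoneCechExtend_eq_on_closure {Y β : Type*} [TopologicalSpace Y]
    [TopologicalSpace β] [T2Space β] [CompactSpace β]
    {g : Y → β} (hg : Continuous g) {S : Set Y} {c : β}
    (h : ∀ y ∈ S, g y = c) {p : StoneCech Y} (hp : p ∈ closure (stoneCechUnit '' S)) :
    stoneCechExtend hg p = c := by
  have hcl : closure (stoneCechUnit '' S) ⊆ stoneCechExtend hg ⁻¹' {c} := by
    apply closure_minimal
    · rintro _ ⟨y, hy, rfl⟩
      have : stoneCechExtend hg (stoneCechUnit y) = g y :=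
        congrFun (stoneCechExtend_extends hg) y
      simp [Set.mem_preimage, this, h y hy]
    · exact isClosed_singleton.preimage (continuous_stoneCechExtend hg)
  exact hcl hp

lemma stoneCechUnit_not_mem_closure' {Y : Type*} [TopologicalSpace Y] [T2Space Y]
    [CompletelyRegularSpace Y] {K : Set Y} (hK : IsClosed K) {y : Y} (hy : y ∉ K) :
    stoneCechUnit y ∉ closure (stoneCechUnit '' K) := by
  obtain ⟨g, hgc, hgy, hgK⟩ := CompletelyRegularSpace.completely_regular y K hK hy
  intro hmem
  have h1 : stoneCechExtend hgc (stoneCechUnit y) = (1 : unitInterval) :=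
    stoneCechExtend_eq_on_closure hgc (fun z hz => hgK hz) hmem
  have h0 : stoneCechExtend hgc (stoneCechUnit y) = g y :=
    congrFun (stoneCechExtend_extends hgc) y
  rw [h0, hgy] at h1
  exact zero_ne_one h1


lemma exists_sep_fun {G : Type*} [AddCommGroup G] [TopologicalSpace G]
    [IsTopologicalAddGroup G] [T2Space G] (v : G) (hv : v ≠ 0) :
    ∃ ξ : G → ℝ, Continuous ξ ∧ ξ 0 = 0 ∧ (1/2 : ℝ) ≤ ξ v ∧ ∀ w, 0 ≤ ξ w := by
  classical
  -- a step shrinking an open symmetric neighborhood of 0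
  have step : ∀ V : {V : Set G // IsOpen V ∧ (0:G) ∈ V ∧ ∀ x ∈ V, -x ∈ V},
      ∃ W : {V : Set G // IsOpen V ∧ (0:G) ∈ V ∧ ∀ x ∈ V, -x ∈ V},
        (W : Set G) + W + W ⊆ V := by
    rintro ⟨V, hVo, hV0, hVs⟩
    obtain ⟨A, hAo, hA0, hAA⟩ := exists_open_nhds_zero_add_subset (hVo.mem_nhds hV0)
    obtain ⟨B, hBo, hB0, hBB⟩ := exists_open_nhds_zero_add_subset (hAo.mem_nhds hA0)
    set W : Set G := (A ∩ B) ∩ (-(A ∩ B)) with hWdef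
    have hWo : IsOpen W := (hAo.inter hBo).inter (hAo.inter hBo).neg
    have hW0 : (0:G) ∈ W := ⟨⟨hA0, hB0⟩, by simp [Set.mem_neg, hA0, hB0]⟩
    have hWs : ∀ x ∈ W, -x ∈ W := by
      rintro x ⟨hx1, hx2⟩
      refine ⟨by simpa [Set.mem_neg] using hx2, by simpa [Set.mem_neg] using hx1⟩
    have hWA : W ⊆ A := fun x hx => hx.1.1
    have hWB : W ⊆ B := fun x hx => hx.1.2
    refine ⟨⟨W, hWo, hW0, hWs⟩, ?_⟩
    calc (W + W) + W ⊆ (B + B) + A := Set.add_subset_add (Set.add_subset_add hWB hWB) hWA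
    _ ⊆ A + A := Set.add_subset_add_right hBB
    _ ⊆ V := hAA
  choose g hg using step
  -- base: symmetric open neighborhood of 0 avoiding v
  have hbase : IsOpen ({v}ᶜ ∩ {-v}ᶜ : Set G) ∧ (0:G) ∈ ({v}ᶜ ∩ {-v}ᶜ : Set G) ∧
      ∀ x ∈ ({v}ᶜ ∩ {-v}ᶜ : Set G), -x ∈ ({v}ᶜ ∩ {-v}ᶜ : Set G) := by
    refine ⟨isOpen_compl_singleton.inter isOpen_compl_singleton,
      ⟨by simpa using (Ne.symm hv), by simpa using (neg_ne_zero.mpr hv).symm⟩, ?_⟩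
    rintro x ⟨hx1, hx2⟩
    constructor
    · simp only [Set.mem_compl_iff, Set.mem_singleton_iff] at hx2 ⊢
      intro h; apply hx2; rw [← h, neg_neg]
    · simp only [Set.mem_compl_iff, Set.mem_singleton_iff] at hx1 ⊢
      intro h; apply hx1; exact (neg_injective h)
  set base : {V : Set G // IsOpen V ∧ (0:G) ∈ V ∧ ∀ x ∈ V, -x ∈ V} :=
    ⟨{v}ᶜ ∩ {-v}ᶜ, hbase⟩ with hbasedef
  set W : ℕ → Set G := fun n => Nat.rec Set.univ (fun k _ => ((g^[k]) base : Set G)) n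
    with hWdef
  have hW0univ : W 0 = Set.univ := rfl
  have hWsucc : ∀ n, W (n + 1) = ((g^[n]) base : Set G) := fun n => rfl
  have hWopen : ∀ n, IsOpen (W n) := by
    intro n; cases n with
    | zero => exact isOpen_univ
    | succ k => exact ((g^[k]) base).2.1
  have hWmem : ∀ n, (0:G) ∈ W n := by
    intro n; cases n with
    | zero => exact Set.mem_univ _
    | succ k => exact ((g^[k]) base).2.2.1
  have hWsym : ∀ n, ∀ x ∈ W n, -x ∈ W n := by
    intro n; cases n with
    | zero => exact fun x _ => Set.mem_univ _
    | succ k => exact ((g^[k]) base).2.2.2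
  have hWtriple : ∀ n, W (n+1) + W (n+1) + W (n+1) ⊆ W n := by
    intro n; cases n with
    | zero => intro x _; exact Set.mem_univ _
    | succ k =>
      rw [hWsucc, hWsucc, Function.iterate_succ_apply']
      exact hg ((g^[k]) base)
  have hWmono : ∀ n, W (n+1) ⊆ W n := by
    intro n x hx
    have : x + 0 + 0 ∈ W (n+1) + W (n+1) + W (n+1) :=
      Set.add_mem_add (Set.add_mem_add hx (hWmem (n+1))) (hWmem (n+1))
    simpa using hWtriple n this
  have hWanti : ∀ {m n}, m ≤ n → W n ⊆ W m := by
    intro m n h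
    exact antitone_nat_of_succ_le hWmono h
  have hvW1 : v ∉ W 1 := by
    have h1 : W 1 = (base : Set G) := by
      rw [show (1:ℕ) = 0 + 1 from rfl, hWsucc 0, Function.iterate_zero_apply]
    rw [h1]
    intro hmem
    exact hmem.1 rfl
  -- the pre-distance
  set d : G → G → ℝ≥0 := fun x y =>
    if h : ∃ n, y - x ∉ W n then (2⁻¹ : ℝ≥0) ^ (Nat.find h - 1) else 0 with hddef
  have hhalf1 : (2⁻¹ : ℝ≥0) < 1 := by
    rw [← NNReal.coe_lt_coe]
    norm_num
  have dself : ∀ x, d x x = 0 := by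
    intro x
    have hno : ¬ ∃ n, x - x ∉ W n := by
      rintro ⟨n, hn⟩
      exact hn (by simpa using hWmem n)
    simp only [hddef]
    rw [dif_neg hno]
  have dsymm : ∀ x y, d x y = d y x := by
    intro x y
    have hiff : ∀ n, (y - x ∉ W n ↔ x - y ∉ W n) := by
      intro n
      constructor
      · intro h hc; exact h (by simpa [neg_sub] using hWsym n _ hc)
      · intro h hc; exact h (by simpa [neg_sub] using hWsym n _ hc)
    simp only [hddef]
    by_cases h : ∃ n, y - x ∉ W n
    · have h' : ∃ n, x - y ∉ W n := ⟨h.choose, (hiff _).mp h.choose_spec⟩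
      rw [dif_pos h, dif_pos h']
      congr 1
      have h1 : Nat.find h ≤ Nat.find h' := Nat.find_mono fun n hn => (hiff n).mpr hn
      have h2 : Nat.find h' ≤ Nat.find h := Nat.find_mono fun n hn => (hiff n).mp hn
      omega
    · have h' : ¬ ∃ n, x - y ∉ W n := by
        rintro ⟨n, hn⟩; exact h ⟨n, (hiff n).mpr hn⟩
      rw [dif_neg h, dif_neg h']
  have dle1 : ∀ x y, d x y ≤ 1 := by
    intro x y
    simp only [hddef]
    split_ifs with h
    · exact pow_le_one₀ (zero_le) (by norm_num)
    · exact zero_le_one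
  have key_a : ∀ (n : ℕ) (x y : G), y - x ∈ W n → d x y ≤ (2⁻¹ : ℝ≥0) ^ n := by
    intro n x y hmem
    simp only [hddef]
    split_ifs with h
    · have hlt : n < Nat.find h := by
        rw [Nat.lt_find_iff]
        intro m hm hnot
        exact hnot (hWanti hm hmem)
      have : n ≤ Nat.find h - 1 := by omega
      exact pow_le_pow_of_le_one (zero_le) (by norm_num) this
    · exact zero_le
  have key_b : ∀ (n : ℕ) (x y : G), d x y ≤ (2⁻¹ : ℝ≥0) ^ (n+1) → y - x ∈ W (n+1) := by
    intro n x y hle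
    simp only [hddef] at hle
    split_ifs at hle with h
    · have hfind1 : 0 < Nat.find h := by
        rw [Nat.find_pos]
        simp [hW0univ]
      have hexp : n + 1 ≤ Nat.find h - 1 := by
        by_contra hcon
        push_neg at hcon
        have hlt : (2⁻¹ : ℝ≥0) ^ (n+1) < (2⁻¹ : ℝ≥0) ^ (Nat.find h - 1) := by
          apply pow_lt_pow_right_of_lt_one₀ (by norm_num) hhalf1 (by omega)
        exact absurd hle (not_le.mpr hlt)
      have : n + 1 < Nat.find h := by omega
      by_contra hnot
      exact (Nat.find_min h this) hnot
    · by_contra hnot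
      exact h ⟨n+1, hnot⟩
  have dval : ∀ x y, d x y = 0 ∨ ∃ m, d x y = (2⁻¹ : ℝ≥0) ^ m := by
    intro x y
    simp only [hddef]
    split_ifs with h
    · exact Or.inr ⟨Nat.find h - 1, rfl⟩
    · exact Or.inl rfl
  have hd4 : ∀ x₁ x₂ x₃ x₄ : G,
      d x₁ x₄ ≤ 2 * max (d x₁ x₂) (max (d x₂ x₃) (d x₃ x₄)) := by
    intro x₁ x₂ x₃ x₄
    set M := max (d x₁ x₂) (max (d x₂ x₃) (d x₃ x₄)) with hMdef
    have h12 : d x₁ x₂ ≤ M := le_max_left _ _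
    have h23 : d x₂ x₃ ≤ M := le_trans (le_max_left _ _) (le_max_right _ _)
    have h34 : d x₃ x₄ ≤ M := le_trans (le_max_right _ _) (le_max_right _ _)
    by_cases hM : M = 0
    · -- all distances are 0
      have hz : ∀ n, x₄ - x₁ ∈ W n := by
        intro n
        have z12 : d x₁ x₂ = 0 := le_antisymm (hM ▸ h12) (zero_le)
        have z23 : d x₂ x₃ = 0 := le_antisymm (hM ▸ h23) (zero_le)
        have z34 : d x₃ x₄ = 0 := le_antisymm (hM ▸ h34) (zero_le)
        have e12 : x₂ - x₁ ∈ W (n+1) := key_b n _ _ (by rw [z12]; exact zero_le)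
        have e23 : x₃ - x₂ ∈ W (n+1) := key_b n _ _ (by rw [z23]; exact zero_le)
        have e34 : x₄ - x₃ ∈ W (n+1) := key_b n _ _ (by rw [z34]; exact zero_le)
        have : (x₄ - x₃) + (x₃ - x₂) + (x₂ - x₁) ∈ W (n+1) + W (n+1) + W (n+1) :=
          Set.add_mem_add (Set.add_mem_add e34 e23) e12
        have h' := hWtriple n this
        have heq : (x₄ - x₃) + (x₃ - x₂) + (x₂ - x₁) = x₄ - x₁ := by abel
        rwa [heq] at h'
      have hno : ¬ ∃ n, x₄ - x₁ ∉ W n := by rintro ⟨n, hn⟩; exact hn (hz n)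
      have hzero : d x₁ x₄ = 0 := by
        simp only [hddef]
        rw [dif_neg hno]
      rw [hzero]
      exact zero_le
    · -- M is a power of 2⁻¹
      have hMval : ∃ m, M = (2⁻¹ : ℝ≥0) ^ m := by
        have hc1 := max_choice (d x₁ x₂) (max (d x₂ x₃) (d x₃ x₄))
        have hc2 := max_choice (d x₂ x₃) (d x₃ x₄)
        rcases hc1 with h1 | h1
        · rcases dval x₁ x₂ with h | h
          · exact absurd (h1.trans h) hM
          · obtain ⟨m, hm⟩ := h
            exact ⟨m, h1.trans hm⟩
        · rcases hc2 with h2 | h2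
          · rcases dval x₂ x₃ with h | h
            · exact absurd ((h1.trans h2).trans h) hM
            · obtain ⟨m, hm⟩ := h
              exact ⟨m, (h1.trans h2).trans hm⟩
          · rcases dval x₃ x₄ with h | h
            · exact absurd ((h1.trans h2).trans h) hM
            · obtain ⟨m, hm⟩ := h
              exact ⟨m, (h1.trans h2).trans hm⟩
      obtain ⟨m, hm⟩ := hMval
      cases m with
      | zero =>
        calc d x₁ x₄ ≤ 1 := dle1 _ _
        _ ≤ 2 * 1 := by norm_num
        _ = 2 * M := by rw [hm, pow_zero]
      | succ k =>
        have e12 : x₂ - x₁ ∈ W (k+1) := key_b k _ _ (hm ▸ h12)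
        have e23 : x₃ - x₂ ∈ W (k+1) := key_b k _ _ (hm ▸ h23)
        have e34 : x₄ - x₃ ∈ W (k+1) := key_b k _ _ (hm ▸ h34)
        have hsum : (x₄ - x₃) + (x₃ - x₂) + (x₂ - x₁) ∈ W (k+1) + W (k+1) + W (k+1) :=
          Set.add_mem_add (Set.add_mem_add e34 e23) e12
        have h' := hWtriple k hsum
        have heq : (x₄ - x₃) + (x₃ - x₂) + (x₂ - x₁) = x₄ - x₁ := by abel
        rw [heq] at h'
        calc d x₁ x₄ ≤ (2⁻¹ : ℝ≥0) ^ k := key_a k _ _ h'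
        _ = 2 * (2⁻¹ : ℝ≥0) ^ (k+1) := by
            rw [← NNReal.coe_inj]
            push_cast
            rw [pow_succ]
            ring
        _ = 2 * M := by rw [hm]
  have d0v : d 0 v = 1 := by
    have hex : ∃ n, v - 0 ∉ W n := ⟨1, by simpa using hvW1⟩
    simp only [hddef]
    rw [dif_pos hex]
    have hfind : Nat.find hex = 1 := by
      have h1 : Nat.find hex ≤ 1 := Nat.find_le (by simpa using hvW1)
      have h2 : 0 < Nat.find hex := by
        rw [Nat.find_pos]
        simp [hW0univ]
      omega
    rw [hfind]
    norm_num
  -- the pseudometric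
  set D : G → G → ℝ := fun x y =>
    @dist G (@PseudoMetricSpace.toDist G (PseudoMetricSpace.ofPreNNDist d dself dsymm)) x y
    with hDdef
  have hDle : ∀ x y, D x y ≤ d x y := fun x y => PseudoMetricSpace.dist_ofPreNNDist_le d dself dsymm x y
  have hDge : ∀ x y, (d x y : ℝ) ≤ 2 * D x y := fun x y =>
    PseudoMetricSpace.le_two_mul_dist_ofPreNNDist d dself dsymm hd4 x y
  have hDtri : ∀ x y z, D x z ≤ D x y + D y z := fun x y z =>
    (PseudoMetricSpace.ofPreNNDist d dself dsymm).dist_triangle x y z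
  have hDcomm : ∀ x y, D x y = D y x := fun x y =>
    (PseudoMetricSpace.ofPreNNDist d dself dsymm).dist_comm x y
  have hDself : ∀ x, D x x = 0 := fun x =>
    (PseudoMetricSpace.ofPreNNDist d dself dsymm).dist_self x
  have hDnonneg : ∀ x y, 0 ≤ D x y := by
    intro x y
    have h := hDtri x y x
    rw [hDself x, hDcomm y x] at h
    linarith
  refine ⟨fun w => D 0 w, ?_, hDself 0, ?_, fun w => hDnonneg 0 w⟩
  · -- continuity
    rw [continuous_iff_continuousAt]
    intro w₀
    rw [ContinuousAt, Metric.tendsto_nhds]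
    intro ε hε
    obtain ⟨n, hn⟩ := exists_pow_lt_of_lt_one hε (by norm_num : (1/2 : ℝ) < 1)
    have hopen : IsOpen {w : G | w - w₀ ∈ W n} :=
      (hWopen n).preimage (continuous_id.sub continuous_const)
    have hmem : w₀ ∈ {w : G | w - w₀ ∈ W n} := by
      simp only [Set.mem_setOf_eq, sub_self]
      exact hWmem n
    filter_upwards [hopen.mem_nhds hmem] with w hw
    have h1 : D w₀ w ≤ ((2⁻¹ : ℝ≥0) ^ n : ℝ≥0) := by
      refine le_trans (hDle w₀ w) ?_
      exact_mod_cast key_a n w₀ w hw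
    have hcast : (((2⁻¹ : ℝ≥0) ^ n : ℝ≥0) : ℝ) = (1/2 : ℝ) ^ n := by
      push_cast
      norm_num
    rw [Real.dist_eq]
    have habs : |D 0 w - D 0 w₀| ≤ D w₀ w := by
      rw [abs_sub_le_iff]
      constructor
      · have := hDtri 0 w₀ w
        linarith
      · have := hDtri 0 w w₀
        have hc := hDcomm w w₀
        linarith
    calc |D 0 w - D 0 w₀| ≤ D w₀ w := habs
    _ ≤ ((2⁻¹ : ℝ≥0) ^ n : ℝ≥0) := h1
    _ = (1/2 : ℝ) ^ n := hcast
    _ < ε := hn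
  · -- value at v
    have := hDge 0 v
    rw [d0v] at this
    simp only [NNReal.coe_one] at this
    linarith

lemma image_zeroSet_mono {X Y E F : Type*}
    [TopologicalSpace X] [TopologicalSpace Y] [T2Space Y] [CompletelyRegularSpace Y]
    [AddCommGroup E] [Module ℝ E]
    [AddCommGroup F] [Module ℝ F] [TopologicalSpace F] [T2Space F] [Nontrivial F]
    {AXE : Submodule ℝ (X → E)} {AYF : Submodule ℝ (Y → F)}
    (hAYF : AlmostNormallyMultiplicative Y F AYF)
    (T : AXE →ₗ[ℝ] AYF) (hTsurj : Function.Surjective T)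
    (hT : PreservesCommonZeros (T : AXE → AYF))
    (f f'' : AXE) (h : zeroSet (f : X → E) ⊆ zeroSet (f'' : X → E)) :
    zeroSet ((T f : Y → F)) ⊆ zeroSet ((T f'' : Y → F)) := by
  intro y₀ hy₀
  by_contra hne
  obtain ⟨hcont, hconst, AY, hAYnorm, hAYmult⟩ := hAYF
  have hKcl : IsClosed (zeroSet ((T f'' : Y → F))) :=
    isClosed_eq (hcont _ (T f'').2) continuous_const
  have hdisj : Disjoint (closure (stoneCechUnit '' ({y₀} : Set Y)))
      (closure (stoneCechUnit '' zeroSet ((T f'' : Y → F)))) := by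
    rw [Set.image_singleton, closure_singleton, Set.disjoint_singleton_left]
    exact stoneCechUnit_not_mem_closure' hKcl hne
  obtain ⟨ψ, hψmem, hψ0, hψ1⟩ := hAYnorm.2 _ _ hdisj
  obtain ⟨v, hv⟩ := exists_ne (0 : F)
  have hmem : (fun y => ψ y • v) ∈ AYF := hAYmult ψ hψmem _ (hconst v)
  obtain ⟨e, he⟩ := hTsurj ⟨fun y => ψ y • v, hmem⟩
  have hTe : ((T e : Y → F)) = fun y => ψ y • v := by rw [he]
  have hempty : ¬ (⋂ i, zeroSet ((T (![e, f''] i) : Y → F))).Nonempty := by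
    rintro ⟨y, hy⟩
    have h0 : ((T (![e, f''] 0) : Y → F)) y = 0 := mem_iInter.mp hy 0
    have h1 : ((T (![e, f''] 1) : Y → F)) y = 0 := mem_iInter.mp hy 1
    simp only [Matrix.cons_val_zero, Matrix.cons_val_one, Matrix.head_cons] at h0 h1
    rw [hTe] at h0
    have h0' : ψ y • v = 0 := h0
    rw [hψ1 y h1, one_smul] at h0'
    exact hv h0'
  have hXempty : ¬ (⋂ i, zeroSet ((![e, f''] i : X → E))).Nonempty :=
    fun hne' => hempty ((hT 1 ![e, f'']).mp hne')
  have hXne : (⋂ i, zeroSet ((![e, f] i : X → E))).Nonempty := by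
    apply (hT 1 ![e, f]).mpr
    refine ⟨y₀, mem_iInter.mpr fun i => ?_⟩
    fin_cases i
    · simp only [Matrix.cons_val_zero]
      show ((T e : Y → F)) y₀ = 0
      rw [hTe]
      show ψ y₀ • v = 0
      rw [hψ0 y₀ rfl, zero_smul]
    · exact hy₀
  obtain ⟨x, hx⟩ := hXne
  have hxe : x ∈ zeroSet ((e : X → E)) := mem_iInter.mp hx 0
  have hxf : x ∈ zeroSet ((f : X → E)) := mem_iInter.mp hx 1
  exact hXempty ⟨x, mem_iInter.mpr fun i => by
    fin_cases i
    · exact hxe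
    · exact h hxf⟩

theorem Zx_disjoint {X Y E F : Type*}
    [TopologicalSpace X] [T2Space X] [CompletelyRegularSpace X]
    [TopologicalSpace Y] [T2Space Y] [CompletelyRegularSpace Y]
    [AddCommGroup E] [Module ℝ E] [TopologicalSpace E] [IsTopologicalAddGroup E]
    [ContinuousSMul ℝ E] [T2Space E] [Nontrivial E]
    [AddCommGroup F] [Module ℝ F] [TopologicalSpace F] [IsTopologicalAddGroup F]
    [ContinuousSMul ℝ F] [T2Space F] [Nontrivial F]
    {AXE : Submodule ℝ (X → E)} {AYF : Submodule ℝ (Y → F)}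
    (hAXE : AlmostNormallyMultiplicative X E AXE)
    (hAYF : AlmostNormallyMultiplicative Y F AYF)
    (T : AXE →ₗ[ℝ] AYF) (hTsurj : Function.Surjective T)
    (hT : PreservesCommonZeros (T : AXE → AYF))
    (x₁ x₂ : X) (hx : x₁ ≠ x₂) :
    Zx (T : AXE → AYF) x₁ ∩ Zx (T : AXE → AYF) x₂ = ∅ := by
  obtain ⟨hXcont, hXconst, AX, hAXnorm, hAXmult⟩ := hAXE
  obtain ⟨hYcont, hYconst, AY, hAYnorm, hAYmult⟩ := id hAYF
  -- the constant function 1 belongs to AX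
  obtain ⟨one, honemem, -, hone⟩ := hAXnorm.2 ∅ univ (by simp)
  have hone' : one = fun _ => (1 : ℝ) := funext fun x => hone x (mem_univ x)
  have h1mem : (fun _ : X => (1 : ℝ)) ∈ AX := hone' ▸ honemem
  -- a function φ in AX with φ x₁ = 0 and φ x₂ = 1
  have hd : Disjoint (closure (stoneCechUnit '' ({x₁} : Set X)))
      (closure (stoneCechUnit '' ({x₂} : Set X))) := by
    rw [Set.image_singleton, Set.image_singleton, closure_singleton, closure_singleton,
      Set.disjoint_singleton]
    intro hEq
    have hnot := stoneCechUnit_not_mem_closure' (K := ({x₂} : Set X)) isClosed_singleton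
      (by simpa using hx)
    apply hnot
    rw [hEq]
    exact subset_closure ⟨x₂, rfl, rfl⟩
  obtain ⟨φ, hφmem, hφ0, hφ1⟩ := hAXnorm.2 _ _ hd
  have hφx₁ : φ x₁ = 0 := hφ0 x₁ rfl
  have hφx₂ : φ x₂ = 1 := hφ1 x₂ rfl
  obtain ⟨u, hu⟩ := exists_ne (0 : E)
  obtain ⟨v, hv⟩ := exists_ne (0 : F)
  set φ' : X → ℝ := (fun _ => (1 : ℝ)) - φ with hφ'def
  have hφ'mem : φ' ∈ AX := Submodule.sub_mem _ h1mem hφmem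
  have hφ'app : ∀ x, φ' x = 1 - φ x := fun x => rfl
  set f₁ : AXE := ⟨fun x => φ x • u, hAXmult φ hφmem _ (hXconst u)⟩ with hf₁def
  set f₂ : AXE := ⟨fun x => φ' x • u, hAXmult φ' hφ'mem _ (hXconst u)⟩ with hf₂def
  obtain ⟨c, hc⟩ := hTsurj ⟨fun _ => v, hYconst v⟩
  set fa : AXE := ⟨fun x => φ x • (c : X → E) x, hAXmult φ hφmem _ c.2⟩ with hfadef
  set fb : AXE := ⟨fun x => φ' x • (c : X → E) x, hAXmult φ' hφ'mem _ c.2⟩ with hfbdef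
  have hsum : fa + fb = c := by
    apply Subtype.ext
    funext x
    show φ x • (c : X → E) x + φ' x • (c : X → E) x = (c : X → E) x
    rw [hφ'app, sub_smul, one_smul]
    abel
  have hab : ∀ y, ((T fa : Y → F)) y + ((T fb : Y → F)) y = v := by
    intro y
    have h1 : T fa + T fb = T c := by rw [← map_add, hsum]
    have h2 : ((T fa + T fb : AYF) : Y → F) y = ((T fa : Y → F)) y + ((T fb : Y → F)) y := rfl
    rw [← h2, h1, hc]
  have hZ1 : zeroSet ((T f₁ : Y → F)) ⊆ zeroSet ((T fa : Y → F)) := by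
    apply image_zeroSet_mono hAYF T hTsurj hT
    intro x hxm
    have hx' : φ x • u = 0 := hxm
    have hφ0x : φ x = 0 := by
      by_contra hφx
      have h := congrArg (fun w => (φ x)⁻¹ • w) hx'
      simp only [smul_smul, inv_mul_cancel₀ hφx, one_smul, smul_zero] at h
      exact hu h
    show φ x • (c : X → E) x = 0
    rw [hφ0x, zero_smul]
  have hZ2 : zeroSet ((T f₂ : Y → F)) ⊆ zeroSet ((T fb : Y → F)) := by
    apply image_zeroSet_mono hAYF T hTsurj hT
    intro x hxm
    have hx' : φ' x • u = 0 := hxm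
    have hφ0x : φ' x = 0 := by
      by_contra hφx
      have h := congrArg (fun w => (φ' x)⁻¹ • w) hx'
      simp only [smul_smul, inv_mul_cancel₀ hφx, one_smul, smul_zero] at h
      exact hu h
    show φ' x • (c : X → E) x = 0
    rw [hφ0x, zero_smul]
  obtain ⟨ξ, hξc, hξ0, hξv, hξnn⟩ := exists_sep_fun v hv
  have hη : Continuous (fun y => Set.projIcc (0:ℝ) 1 zero_le_one (ξ (((T fa : Y → F)) y))) :=
    continuous_projIcc.comp (hξc.comp (hYcont _ (T fa).2))
  rw [eq_empty_iff_forall_notMem]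
  rintro p ⟨hp₁, hp₂⟩
  simp only [Zx, mem_iInter] at hp₁ hp₂
  have hp₁' : p ∈ closure (stoneCechUnit '' zeroSet ((T f₁ : Y → F))) := by
    apply hp₁ f₁
    show φ x₁ • u = 0
    rw [hφx₁, zero_smul]
  have hp₂' : p ∈ closure (stoneCechUnit '' zeroSet ((T f₂ : Y → F))) := by
    apply hp₂ f₂
    show φ' x₂ • u = 0
    rw [hφ'app, hφx₂, sub_self, zero_smul]
  have e1 : stoneCechExtend hη p = Set.projIcc (0:ℝ) 1 zero_le_one (ξ 0) := by
    apply stoneCechExtend_eq_on_closure hη _ hp₁'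
    intro y hy
    show Set.projIcc (0:ℝ) 1 zero_le_one (ξ (((T fa : Y → F)) y)) = _
    rw [hZ1 hy]
  have e2 : stoneCechExtend hη p = Set.projIcc (0:ℝ) 1 zero_le_one (ξ v) := by
    apply stoneCechExtend_eq_on_closure hη _ hp₂'
    intro y hy
    show Set.projIcc (0:ℝ) 1 zero_le_one (ξ (((T fa : Y → F)) y)) = _
    have hb0 : ((T fb : Y → F)) y = 0 := hZ2 hy
    have h := hab y
    rw [hb0, add_zero] at h
    rw [h]
  rw [e1] at e2
  have ecoe : (Set.projIcc (0:ℝ) 1 zero_le_one (ξ 0) : ℝ)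
      = (Set.projIcc (0:ℝ) 1 zero_le_one (ξ v) : ℝ) := by rw [e2]
  have c1 : (Set.projIcc (0:ℝ) 1 zero_le_one (ξ 0) : ℝ) = 0 := by
    rw [hξ0]
    simp [Set.projIcc]
  have c2 : (1/2 : ℝ) ≤ (Set.projIcc (0:ℝ) 1 zero_le_one (ξ v) : ℝ) := by
    have : (Set.projIcc (0:ℝ) 1 zero_le_one (ξ v) : ℝ) = max 0 (min 1 (ξ v)) := rfl
    rw [this]
    refine le_max_of_le_right (le_min (by norm_num) hξv)
  rw [c1] at ecoe
  rw [← ecoe] at c2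
  linarith
end

section
/- Let T : A(X,E) → A(Y,F) be a surjective linear map that preserves common zeros, where A(X,E) and A(Y,F) are almost normally multiplicative vector subspaces of C(X,E) and C(Y,F). Then for every x ∈ X the set Z_x is a singleton. -/
open Set Filter Topology

/-- Helper: a point of `βX` avoiding the closure of the image of a closed set not containing
a given point, via complete regularity and the Stone–Čech extension. -/
lemma stoneCechUnit_not_mem_closure_image {X : Type*} [TopologicalSpace X] [T2Space X]
    [CompletelyRegularSpace X] {x : X} {K : Set X} (hK : IsClosed K) (hx : x ∉ K) :
    stoneCechUnit x ∉ closure (stoneCechUnit '' K) := by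
  obtain ⟨h, hc, hx0, hK1⟩ := CompletelyRegularSpace.completely_regular x K hK hx
  intro hmem
  have hsub : closure (stoneCechUnit '' K) ⊆ (stoneCechExtend hc) ⁻¹' {1} := by
    apply closure_minimal
    · rintro _ ⟨z, hz, rfl⟩
      have : stoneCechExtend hc (stoneCechUnit z) = h z := congrFun (stoneCechExtend_extends hc) z
      simp only [mem_preimage, mem_singleton_iff, this]
      exact hK1 hz
    · exact (isClosed_singleton).preimage (continuous_stoneCechExtend hc)
  have h1 : stoneCechExtend hc (stoneCechUnit x) = 1 := hsub hmem
  have h0 : stoneCechExtend hc (stoneCechUnit x) = h x := congrFun (stoneCechExtend_extends hc) x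
  rw [h0, hx0] at h1
  exact (by norm_num : (0 : unitInterval) ≠ 1) h1

theorem Zx_singleton {X Y E F : Type*}
    [TopologicalSpace X] [T2Space X] [CompletelyRegularSpace X]
    [TopologicalSpace Y] [T2Space Y] [CompletelyRegularSpace Y]
    [AddCommGroup E] [Module ℝ E] [TopologicalSpace E] [IsTopologicalAddGroup E]
    [ContinuousSMul ℝ E] [T2Space E] [Nontrivial E]
    [AddCommGroup F] [Module ℝ F] [TopologicalSpace F] [IsTopologicalAddGroup F]
    [ContinuousSMul ℝ F] [T2Space F] [Nontrivial F]
    {AXE : Submodule ℝ (X → E)} {AYF : Submodule ℝ (Y → F)}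
    (hAXE : AlmostNormallyMultiplicative X E AXE)
    (hAYF : AlmostNormallyMultiplicative Y F AYF)
    (T : AXE →ₗ[ℝ] AYF) (hTsurj : Function.Surjective T)
    (hT : PreservesCommonZeros (T : AXE → AYF))
    (x : X) : ∃ y : StoneCech Y, Zx (T : AXE → AYF) x = {y} := by
  classical
  obtain ⟨hAXEc, hAXEconst, AX, hAX, hAXmul⟩ := hAXE
  obtain ⟨hAYFc, hAYFconst, AY, hAY, hAYmul⟩ := hAYF
  obtain ⟨u, hu⟩ := exists_ne (0 : F)
  -- Y is nonempty
  have hYne : Nonempty Y := by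
    have h0 : (⋂ i : Fin 1, zeroSet (((fun _ : Fin 1 => (0 : AXE)) i : X → E))).Nonempty := by
      refine ⟨x, mem_iInter.mpr fun i => ?_⟩
      simp [zeroSet]
    obtain ⟨y, -⟩ := (hT 0 (fun _ => 0)).mp h0
    exact ⟨y⟩
  -- membership criterion for Zx
  have hmemZx : ∀ {y : StoneCech Y}, y ∈ Zx (T : AXE → AYF) x → ∀ (f : AXE),
      (f : X → E) x = 0 → y ∈ closure (stoneCechUnit '' zeroSet ((T f : Y → F))) := by
    intro y hy f hf
    exact mem_iInter₂.mp hy f hf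
  -- the function f₀ with T f₀ = constant u; its zero set is empty
  set gu : AYF := ⟨fun _ => u, hAYFconst u⟩ with hgu_def
  obtain ⟨f₀, hf₀⟩ := hTsurj gu
  have hguz : zeroSet ((gu : Y → F)) = ∅ := by
    ext z; simp [zeroSet, hgu_def, hu]
  have hf₀ne : ∀ z, (f₀ : X → E) z ≠ 0 := by
    intro z hz
    have h1 : (⋂ i : Fin 1, zeroSet (((fun _ : Fin 1 => f₀) i : X → E))).Nonempty :=
      ⟨z, mem_iInter.mpr fun i => hz⟩
    obtain ⟨y, hy⟩ := (hT 0 (fun _ => f₀)).mp h1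
    have := mem_iInter.mp hy 0
    rw [hf₀] at this
    rw [hguz] at this
    exact this
  -- Zx is nonempty, by compactness of βY
  have hZxne : (Zx (T : AXE → AYF) x).Nonempty := by
    by_contra hemp
    rw [Set.not_nonempty_iff_eq_empty] at hemp
    set I := {f : AXE // (f : X → E) x = 0} with hI
    set S : I → Set (StoneCech Y) :=
      fun f => closure (stoneCechUnit '' zeroSet ((T f.1 : Y → F))) with hS
    have hZeq : (⋂ i, S i) = Zx (T : AXE → AYF) x := by
      apply subset_antisymm
      · intro y hy
        exact mem_iInter₂.mpr fun f hf => mem_iInter.mp hy ⟨f, hf⟩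
      · intro y hy
        exact mem_iInter.mpr fun i => mem_iInter₂.mp hy i.1 i.2
    obtain ⟨t, ht⟩ := isCompact_univ.elim_finite_subfamily_closed S
      (fun i => isClosed_closure) (by rw [univ_inter, hZeq, hemp])
    rw [univ_inter] at ht
    rcases t.eq_empty_or_nonempty with rfl | htne
    · simp only [Finset.notMem_empty, iInter_of_empty, iInter_univ] at ht
      obtain ⟨y⟩ := hYne
      exact absurd ht (Set.Nonempty.ne_empty (⟨stoneCechUnit y, trivial⟩ : (univ : Set (StoneCech Y)).Nonempty))
    · obtain ⟨k, hk⟩ := Nat.exists_eq_succ_of_ne_zero (Finset.card_ne_zero_of_mem htne.choose_spec)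
      set idx : Fin (k + 1) → I := fun i => (t.equivFin.symm (Fin.cast hk.symm i)).1 with hidx
      set Fam : Fin (k + 1) → AXE := fun i => (idx i).1 with hFam
      have hxmem : (⋂ i, zeroSet ((Fam i : X → E))).Nonempty :=
        ⟨x, mem_iInter.mpr fun i => (idx i).2⟩
      obtain ⟨y, hy⟩ := (hT k Fam).mp hxmem
      have : stoneCechUnit y ∈ ⋂ i ∈ t, S i := by
        refine mem_iInter₂.mpr fun i hi => ?_
        have heq : idx (Fin.cast hk (t.equivFin ⟨i, hi⟩)) = i := by
          simp only [hidx, Fin.cast_cast, Fin.cast_eq_self, Equiv.symm_apply_apply]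
        have hyz := mem_iInter.mp hy (Fin.cast hk (t.equivFin ⟨i, hi⟩))
        refine subset_closure (mem_image_of_mem _ ?_)
        simpa [hFam, heq] using hyz
      rw [ht] at this
      exact this
  -- Uniqueness
  obtain ⟨y₀, hy₀⟩ := hZxne
  refine ⟨y₀, subset_antisymm ?_ (singleton_subset_iff.mpr hy₀)⟩
  intro y₁ hy₁
  rw [mem_singleton_iff]
  by_contra hne
  -- separate y₁ and y₀ by open sets with disjoint closures
  obtain ⟨U₁, U₂, hU₁o, hU₂o, hy₁U, hy₀U, hUd⟩ := t2_separation hne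
  obtain ⟨C₁, hC₁n, hC₁c, hC₁s⟩ := exists_mem_nhds_isClosed_subset (hU₁o.mem_nhds hy₁U)
  obtain ⟨C₂, hC₂n, hC₂c, hC₂s⟩ := exists_mem_nhds_isClosed_subset (hU₂o.mem_nhds hy₀U)
  set V₁ : Set (StoneCech Y) := interior C₁ with hV₁
  set V₂ : Set (StoneCech Y) := interior C₂ with hV₂
  have hy₁V : y₁ ∈ V₁ := mem_interior_iff_mem_nhds.mpr hC₁n
  have hy₀V : y₀ ∈ V₂ := mem_interior_iff_mem_nhds.mpr hC₂n
  have hclV₁ : closure V₁ ⊆ U₁ := (closure_minimal interior_subset hC₁c).trans hC₁s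
  have hclV₂ : closure V₂ ⊆ U₂ := (closure_minimal interior_subset hC₂c).trans hC₂s
  set Q₁ : Set Y := stoneCechUnit ⁻¹' V₁ with hQ₁
  set Q₂ : Set Y := stoneCechUnit ⁻¹' V₂ with hQ₂
  -- almost normality on Y gives φ : φ = 0 on Q₁, φ = 1 on Q₂
  obtain ⟨φ, hφAY, hφ0, hφ1⟩ := hAY.2 Q₁ Q₂ (by
    refine (hUd.mono ?_ ?_)
    · exact (closure_mono (image_preimage_subset _ _)).trans hclV₁
    · exact (closure_mono (image_preimage_subset _ _)).trans hclV₂)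
  -- g₂ = (1 - φ) • u ∈ AYF
  set gφ : AYF := ⟨fun y => φ y • u, hAYmul φ hφAY _ (hAYFconst u)⟩ with hgφ_def
  set g₂ : AYF := gu - gφ with hg₂_def
  have hg₂app : ∀ y, (g₂ : Y → F) y = u - φ y • u := fun y => rfl
  obtain ⟨f₂, hf₂⟩ := hTsurj g₂
  -- f₂ x ≠ 0 (else y₁ would lie in V₁ᶜ)
  have hf₂x : (f₂ : X → E) x ≠ 0 := by
    intro h0
    have hmem := hmemZx hy₁ f₂ h0
    have hsub : stoneCechUnit '' zeroSet ((T f₂ : Y → F)) ⊆ V₁ᶜ := by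
      rintro _ ⟨z, hz, rfl⟩ hzV
      have hz0 : φ z = 0 := hφ0 z hzV
      rw [hf₂] at hz
      have : (g₂ : Y → F) z = 0 := hz
      rw [hg₂app, hz0, zero_smul, sub_zero] at this
      exact hu this
    have := closure_minimal hsub isOpen_interior.isClosed_compl
    exact this hmem hy₁V
  -- the closed set where f₂ vanishes
  set K : Set X := zeroSet ((f₂ : X → E)) with hK
  have hKclosed : IsClosed K := by
    have : K = (f₂ : X → E) ⁻¹' {0} := by ext z; simp [hK, zeroSet]
    rw [this]
    exact isClosed_singleton.preimage (hAXEc _ f₂.2)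
  have hxK : x ∉ K := hf₂x
  -- almost normality on X gives ψ : ψ x = 0, ψ = 1 on K
  obtain ⟨ψ, hψAX, hψ0, hψ1⟩ := hAX.2 {x} K (by
    rw [image_singleton, closure_singleton, Set.disjoint_singleton_left]
    exact stoneCechUnit_not_mem_closure_image hKclosed hxK)
  -- p = ψ • f₀ vanishes at x, and its zero set misses K
  set p : AXE := ⟨fun z => ψ z • (f₀ : X → E) z, hAXmul ψ hψAX _ f₀.2⟩ with hp_def
  have hpx : (p : X → E) x = 0 := by
    show ψ x • (f₀ : X → E) x = 0
    rw [hψ0 x rfl, zero_smul]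
  set Fam2 : Fin 2 → AXE := ![p, f₂] with hFam2
  -- the zero sets of p and f₂ are disjoint
  have hdisj : ¬ (⋂ i, zeroSet ((Fam2 i : X → E))).Nonempty := by
    rintro hnon
    obtain ⟨z, hz⟩ := hnon
    have hz0 : z ∈ zeroSet ((p : X → E)) := by
      have := mem_iInter.mp hz 0
      simpa [hFam2] using this
    have hz1 : z ∈ zeroSet ((f₂ : X → E)) := by
      have := mem_iInter.mp hz 1
      simpa [hFam2] using this
    have hψz : ψ z = 0 := by
      have : ψ z • (f₀ : X → E) z = 0 := hz0
      rcases smul_eq_zero.mp this with h | h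
      · exact h
      · exact absurd h (hf₀ne z)
    have : ψ z = 1 := hψ1 z hz1
    rw [hψz] at this
    exact zero_ne_one this
  have hTdisj : ¬ (⋂ i, zeroSet ((T (Fam2 i) : Y → F))).Nonempty := fun h => hdisj ((hT 1 Fam2).mpr h)
  -- hence the zero set of T p misses Q₂, so its closure misses y₀ — contradiction
  have hmem := hmemZx hy₀ p hpx
  have hsub : stoneCechUnit '' zeroSet ((T p : Y → F)) ⊆ V₂ᶜ := by
    rintro _ ⟨z, hz, rfl⟩ hzV
    have hz1 : φ z = 1 := hφ1 z hzV
    have hzf₂ : z ∈ zeroSet ((T f₂ : Y → F)) := by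
      rw [hf₂]
      show (g₂ : Y → F) z = 0
      rw [hg₂app, hz1, one_smul, sub_self]
    exact hTdisj ⟨z, mem_iInter.mpr fun i => by
      fin_cases i
      · simpa [hFam2] using hz
      · simpa [hFam2] using hzf₂⟩
  have := closure_minimal hsub isOpen_interior.isClosed_compl
  exact this hmem hy₀V
end

section
/- Let T : A(X,E) → A(Y,F) be a surjective linear map that preserves common zeros, where A(X,E) and A(Y,F) are almost normally multiplicative vector subspaces of C(X,E) and C(Y,F). Then there exist a dense subset Z of βY and a homeomorphism h : Z → X such that for every y ∈ Z and every f ∈ A(X,E), setting u = f(h(y)), the point y lies in the closure in βY of ι_Y({y' ∈ Y : (Tf)(y') = (T𝐮)(y')}); in particular (Tf)^β(y) = (T𝐮)^β(y). -/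
open Set Filter Topology

section AuxLemmas

variable {α : Type*} [TopologicalSpace α]

lemma zeroSet_isClosed {β : Type*} [TopologicalSpace β] [T2Space β] [Zero β]
    {g : α → β} (hg : Continuous g) : IsClosed (zeroSet g) := by
  have : zeroSet g = g ⁻¹' {0} := rfl
  rw [this]
  exact IsClosed.preimage hg isClosed_singleton

/-- Two sets separated by a continuous real function have disjoint closures in the
Stone-Čech compactification. -/
lemma disjoint_closure_unit_of_sep {τ : α → ℝ} (hτ : Continuous τ) {t s : ℝ} (hts : t < s) :
    Disjoint (closure (stoneCechUnit '' {x | τ x ≤ t}))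
      (closure (stoneCechUnit '' {x | s ≤ τ x})) := by
  have hνc : Continuous (fun x => Set.projIcc (0:ℝ) 1 zero_le_one ((τ x - t) / (s - t))) :=
    continuous_projIcc.comp ((hτ.sub continuous_const).div_const _)
  have h0 : closure (stoneCechUnit '' {x | τ x ≤ t}) ⊆ stoneCechExtend hνc ⁻¹' {0} := by
    apply closure_minimal _ (IsClosed.preimage (continuous_stoneCechExtend hνc) isClosed_singleton)
    rintro _ ⟨x, hx, rfl⟩
    have h := congrFun (stoneCechExtend_extends hνc) x
    simp only [Function.comp_apply] at h
    simp only [Set.mem_preimage, Set.mem_singleton_iff, h]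
    apply Set.projIcc_of_le_left
    · simp only [Set.mem_setOf_eq] at hx
      exact div_nonpos_of_nonpos_of_nonneg (by linarith) (by linarith)
  have h1 : closure (stoneCechUnit '' {x | s ≤ τ x}) ⊆ stoneCechExtend hνc ⁻¹' {1} := by
    apply closure_minimal _ (IsClosed.preimage (continuous_stoneCechExtend hνc) isClosed_singleton)
    rintro _ ⟨x, hx, rfl⟩
    have h := congrFun (stoneCechExtend_extends hνc) x
    simp only [Function.comp_apply] at h
    simp only [Set.mem_preimage, Set.mem_singleton_iff, h]
    apply Set.projIcc_of_right_le
    rw [le_div_iff₀ (by linarith)]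
    simp only [Set.mem_setOf_eq] at hx
    linarith
  exact Disjoint.mono h0 h1 (by
    apply Set.disjoint_left.mpr
    rintro p hp0 hp1
    simp only [Set.mem_preimage, Set.mem_singleton_iff] at hp0 hp1
    rw [hp0] at hp1
    exact zero_ne_one (congrArg Subtype.val hp1))

/-- Version for a function already defined on the compactification. -/
lemma disjoint_closure_unit_of_sepβ {Ψ : StoneCech α → ℝ} (hΨ : Continuous Ψ) {t s : ℝ}
    (hts : t < s) :
    Disjoint (closure (stoneCechUnit '' {x | Ψ (stoneCechUnit x) ≤ t}))
      (closure (stoneCechUnit '' {x | s ≤ Ψ (stoneCechUnit x)})) := by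
  have h0 : closure (stoneCechUnit '' {x | Ψ (stoneCechUnit x) ≤ t}) ⊆ Ψ ⁻¹' (Set.Iic t) :=
    closure_minimal (by rintro _ ⟨x, hx, rfl⟩; exact hx)
      (IsClosed.preimage hΨ isClosed_Iic)
  have h1 : closure (stoneCechUnit '' {x | s ≤ Ψ (stoneCechUnit x)}) ⊆ Ψ ⁻¹' (Set.Ici s) :=
    closure_minimal (by rintro _ ⟨x, hx, rfl⟩; exact hx)
      (IsClosed.preimage hΨ isClosed_Ici)
  exact Disjoint.mono h0 h1 (Set.disjoint_left.mpr (by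
    intro p hp0 hp1
    simp only [Set.mem_preimage, Set.mem_Iic, Set.mem_Ici] at hp0 hp1
    linarith))

/-- Given almost normality, produce a "cut" function between two levels of a continuous
real function. -/
lemma exists_cut {AX : Submodule ℝ (α → ℝ)} (hAX : AlmostNormal α AX)
    {τ : α → ℝ} (hτ : Continuous τ) {t s : ℝ} (hts : t < s) :
    ∃ φ ∈ AX, (∀ x, τ x ≤ t → φ x = 0) ∧ (∀ x, s ≤ τ x → φ x = 1) := by
  obtain ⟨φ, hφ, h0, h1⟩ := hAX.2 {x | τ x ≤ t} {x | s ≤ τ x}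
    (disjoint_closure_unit_of_sep hτ hts)
  exact ⟨φ, hφ, fun x hx => h0 x hx, fun x hx => h1 x hx⟩

lemma exists_cutβ {AX : Submodule ℝ (α → ℝ)} (hAX : AlmostNormal α AX)
    {Ψ : StoneCech α → ℝ} (hΨ : Continuous Ψ) {t s : ℝ} (hts : t < s) :
    ∃ φ ∈ AX, (∀ x, Ψ (stoneCechUnit x) ≤ t → φ x = 0) ∧
      (∀ x, s ≤ Ψ (stoneCechUnit x) → φ x = 1) := by
  obtain ⟨φ, hφ, h0, h1⟩ := hAX.2 {x | Ψ (stoneCechUnit x) ≤ t} {x | s ≤ Ψ (stoneCechUnit x)}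
    (disjoint_closure_unit_of_sepβ hΨ hts)
  exact ⟨φ, hφ, fun x hx => h0 x hx, fun x hx => h1 x hx⟩

end AuxLemmas
section Transfer
set_option linter.unusedSectionVars false

variable {X Y E F : Type*}
    [TopologicalSpace X] [T2Space X] [CompletelyRegularSpace X]
    [TopologicalSpace Y] [T2Space Y] [CompletelyRegularSpace Y]
    [AddCommGroup E] [Module ℝ E] [TopologicalSpace E] [IsTopologicalAddGroup E]
    [ContinuousSMul ℝ E] [T2Space E] [Nontrivial E]
    [AddCommGroup F] [Module ℝ F] [TopologicalSpace F] [IsTopologicalAddGroup F]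
    [ContinuousSMul ℝ F] [T2Space F] [Nontrivial F]
    {AXE : Submodule ℝ (X → E)} {AYF : Submodule ℝ (Y → F)}
    {T : AXE →ₗ[ℝ] AYF}

lemma pcz_single (hT : PreservesCommonZeros (T : AXE → AYF)) (f : AXE) :
    (zeroSet (f : X → E)).Nonempty ↔ (zeroSet ((T f : AYF) : Y → F)).Nonempty := by
  have := hT 0 (fun _ => f)
  simpa only [Set.iInter_const] using this

lemma pcz_pair (hT : PreservesCommonZeros (T : AXE → AYF)) (f g : AXE) :
    (zeroSet (f : X → E) ∩ zeroSet (g : X → E)).Nonempty ↔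
      (zeroSet ((T f : AYF) : Y → F) ∩ zeroSet ((T g : AYF) : Y → F)).Nonempty := by
  have := hT 1 ![f, g]
  have e1 : (⋂ i, zeroSet ((![f, g] i : AXE) : X → E)) =
      zeroSet (f : X → E) ∩ zeroSet (g : X → E) := by
    ext x
    simp [Fin.forall_fin_two]
  have e2 : (⋂ i, zeroSet ((T (![f, g] i) : AYF) : Y → F)) =
      zeroSet ((T f : AYF) : Y → F) ∩ zeroSet ((T g : AYF) : Y → F) := by
    ext y
    simp [Fin.forall_fin_two]
  rw [e1, e2] at this
  exact this

/-- Dual-W lemma: if `T h` does not vanish at `y`, there is `f₀` whose image vanishes at `y`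
but whose zero set is disjoint from that of `h`. -/
lemma exists_avoider (hAXE : AlmostNormallyMultiplicative X E AXE)
    (hAYF : AlmostNormallyMultiplicative Y F AYF)
    {AY : Submodule ℝ (Y → ℝ)} (hAY : AlmostNormal Y AY)
    (hmulY : ∀ ψ ∈ AY, ∀ g ∈ AYF, (fun y => ψ y • g y) ∈ AYF)
    (hTsurj : Function.Surjective T) (hT : PreservesCommonZeros (T : AXE → AYF))
    (h : AXE) {y : Y} (hy : ((T h : AYF) : Y → F) y ≠ 0) :
    ∃ f₀ : AXE, ((T f₀ : AYF) : Y → F) y = 0 ∧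
      zeroSet (f₀ : X → E) ∩ zeroSet (h : X → E) = ∅ := by
  obtain ⟨v₀, hv₀⟩ := exists_ne (0 : F)
  have hclosed : IsClosed (zeroSet ((T h : AYF) : Y → F)) :=
    zeroSet_isClosed (hAYF.1 _ (T h).2)
  obtain ⟨ρ, hρc, hρy, hρ1⟩ := CompletelyRegularSpace.completely_regular y _ hclosed hy
  have hρrc : Continuous (fun y' => (ρ y' : ℝ)) := continuous_subtype_val.comp hρc
  obtain ⟨ψ, hψmem, hψ0, hψ1⟩ := exists_cut hAY hρrc (by norm_num : (1:ℝ)/3 < 2/3)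
  set g₀fun : Y → F := fun y' => ψ y' • v₀ with hg₀fun
  have hg₀mem : g₀fun ∈ AYF := hmulY ψ hψmem _ (hAYF.2.1 v₀)
  obtain ⟨f₀, hf₀⟩ := hTsurj ⟨g₀fun, hg₀mem⟩
  refine ⟨f₀, ?_, ?_⟩
  · rw [hf₀]
    have : ψ y = 0 := hψ0 y (by rw [hρy]; norm_num)
    show ψ y • v₀ = 0
    rw [this, zero_smul]
  · by_contra hne
    rw [← Set.not_nonempty_iff_eq_empty] at hne
    push_neg at hne
    obtain ⟨y', hy'0, hy'h⟩ := (pcz_pair hT f₀ h).1 hne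
    rw [hf₀] at hy'0
    have h1 : ρ y' = 1 := hρ1 hy'h
    have : ψ y' = 1 := hψ1 y' (by rw [h1]; norm_num)
    have : g₀fun y' = v₀ := by rw [hg₀fun]; simp [this]
    exact hv₀ (by rw [← this]; exact hy'0)

/-- Monotonicity of zero sets under `T`. -/
lemma zmono (hAXE : AlmostNormallyMultiplicative X E AXE)
    (hAYF : AlmostNormallyMultiplicative Y F AYF)
    {AY : Submodule ℝ (Y → ℝ)} (hAY : AlmostNormal Y AY)
    (hmulY : ∀ ψ ∈ AY, ∀ g ∈ AYF, (fun y => ψ y • g y) ∈ AYF)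
    (hTsurj : Function.Surjective T) (hT : PreservesCommonZeros (T : AXE → AYF))
    {f h : AXE} (hsub : zeroSet (f : X → E) ⊆ zeroSet (h : X → E)) :
    zeroSet ((T f : AYF) : Y → F) ⊆ zeroSet ((T h : AYF) : Y → F) := by
  intro y hyf
  by_contra hyh
  obtain ⟨f₀, hf₀y, hf₀z⟩ := exists_avoider hAXE hAYF hAY hmulY hTsurj hT h hyh
  have hXempty : zeroSet (f₀ : X → E) ∩ zeroSet (f : X → E) = ∅ := by
    rw [Set.eq_empty_iff_forall_notMem]
    intro x hx
    have : x ∈ zeroSet (f₀ : X → E) ∩ zeroSet (h : X → E) := ⟨hx.1, hsub hx.2⟩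
    rw [hf₀z] at this
    exact this
  have : (zeroSet ((T f₀ : AYF) : Y → F) ∩ zeroSet ((T f : AYF) : Y → F)).Nonempty :=
    ⟨y, hf₀y, hyf⟩
  obtain ⟨x, hx⟩ := (pcz_pair hT f₀ f).2 this
  rw [Set.eq_empty_iff_forall_notMem] at hXempty
  exact hXempty x hx

/-- Covers transfer under `T`. -/
lemma zcover (hAXE : AlmostNormallyMultiplicative X E AXE)
    (hAYF : AlmostNormallyMultiplicative Y F AYF)
    {AY : Submodule ℝ (Y → ℝ)} (hAY : AlmostNormal Y AY)
    (hmulY : ∀ ψ ∈ AY, ∀ g ∈ AYF, (fun y => ψ y • g y) ∈ AYF)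
    (hTsurj : Function.Surjective T) (hT : PreservesCommonZeros (T : AXE → AYF))
    {h h' : AXE} (hcov : zeroSet (h : X → E) ∪ zeroSet (h' : X → E) = Set.univ) :
    zeroSet ((T h : AYF) : Y → F) ∪ zeroSet ((T h' : AYF) : Y → F) = Set.univ := by
  rw [Set.eq_univ_iff_forall]
  intro y
  by_contra hy
  rw [Set.mem_union] at hy
  push_neg at hy
  obtain ⟨hy1, hy2⟩ := hy
  obtain ⟨f₀, hf₀y, hf₀z⟩ := exists_avoider hAXE hAYF hAY hmulY hTsurj hT h hy1
  have hsub : zeroSet (f₀ : X → E) ⊆ zeroSet (h' : X → E) := by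
    intro x hx
    have hcx : x ∈ zeroSet (h : X → E) ∪ zeroSet (h' : X → E) := by rw [hcov]; trivial
    rcases hcx with hcx | hcx
    · exfalso
      have : x ∈ zeroSet (f₀ : X → E) ∩ zeroSet (h : X → E) := ⟨hx, hcx⟩
      rw [hf₀z] at this
      exact this
    · exact hcx
  have := zmono hAXE hAYF hAY hmulY hTsurj hT hsub (f := f₀) hf₀y
  exact hy2 this

end Transfer
section KeyW

set_option linter.unusedSectionVars false

variable {X Y E F : Type*}
    [TopologicalSpace X] [T2Space X] [CompletelyRegularSpace X]
    [TopologicalSpace Y] [T2Space Y] [CompletelyRegularSpace Y]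
    [AddCommGroup E] [Module ℝ E] [TopologicalSpace E] [IsTopologicalAddGroup E]
    [ContinuousSMul ℝ E] [T2Space E] [Nontrivial E]
    [AddCommGroup F] [Module ℝ F] [TopologicalSpace F] [IsTopologicalAddGroup F]
    [ContinuousSMul ℝ F] [T2Space F] [Nontrivial F]
    {AXE : Submodule ℝ (X → E)} {AYF : Submodule ℝ (Y → F)}
    {T : AXE →ₗ[ℝ] AYF}

/-- The W-lemma: if the zero set of `T b` meets the zero set of `T f₀` for every `f₀`
vanishing at `x`, then `b` vanishes at `x`. -/
lemma key_W (hAXE : AlmostNormallyMultiplicative X E AXE)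
    {AX : Submodule ℝ (X → ℝ)} (hAX : AlmostNormal X AX)
    (hmulX : ∀ φ ∈ AX, ∀ f ∈ AXE, (fun x => φ x • f x) ∈ AXE)
    (hT : PreservesCommonZeros (T : AXE → AYF))
    (x : X) (b : AXE)
    (hb : ∀ f₀ : AXE, (f₀ : X → E) x = 0 →
      (zeroSet ((T f₀ : AYF) : Y → F) ∩ zeroSet ((T b : AYF) : Y → F)).Nonempty) :
    (b : X → E) x = 0 := by
  by_contra hbx
  obtain ⟨u₀, hu₀⟩ := exists_ne (0 : E)
  have hclosed : IsClosed (zeroSet (b : X → E)) := zeroSet_isClosed (hAXE.1 _ b.2)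
  obtain ⟨ρ, hρc, hρx, hρ1⟩ := CompletelyRegularSpace.completely_regular x _ hclosed hbx
  have hρrc : Continuous (fun x' => (ρ x' : ℝ)) := continuous_subtype_val.comp hρc
  obtain ⟨φ, hφmem, hφ0, hφ1⟩ := exists_cut hAX hρrc (by norm_num : (1:ℝ)/3 < 2/3)
  have hconst : (fun _ : X => u₀) ∈ AXE := hAXE.2.1 u₀
  set f₀ : AXE := ⟨fun x' => φ x' • u₀, hmulX φ hφmem _ hconst⟩ with hf₀def
  have hf₀x : (f₀ : X → E) x = 0 := by
    show φ x • u₀ = 0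
    rw [hφ0 x (by rw [hρx]; norm_num), zero_smul]
  have hdisj : zeroSet (f₀ : X → E) ∩ zeroSet (b : X → E) = ∅ := by
    rw [Set.eq_empty_iff_forall_notMem]
    rintro x' ⟨hx'f, hx'b⟩
    have : ρ x' = 1 := hρ1 hx'b
    have h1 : φ x' = 1 := hφ1 x' (by rw [this]; norm_num)
    have : φ x' • u₀ = 0 := hx'f
    rw [h1, one_smul] at this
    exact hu₀ this
  obtain ⟨x', hx'⟩ := (pcz_pair hT f₀ b).2 (hb f₀ hf₀x)
  rw [Set.eq_empty_iff_forall_notMem] at hdisj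
  exact hdisj x' hx'

lemma mem_K_of {x : X} {p : StoneCech Y} (hp : p ∈ Zx (T : AXE → AYF) x)
    (f : AXE) (hf : (f : X → E) x = 0) :
    p ∈ closure (stoneCechUnit '' zeroSet ((T f : AYF) : Y → F)) := by
  have := Set.mem_iInter.1 hp f
  exact Set.mem_iInter.1 this hf

/-- Clustering form of the W-lemma. -/
lemma key_W_nbhd (hAXE : AlmostNormallyMultiplicative X E AXE)
    {AX : Submodule ℝ (X → ℝ)} (hAX : AlmostNormal X AX)
    (hmulX : ∀ φ ∈ AX, ∀ f ∈ AXE, (fun x => φ x • f x) ∈ AXE)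
    (hT : PreservesCommonZeros (T : AXE → AYF))
    (x : X) {p : StoneCech Y} (hp : p ∈ Zx (T : AXE → AYF) x) (b : AXE)
    {V : Set (StoneCech Y)} (hV : IsOpen V) (hpV : p ∈ V)
    (hbV : ∀ y, stoneCechUnit y ∈ V → ((T b : AYF) : Y → F) y = 0) :
    (b : X → E) x = 0 := by
  apply key_W hAXE hAX hmulX hT x b
  intro f₀ hf₀
  have hcl := mem_K_of hp f₀ hf₀
  rw [mem_closure_iff] at hcl
  obtain ⟨z, hz1, hz2⟩ := hcl V hV hpV
  obtain ⟨y, hy, rfl⟩ := hz2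
  exact ⟨y, hy, hbV y hz1⟩

end KeyW
section Theta

/-- An enumeration-weighted embedding of `ℚ` into `ℝ` with gaps. -/
noncomputable def thetaQ (q : ℚ) : ℝ :=
  ∑' n : ℕ, if (Denumerable.eqv ℚ).symm n < q then (2:ℝ)⁻¹ ^ n else 0

noncomputable def wQ (q : ℚ) : ℝ := (2:ℝ)⁻¹ ^ (Denumerable.eqv ℚ q)

lemma wQ_pos (q : ℚ) : 0 < wQ q := by unfold wQ; positivity

private lemma ite_nonneg' (c : Prop) [Decidable c] (r : ℝ) (hr : 0 ≤ r) :
    0 ≤ if c then r else 0 := by split <;> simp [hr]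

private lemma ite_le' (c : Prop) [Decidable c] (r : ℝ) (hr : 0 ≤ r) :
    (if c then r else 0) ≤ r := by split <;> simp [hr]

private lemma geom_summable : Summable (fun n : ℕ => (2:ℝ)⁻¹ ^ n) :=
  summable_geometric_of_lt_one (by norm_num) (by norm_num)

lemma summable_thetaQ (q : ℚ) :
    Summable (fun n : ℕ => if (Denumerable.eqv ℚ).symm n < q then (2:ℝ)⁻¹ ^ n else 0) :=
  Summable.of_nonneg_of_le (fun n => ite_nonneg' _ _ (by positivity))
    (fun n => ite_le' _ _ (by positivity)) geom_summable

private lemma summable_delta (q : ℚ) :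
    Summable (fun n : ℕ => if n = Denumerable.eqv ℚ q then (2:ℝ)⁻¹ ^ n else 0) :=
  Summable.of_nonneg_of_le (fun n => ite_nonneg' _ _ (by positivity))
    (fun n => ite_le' _ _ (by positivity)) geom_summable

private lemma wQ_eq_tsum (q : ℚ) :
    wQ q = ∑' n : ℕ, if n = Denumerable.eqv ℚ q then (2:ℝ)⁻¹ ^ n else 0 := by
  rw [tsum_eq_single (Denumerable.eqv ℚ q) (fun n hn => if_neg hn)]
  rw [if_pos rfl, wQ]

lemma thetaQ_nonneg (q : ℚ) : 0 ≤ thetaQ q :=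
  tsum_nonneg (fun n => ite_nonneg' _ _ (by positivity))

lemma thetaQ_add_wQ_le (q q' : ℚ) (hqq' : q < q') : thetaQ q + wQ q ≤ thetaQ q' := by
  rw [wQ_eq_tsum, thetaQ, thetaQ, ← Summable.tsum_add (summable_thetaQ q) (summable_delta q)]
  apply Summable.tsum_le_tsum _ ((summable_thetaQ q).add (summable_delta q)) (summable_thetaQ q')
  intro n
  by_cases hn : n = Denumerable.eqv ℚ q
  · subst hn
    simp only [if_pos rfl, Equiv.symm_apply_apply]
    rw [if_neg (lt_irrefl q), if_pos hqq', zero_add]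
    simp
  · rw [if_neg hn, add_zero]
    by_cases hlt : (Denumerable.eqv ℚ).symm n < q
    · rw [if_pos hlt, if_pos (lt_trans hlt hqq')]
    · rw [if_neg hlt]
      exact ite_nonneg' _ _ (by positivity)

lemma thetaQ_add_wQ_le_two (q : ℚ) : thetaQ q + wQ q ≤ 2 := by
  have hgeom : ∑' n : ℕ, (2:ℝ)⁻¹ ^ n = 2 := by
    rw [tsum_geometric_of_lt_one (by norm_num) (by norm_num)]
    norm_num
  rw [wQ_eq_tsum, thetaQ, ← Summable.tsum_add (summable_thetaQ q) (summable_delta q)]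
  refine le_trans (Summable.tsum_le_tsum ?_ ((summable_thetaQ q).add (summable_delta q)) geom_summable)
    (le_of_eq hgeom)
  intro n
  by_cases hn : n = Denumerable.eqv ℚ q
  · subst hn
    simp only [if_pos rfl, Equiv.symm_apply_apply]
    rw [if_neg (lt_irrefl q), zero_add]
    simp
  · rw [if_neg hn, add_zero]
    exact ite_le' _ _ (by positivity)

end Theta
section ClaimH

set_option linter.unusedSectionVars false

variable {X Y E F : Type*}
    [TopologicalSpace X] [T2Space X] [CompletelyRegularSpace X]
    [TopologicalSpace Y] [T2Space Y] [CompletelyRegularSpace Y]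
    [AddCommGroup E] [Module ℝ E] [TopologicalSpace E] [IsTopologicalAddGroup E]
    [ContinuousSMul ℝ E] [T2Space E] [Nontrivial E]
    [AddCommGroup F] [Module ℝ F] [TopologicalSpace F] [IsTopologicalAddGroup F]
    [ContinuousSMul ℝ F] [T2Space F] [Nontrivial F]
    {AXE : Submodule ℝ (X → E)} {AYF : Submodule ℝ (Y → F)}
    {T : AXE →ₗ[ℝ] AYF}

/-- The key topological transfer: if the zero sets of `f` and `g` are separated by a
continuous real function on `X`, then the zero sets of `T f` and `T g` have disjoint
closures in `βY`. -/
lemma claimH (hAXE : AlmostNormallyMultiplicative X E AXE)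
    {AX : Submodule ℝ (X → ℝ)} (hAX : AlmostNormal X AX)
    (hmulX : ∀ φ ∈ AX, ∀ f ∈ AXE, (fun x => φ x • f x) ∈ AXE)
    (hAYF : AlmostNormallyMultiplicative Y F AYF)
    {AY : Submodule ℝ (Y → ℝ)} (hAY : AlmostNormal Y AY)
    (hmulY : ∀ ψ ∈ AY, ∀ g ∈ AYF, (fun y => ψ y • g y) ∈ AYF)
    (hTsurj : Function.Surjective T) (hT : PreservesCommonZeros (T : AXE → AYF))
    (f g : AXE) {τ : X → ℝ} (hτ : Continuous τ) {a b : ℝ} (hab : a < b)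
    (hfa : ∀ x ∈ zeroSet (f : X → E), τ x ≤ a)
    (hgb : ∀ x ∈ zeroSet (g : X → E), b ≤ τ x) :
    Disjoint (closure (stoneCechUnit '' zeroSet ((T f : AYF) : Y → F)))
      (closure (stoneCechUnit '' zeroSet ((T g : AYF) : Y → F))) := by
  obtain ⟨u₀, hu₀⟩ := exists_ne (0 : E)
  set tl : ℚ → ℝ := fun q => a + (b - a) * ((thetaQ q + 1) / 4) with htl
  set sl : ℚ → ℝ := fun q => a + (b - a) * ((thetaQ q + wQ q + 1) / 4) with hsl
  have hba : (0:ℝ) < b - a := by linarith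
  have h_a_tl : ∀ q, a < tl q := fun q => by
    have := thetaQ_nonneg q; rw [htl]; nlinarith
  have h_tl_sl : ∀ q, tl q < sl q := fun q => by
    have := wQ_pos q; rw [htl, hsl]; nlinarith
  have h_sl_b : ∀ q, sl q < b := fun q => by
    have := thetaQ_add_wQ_le_two q; rw [hsl]; nlinarith
  have h_sl_tl : ∀ q q', q < q' → sl q ≤ tl q' := fun q q' hqq' => by
    have := thetaQ_add_wQ_le q q' hqq'; rw [hsl, htl]; nlinarith
  have hcut : ∀ q : ℚ, ∃ φ, φ ∈ AX ∧ (∀ x, τ x ≤ tl q → φ x = 0) ∧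
      (∀ x, sl q ≤ τ x → φ x = 1) := fun q => exists_cut hAX hτ (h_tl_sl q)
  choose φ hφmem hφ0 hφ1 using hcut
  have hconst : (fun _ : X => u₀) ∈ AXE := hAXE.2.1 u₀
  set hq : ℚ → AXE := fun q => ⟨fun x => φ q x • u₀, hmulX _ (hφmem q) _ hconst⟩ with hhq
  set h'q : ℚ → AXE := fun q => (⟨fun _ => u₀, hconst⟩ : AXE) - hq q with hh'q
  have hqval : ∀ q x, (hq q : X → E) x = φ q x • u₀ := fun q x => rfl
  have h'qval : ∀ q x, (h'q q : X → E) x = u₀ - φ q x • u₀ := fun q x => rfl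
  set Lam : ℚ → Set Y := fun q => zeroSet ((T (hq q) : AYF) : Y → F) with hLam
  set Gam : ℚ → Set Y := fun q => zeroSet ((T (h'q q) : AYF) : Y → F) with hGam
  set S := zeroSet ((T f : AYF) : Y → F) with hS
  set S' := zeroSet ((T g : AYF) : Y → F) with hS'
  have hSLam : ∀ q, S ⊆ Lam q := by
    intro q
    apply zmono hAXE hAYF hAY hmulY hTsurj hT
    intro x hx
    show φ q x • u₀ = 0
    rw [hφ0 q x (le_of_lt (lt_of_le_of_lt (hfa x hx) (h_a_tl q))), zero_smul]
  have hS'Gam : ∀ q, S' ⊆ Gam q := by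
    intro q
    apply zmono hAXE hAYF hAY hmulY hTsurj hT
    intro x hx
    show u₀ - φ q x • u₀ = 0
    rw [hφ1 q x (le_trans (le_of_lt (h_sl_b q)) (hgb x hx)), one_smul, sub_self]
  have hLamGam : ∀ q, Lam q ∩ Gam q = ∅ := by
    intro q
    rw [Set.eq_empty_iff_forall_notMem]
    intro y hy
    obtain ⟨x, hx1, hx2⟩ := (pcz_pair hT (hq q) (h'q q)).2 ⟨y, hy.1, hy.2⟩
    have e1 : φ q x • u₀ = 0 := hx1
    have e2 : u₀ - φ q x • u₀ = 0 := hx2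
    rw [e1, sub_zero] at e2
    exact hu₀ e2
  have hcov : ∀ q q', q < q' → Gam q ∪ Lam q' = Set.univ := by
    intro q q' hqq'
    apply zcover hAXE hAYF hAY hmulY hTsurj hT
    rw [Set.eq_univ_iff_forall]
    intro x
    rcases le_or_gt (τ x) (tl q') with hle | hlt
    · right
      show φ q' x • u₀ = 0
      rw [hφ0 q' x hle, zero_smul]
    · left
      show u₀ - φ q x • u₀ = 0
      rw [hφ1 q x (le_of_lt (lt_of_le_of_lt (h_sl_tl q q' hqq') hlt)), one_smul, sub_self]
  have hLamClosed : ∀ q, IsClosed (Lam q) := fun q => zeroSet_isClosed (hAYF.1 _ (T (hq q)).2)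
  have hGamClosed : ∀ q, IsClosed (Gam q) := fun q => zeroSet_isClosed (hAYF.1 _ (T (h'q q)).2)
  have hLamInt : ∀ q q', q < q' → Lam q ⊆ interior (Lam q') := by
    intro q q' hqq' y hy
    have h1 : (Lam q')ᶜ ⊆ Gam q := by
      intro z hz
      have hz2 : z ∈ Gam q ∪ Lam q' := by rw [hcov q q' hqq']; trivial
      rcases hz2 with hz2 | hz2
      · exact hz2
      · exact absurd hz2 hz
    have h2 : closure ((Lam q')ᶜ) ⊆ Gam q := closure_minimal h1 (hGamClosed q)
    have h3 : y ∈ (closure ((Lam q')ᶜ))ᶜ := by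
      intro hxc
      have : y ∈ Lam q ∩ Gam q := ⟨hy, h2 hxc⟩
      rw [hLamGam q] at this
      exact this
    exact interior_maximal
      (fun z hz => by by_contra hzn; exact hz (subset_closure hzn))
      isClosed_closure.isOpen_compl h3
  have hLamMono : ∀ q q', q < q' → Lam q ⊆ Lam q' :=
    fun q q' h => (hLamInt q q' h).trans interior_subset
  -- the separating function
  set Sy : Y → Set ℝ :=
    fun y => insert (1:ℝ) {r | ∃ q : ℚ, 0 < q ∧ q < 1 ∧ y ∈ Lam q ∧ r = (q : ℝ)} with hSy
  have hSyne : ∀ y, (Sy y).Nonempty := fun y => ⟨1, Set.mem_insert _ _⟩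
  have hSylb : ∀ y, ∀ r ∈ Sy y, (0:ℝ) ≤ r := by
    intro y r hr
    rcases hr with hr | ⟨q, hq0, _, _, rfl⟩
    · rw [hr]; norm_num
    · positivity
  have hSybdd : ∀ y, BddBelow (Sy y) := fun y => ⟨0, fun r hr => hSylb y r hr⟩
  set ψ : Y → ℝ := fun y => sInf (Sy y) with hψ
  have hψ0 : ∀ y, 0 ≤ ψ y := fun y => le_csInf (hSyne y) (hSylb y)
  have hψ1 : ∀ y, ψ y ≤ 1 := fun y => csInf_le (hSybdd y) (Set.mem_insert _ _)
  have hψS : ∀ y ∈ S, ψ y = 0 := by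
    intro y hy
    refine le_antisymm ?_ (hψ0 y)
    by_contra hpos
    push_neg at hpos
    obtain ⟨q, hq1, hq2⟩ := exists_rat_btwn (lt_min hpos zero_lt_one)
    have hq0 : 0 < q := by exact_mod_cast hq1
    have hqlt1 : q < 1 := by
      have := lt_of_lt_of_le hq2 (min_le_right _ _)
      exact_mod_cast this
    have : ψ y ≤ (q : ℝ) := csInf_le (hSybdd y) (Set.mem_insert_of_mem _
      ⟨q, hq0, hqlt1, hSLam q hy, rfl⟩)
    have := lt_of_lt_of_le hq2 (min_le_left _ _)
    linarith
  have hψS' : ∀ y ∈ S', ψ y = 1 := by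
    intro y hy
    have : Sy y = {1} := by
      apply Set.Subset.antisymm
      · rintro r (hr | ⟨q, _, _, hyq, rfl⟩)
        · rw [hr]; rfl
        · exfalso
          have : y ∈ Lam q ∩ Gam q := ⟨hyq, hS'Gam q hy⟩
          rw [hLamGam q] at this
          exact this
      · rintro r hr
        rw [hr]
        exact Set.mem_insert _ _
    show sInf (Sy y) = 1
    rw [this, csInf_singleton]
  have hψcont : Continuous ψ := by
    rw [continuous_iff_continuousAt]
    intro y
    rw [ContinuousAt, tendsto_order]
    constructor
    · -- lower semicontinuity
      intro a' ha'
      rcases lt_or_ge a' 0 with ha0 | ha0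
      · exact Filter.Eventually.of_forall (fun z => lt_of_lt_of_le ha0 (hψ0 z))
      · obtain ⟨q, hq1, hq2⟩ := exists_rat_btwn ha'
        have hq0 : 0 < q := by exact_mod_cast lt_of_le_of_lt ha0 hq1
        have hqlt1 : q < 1 := by exact_mod_cast lt_of_lt_of_le hq2 (hψ1 y)
        have hynot : y ∉ Lam q := by
          intro hmem
          have : ψ y ≤ (q:ℝ) := csInf_le (hSybdd y)
            (Set.mem_insert_of_mem _ ⟨q, hq0, hqlt1, hmem, rfl⟩)
          linarith
        have hev : (Lam q)ᶜ ∈ nhds y := (hLamClosed q).isOpen_compl.mem_nhds hynot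
        apply Filter.eventually_of_mem hev
        intro z hz
        have hlow : ∀ r ∈ Sy z, (q:ℝ) ≤ r := by
          rintro r (hr | ⟨q', hq'0, hq'1, hzq', rfl⟩)
          · rw [hr]; exact_mod_cast le_of_lt hqlt1
          · by_contra hlt
            push_neg at hlt
            have hq'q : q' < q := by exact_mod_cast hlt
            exact hz (hLamMono q' q hq'q hzq')
        have : (q:ℝ) ≤ ψ z := le_csInf (hSyne z) hlow
        linarith
    · -- upper semicontinuity
      intro b' hb'
      rcases le_or_gt b' 1 with hble | hbgt
      · have hlt : ψ y < b' := hb'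
        obtain ⟨r, hrS, hrlt⟩ := exists_lt_of_csInf_lt (hSyne y) hlt
        rcases hrS with hr1 | ⟨q₀, hq₀0, hq₀1, hyq₀, rfl⟩
        · rw [hr1] at hrlt; linarith
        · obtain ⟨q'', hq''1, hq''2⟩ := exists_rat_btwn hrlt
          have hq₀q'' : q₀ < q'' := by exact_mod_cast hq''1
          have hq''0 : 0 < q'' := lt_trans hq₀0 hq₀q''
          have hq''lt1 : q'' < 1 := by exact_mod_cast lt_of_lt_of_le hq''2 hble
          have hev : interior (Lam q'') ∈ nhds y :=
            isOpen_interior.mem_nhds (hLamInt q₀ q'' hq₀q'' hyq₀)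
          apply Filter.eventually_of_mem hev
          intro z hz
          have : ψ z ≤ (q'':ℝ) := csInf_le (hSybdd z)
            (Set.mem_insert_of_mem _ ⟨q'', hq''0, hq''lt1, interior_subset hz, rfl⟩)
          linarith
      · exact Filter.Eventually.of_forall (fun z => lt_of_le_of_lt (hψ1 z) hbgt)
  have hdisj := disjoint_closure_unit_of_sep hψcont (zero_lt_one (α := ℝ))
  apply Disjoint.mono _ _ hdisj
  · exact closure_mono (Set.image_mono (fun y hy => le_of_eq (hψS y hy)))
  · exact closure_mono (Set.image_mono (fun y hy => ge_of_eq (hψS' y hy)))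

end ClaimH
section ZxStruct

set_option linter.unusedSectionVars false

variable {X Y E F : Type*}
    [TopologicalSpace X] [T2Space X] [CompletelyRegularSpace X]
    [TopologicalSpace Y] [T2Space Y] [CompletelyRegularSpace Y]
    [AddCommGroup E] [Module ℝ E] [TopologicalSpace E] [IsTopologicalAddGroup E]
    [ContinuousSMul ℝ E] [T2Space E] [Nontrivial E]
    [AddCommGroup F] [Module ℝ F] [TopologicalSpace F] [IsTopologicalAddGroup F]
    [ContinuousSMul ℝ F] [T2Space F] [Nontrivial F]
    {AXE : Submodule ℝ (X → E)} {AYF : Submodule ℝ (Y → F)}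
    {T : AXE →ₗ[ℝ] AYF}

/-- Lemma F: if `p ∈ Zx x` lies in the closure of the image of the zero set of `T f`,
then `f x = 0`. -/
lemma lemF (hAXE : AlmostNormallyMultiplicative X E AXE)
    {AX : Submodule ℝ (X → ℝ)} (hAX : AlmostNormal X AX)
    (hmulX : ∀ φ ∈ AX, ∀ f ∈ AXE, (fun x => φ x • f x) ∈ AXE)
    (hAYF : AlmostNormallyMultiplicative Y F AYF)
    {AY : Submodule ℝ (Y → ℝ)} (hAY : AlmostNormal Y AY)
    (hmulY : ∀ ψ ∈ AY, ∀ g ∈ AYF, (fun y => ψ y • g y) ∈ AYF)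
    (hTsurj : Function.Surjective T) (hT : PreservesCommonZeros (T : AXE → AYF))
    {x : X} {p : StoneCech Y} (hp : p ∈ Zx (T : AXE → AYF) x) (f : AXE)
    (hpf : p ∈ closure (stoneCechUnit '' zeroSet ((T f : AYF) : Y → F))) :
    (f : X → E) x = 0 := by
  by_contra hfx
  obtain ⟨u₀, hu₀⟩ := exists_ne (0 : E)
  have hclosed : IsClosed (zeroSet (f : X → E)) := zeroSet_isClosed (hAXE.1 _ f.2)
  obtain ⟨ρ, hρc, hρx, hρ1⟩ := CompletelyRegularSpace.completely_regular x _ hclosed hfx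
  set τ : X → ℝ := fun x' => 1 - (ρ x' : ℝ) with hτdef
  have hτc : Continuous τ := continuous_const.sub (continuous_subtype_val.comp hρc)
  obtain ⟨φ, hφmem, hφ0, hφ1⟩ := exists_cut hAX hτc (by norm_num : (1:ℝ)/3 < 2/3)
  have hconst : (fun _ : X => u₀) ∈ AXE := hAXE.2.1 u₀
  set f₀ : AXE := (⟨fun _ => u₀, hconst⟩ : AXE) -
    ⟨fun x' => φ x' • u₀, hmulX _ hφmem _ hconst⟩ with hf₀def
  have hf₀val : ∀ x', (f₀ : X → E) x' = u₀ - φ x' • u₀ := fun _ => rfl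
  have hτx : τ x = 1 := by rw [hτdef]; simp [hρx]
  have hf₀x : (f₀ : X → E) x = 0 := by
    rw [hf₀val, hφ1 x (by rw [hτx]; norm_num), one_smul, sub_self]
  have hpf₀ : p ∈ closure (stoneCechUnit '' zeroSet ((T f₀ : AYF) : Y → F)) :=
    mem_K_of hp f₀ hf₀x
  have hdisj := claimH hAXE hAX hmulX hAYF hAY hmulY hTsurj hT f f₀ hτc
    (by norm_num : (0:ℝ) < 1/3) ?_ ?_
  · exact Set.disjoint_left.1 hdisj hpf hpf₀
  · intro x' hx'
    have : ρ x' = 1 := hρ1 hx'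
    rw [hτdef]; simp [this]
  · intro x' hx'
    have hx2 : u₀ - φ x' • u₀ = 0 := hx'
    by_contra hlt
    push_neg at hlt
    have : φ x' = 0 := hφ0 x' (le_of_lt hlt)
    rw [this, zero_smul, sub_zero] at hx2
    exact hu₀ hx2

/-- `Zx x` is nonempty. -/
lemma Zx_nonempty (hT : PreservesCommonZeros (T : AXE → AYF)) (x : X) :
    (Zx (T : AXE → AYF) x).Nonempty := by
  have hZx : Zx (T : AXE → AYF) x =
      ⋂ i : {f : AXE // (f : X → E) x = 0},
        closure (stoneCechUnit '' zeroSet ((T i.1 : AYF) : Y → F)) := by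
    rw [Zx]
    exact (Set.iInter_subtype (fun f : AXE => (f : X → E) x = 0)
      (fun i => closure (stoneCechUnit '' zeroSet ((T i.1 : AYF) : Y → F)))).symm
  have := IsCompact.inter_iInter_nonempty (isCompact_univ (X := StoneCech Y))
    (fun i : {f : AXE // (f : X → E) x = 0} =>
      closure (stoneCechUnit '' zeroSet ((T i.1 : AYF) : Y → F)))
    (fun i => isClosed_closure) ?_
  · rw [hZx]
    obtain ⟨p, _, hp⟩ := this
    exact ⟨p, hp⟩
  intro u
  -- build a finite family
  set k := u.card with hk
  set L := u.toList with hL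
  have hLlen : L.length = k := Finset.length_toList u
  set Ffam : Fin (k + 1) → AXE := fun i =>
    if h : (i : ℕ) < k then (L.get ⟨i, by rw [hLlen]; exact h⟩).1 else 0 with hFfam
  have hpos : ∀ (i : Fin (k+1)) (h : (i : ℕ) < k),
      Ffam i = (L.get ⟨i, by rw [hLlen]; exact h⟩).1 := fun i h => dif_pos h
  have hneg : ∀ (i : Fin (k+1)) (h : ¬ ((i : ℕ) < k)), Ffam i = 0 := fun i h => dif_neg h
  have hxz : x ∈ ⋂ i, zeroSet ((Ffam i : AXE) : X → E) := by
    apply Set.mem_iInter.2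
    intro i
    by_cases h : (i : ℕ) < k
    · rw [hpos i h]
      exact (L.get ⟨i, by rw [hLlen]; exact h⟩).2
    · rw [hneg i h]
      show ((0 : AXE) : X → E) x = 0
      rfl
  obtain ⟨y₀, hy₀⟩ := (hT k Ffam).1 ⟨x, hxz⟩
  refine ⟨stoneCechUnit y₀, Set.mem_univ _, ?_⟩
  apply Set.mem_iInter₂.2
  intro i hi
  apply subset_closure
  apply Set.mem_image_of_mem
  have : i ∈ L := Finset.mem_toList.2 hi
  obtain ⟨j, hj⟩ := List.mem_iff_get.1 this
  have hjk : (j : ℕ) < k := by rw [← hLlen]; exact j.2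
  have hFj : Ffam ⟨(j : ℕ), Nat.lt_succ_of_lt hjk⟩ = i.1 := by
    rw [hpos ⟨(j : ℕ), Nat.lt_succ_of_lt hjk⟩ hjk]
    exact congrArg Subtype.val hj
  have := Set.mem_iInter.1 hy₀ ⟨(j : ℕ), Nat.lt_succ_of_lt hjk⟩
  rw [hFj] at this
  exact this

end ZxStruct
section ZxStruct2

set_option linter.unusedSectionVars false

variable {X Y E F : Type*}
    [TopologicalSpace X] [T2Space X] [CompletelyRegularSpace X]
    [TopologicalSpace Y] [T2Space Y] [CompletelyRegularSpace Y]
    [AddCommGroup E] [Module ℝ E] [TopologicalSpace E] [IsTopologicalAddGroup E]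
    [ContinuousSMul ℝ E] [T2Space E] [Nontrivial E]
    [AddCommGroup F] [Module ℝ F] [TopologicalSpace F] [IsTopologicalAddGroup F]
    [ContinuousSMul ℝ F] [T2Space F] [Nontrivial F]
    {AXE : Submodule ℝ (X → E)} {AYF : Submodule ℝ (Y → F)}
    {T : AXE →ₗ[ℝ] AYF}

/-- `Zx x` is a subsingleton. -/
lemma Zx_subsingleton (hAXE : AlmostNormallyMultiplicative X E AXE)
    {AX : Submodule ℝ (X → ℝ)} (hAX : AlmostNormal X AX)
    (hmulX : ∀ φ ∈ AX, ∀ f ∈ AXE, (fun x => φ x • f x) ∈ AXE)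
    (hAYF : AlmostNormallyMultiplicative Y F AYF)
    {AY : Submodule ℝ (Y → ℝ)} (hAY : AlmostNormal Y AY)
    (hmulY : ∀ ψ ∈ AY, ∀ g ∈ AYF, (fun y => ψ y • g y) ∈ AYF)
    (hTsurj : Function.Surjective T) (hT : PreservesCommonZeros (T : AXE → AYF))
    (x : X) {p q : StoneCech Y} (hp : p ∈ Zx (T : AXE → AYF) x)
    (hq : q ∈ Zx (T : AXE → AYF) x) : p = q := by
  by_contra hne
  obtain ⟨v₀, hv₀⟩ := exists_ne (0 : F)
  obtain ⟨Ψ, hΨp, hΨq, hΨ01⟩ := exists_continuous_zero_one_of_isClosed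
    (isClosed_singleton (x := p)) (isClosed_singleton (x := q))
    (Set.disjoint_singleton.2 hne)
  obtain ⟨ψ, hψmem, hψ0, hψ1⟩ := exists_cutβ hAY Ψ.continuous (by norm_num : (1:ℝ)/3 < 2/3)
  have hconstY : (fun _ : Y => v₀) ∈ AYF := hAYF.2.1 v₀
  obtain ⟨c, hc⟩ := hTsurj ⟨fun _ => v₀, hconstY⟩
  set aY : AYF := ⟨fun y => ψ y • v₀, hmulY ψ hψmem _ hconstY⟩ with haY
  obtain ⟨aX, haX⟩ := hTsurj aY
  set bX : AXE := c - aX with hbX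
  have hTb : T bX = (⟨fun _ => v₀, hconstY⟩ : AYF) - aY := by
    rw [hbX, map_sub, hc, haX]
  have hbx0 : (bX : X → E) x = 0 := by
    apply key_W_nbhd hAXE hAX hmulX hT x hq bX
      (V := Ψ ⁻¹' (Set.Ioi (2/3))) (Ψ.continuous.isOpen_preimage _ isOpen_Ioi)
      (by simp only [Set.mem_preimage, hΨq rfl, Set.mem_Ioi]; norm_num)
    intro y hy
    have h1 : ψ y = 1 := hψ1 y (le_of_lt hy)
    rw [hTb]
    show ((⟨fun _ => v₀, hconstY⟩ : AYF) : Y → F) y - (aY : Y → F) y = 0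
    show v₀ - ψ y • v₀ = 0
    rw [h1, one_smul, sub_self]
  have hax0 : (aX : X → E) x = 0 := by
    apply key_W_nbhd hAXE hAX hmulX hT x hp aX
      (V := Ψ ⁻¹' (Set.Iio (1/3))) (Ψ.continuous.isOpen_preimage _ isOpen_Iio)
      (by simp only [Set.mem_preimage, hΨp rfl, Set.mem_Iio]; norm_num)
    intro y hy
    have h0 : ψ y = 0 := hψ0 y (le_of_lt hy)
    rw [haX]
    show ψ y • v₀ = 0
    rw [h0, zero_smul]
  have hcx : (c : X → E) x = 0 := by
    have : (c : X → E) x = (aX : X → E) x + (bX : X → E) x := by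
      rw [hbX]
      show (c : X → E) x = (aX : X → E) x + ((c : X → E) x - (aX : X → E) x)
      abel
    rw [this, hax0, hbx0, add_zero]
  obtain ⟨y, hy⟩ := (pcz_single hT c).1 ⟨x, hcx⟩
  rw [hc] at hy
  exact hv₀ hy

/-- Distinct points have disjoint `Zx` sets. -/
lemma Zx_disjoint_s4 (hAXE : AlmostNormallyMultiplicative X E AXE)
    {AX : Submodule ℝ (X → ℝ)} (hAX : AlmostNormal X AX)
    (hmulX : ∀ φ ∈ AX, ∀ f ∈ AXE, (fun x => φ x • f x) ∈ AXE)
    (hAYF : AlmostNormallyMultiplicative Y F AYF)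
    {AY : Submodule ℝ (Y → ℝ)} (hAY : AlmostNormal Y AY)
    (hmulY : ∀ ψ ∈ AY, ∀ g ∈ AYF, (fun y => ψ y • g y) ∈ AYF)
    (hTsurj : Function.Surjective T) (hT : PreservesCommonZeros (T : AXE → AYF))
    {x x' : X} (hne : x ≠ x') {p : StoneCech Y}
    (hp : p ∈ Zx (T : AXE → AYF) x) (hp' : p ∈ Zx (T : AXE → AYF) x') : False := by
  obtain ⟨v₀, hv₀⟩ := exists_ne (0 : F)
  have hconstY : (fun _ : Y => v₀) ∈ AYF := hAYF.2.1 v₀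
  obtain ⟨c, hc⟩ := hTsurj ⟨fun _ => v₀, hconstY⟩
  have hcne : ∀ x'', (c : X → E) x'' ≠ 0 := by
    intro x'' hcx
    obtain ⟨y, hy⟩ := (pcz_single hT c).1 ⟨x'', hcx⟩
    rw [hc] at hy
    exact hv₀ hy
  obtain ⟨ρ, hρc, hρx', hρ1⟩ := CompletelyRegularSpace.completely_regular x' {x}
    isClosed_singleton (by simp [hne.symm])
  have hρrc : Continuous (fun x'' => (ρ x'' : ℝ)) := continuous_subtype_val.comp hρc
  obtain ⟨φ, hφmem, hφ0, hφ1⟩ := exists_cut hAX hρrc (by norm_num : (1:ℝ)/3 < 2/3)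
  set f : AXE := ⟨fun x'' => φ x'' • (c : X → E) x'', hmulX φ hφmem _ c.2⟩ with hf
  have hfx' : (f : X → E) x' = 0 := by
    show φ x' • (c : X → E) x' = 0
    rw [hφ0 x' (by rw [hρx']; norm_num), zero_smul]
  have hpf : p ∈ closure (stoneCechUnit '' zeroSet ((T f : AYF) : Y → F)) :=
    mem_K_of hp' f hfx'
  have hfx : (f : X → E) x = 0 :=
    lemF hAXE hAX hmulX hAYF hAY hmulY hTsurj hT hp f hpf
  have : φ x = 1 := hφ1 x (by rw [hρ1 rfl]; norm_num)
  have : (c : X → E) x = 0 := by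
    have hfx2 : φ x • (c : X → E) x = 0 := hfx
    rw [this, one_smul] at hfx2
    exact hfx2
  exact hcne x this

end ZxStruct2
theorem prop_Zx {X Y E F : Type*}
    [TopologicalSpace X] [T2Space X] [CompletelyRegularSpace X]
    [TopologicalSpace Y] [T2Space Y] [CompletelyRegularSpace Y]
    [AddCommGroup E] [Module ℝ E] [TopologicalSpace E] [IsTopologicalAddGroup E]
    [ContinuousSMul ℝ E] [T2Space E] [Nontrivial E]
    [AddCommGroup F] [Module ℝ F] [TopologicalSpace F] [IsTopologicalAddGroup F]
    [ContinuousSMul ℝ F] [T2Space F] [Nontrivial F]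
    {AXE : Submodule ℝ (X → E)} {AYF : Submodule ℝ (Y → F)}
    (hAXE : AlmostNormallyMultiplicative X E AXE)
    (hAYF : AlmostNormallyMultiplicative Y F AYF)
    (T : AXE →ₗ[ℝ] AYF) (hTsurj : Function.Surjective T)
    (hT : PreservesCommonZeros (T : AXE → AYF)) :
    ∃ (Z : Set (StoneCech Y)) (h : Z ≃ₜ X), Dense Z ∧
      ∀ (y : Z) (f : AXE),
        (y : StoneCech Y) ∈ closure (stoneCechUnit ''
            {yα : Y | (T f : Y → F) yα =
              (T ⟨fun _ => (f : X → E) (h y), hAXE.2.1 _⟩ : Y → F) yα}) ∧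
        betaExt (hAYF.1 _ (T f).2) (y : StoneCech Y) =
          betaExt (hAYF.1 _ (T ⟨fun _ => (f : X → E) (h y), hAXE.2.1 _⟩).2)
            (y : StoneCech Y) := by
  obtain ⟨AX, hAX, hmulX⟩ := hAXE.2.2
  obtain ⟨AY, hAY, hmulY⟩ := hAYF.2.2
  -- the map σ
  have hZne : ∀ x, (Zx (T : AXE → AYF) x).Nonempty := Zx_nonempty hT
  choose σ hσ using hZne
  have huniq : ∀ x p, p ∈ Zx (T : AXE → AYF) x → p = σ x := fun x p hp =>
    Zx_subsingleton hAXE hAX hmulX hAYF hAY hmulY hTsurj hT x hp (hσ x)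
  have hinj : Function.Injective σ := by
    intro x x' he
    by_contra hne
    exact Zx_disjoint_s4 hAXE hAX hmulX hAYF hAY hmulY hTsurj hT hne (hσ x) (he ▸ hσ x')
  obtain ⟨v₀, hv₀⟩ := exists_ne (0 : F)
  have hconstY : (fun _ : Y => v₀) ∈ AYF := hAYF.2.1 v₀
  obtain ⟨c, hc⟩ := hTsurj ⟨fun _ => v₀, hconstY⟩
  have hcne : ∀ x, (c : X → E) x ≠ 0 := by
    intro x hcx
    obtain ⟨y, hy⟩ := (pcz_single hT c).1 ⟨x, hcx⟩
    rw [hc] at hy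
    exact hv₀ hy
  -- forward continuity
  have hσcont : Continuous σ := by
    rw [continuous_iff_continuousAt]
    intro x
    rw [ContinuousAt, Filter.tendsto_def]
    intro U hU
    obtain ⟨U', hU'sub, hU'open, hxU'⟩ := mem_nhds_iff.1 hU
    obtain ⟨Ψ, hΨ0, hΨ1, _⟩ := exists_continuous_zero_one_of_isClosed
      (isClosed_singleton (x := σ x)) hU'open.isClosed_compl
      (Set.disjoint_singleton_left.2 (by simpa using hxU'))
    obtain ⟨ψ, hψmem, hψ0, hψ1⟩ := exists_cutβ hAY Ψ.continuous
      (by norm_num : (1:ℝ)/3 < 2/3)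
    set g3Y : AYF := ⟨fun y => v₀ - ψ y • v₀,
      Submodule.sub_mem _ hconstY (hmulY ψ hψmem _ hconstY)⟩ with hg3Y
    obtain ⟨f₃, hf₃⟩ := hTsurj g3Y
    set f₄ : AXE := c - f₃ with hf₄
    have claim1 : ∀ x'', σ x'' ∉ U' → (f₃ : X → E) x'' = 0 := by
      intro x'' hnx
      apply key_W_nbhd hAXE hAX hmulX hT x'' (hσ x'') f₃
        (V := Ψ ⁻¹' (Set.Ioi (2/3))) (Ψ.continuous.isOpen_preimage _ isOpen_Ioi)
        (by simp only [Set.mem_preimage, Set.mem_Ioi]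
            rw [hΨ1 (by simpa using hnx)]
            norm_num)
      intro y hy
      have h1 : ψ y = 1 := hψ1 y (le_of_lt hy)
      rw [hf₃]
      show v₀ - ψ y • v₀ = 0
      rw [h1, one_smul, sub_self]
    have claim2 : (f₃ : X → E) x ≠ 0 := by
      have hf₄x : (f₄ : X → E) x = 0 := by
        apply key_W_nbhd hAXE hAX hmulX hT x (hσ x) f₄
          (V := Ψ ⁻¹' (Set.Iio (1/3))) (Ψ.continuous.isOpen_preimage _ isOpen_Iio)
          (by simp only [Set.mem_preimage, Set.mem_Iio]
              rw [hΨ0 rfl]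
              norm_num)
        intro y hy
        have h0 : ψ y = 0 := hψ0 y (le_of_lt hy)
        have : T f₄ = (⟨fun _ => v₀, hconstY⟩ : AYF) - g3Y := by
          rw [hf₄, map_sub, hc, hf₃]
        rw [this]
        show v₀ - (v₀ - ψ y • v₀) = 0
        rw [h0, zero_smul, sub_zero, sub_self]
      have : (f₃ : X → E) x = (c : X → E) x := by
        have h4 : (f₄ : X → E) x = (c : X → E) x - (f₃ : X → E) x := rfl
        rw [h4] at hf₄x
        linear_combination (norm := abel) -hf₄x
      rw [this]
      exact hcne x
    apply Filter.mem_of_superset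
      (show {x'' | (f₃ : X → E) x'' ≠ 0} ∈ nhds x from
        ((zeroSet_isClosed (hAXE.1 _ f₃.2)).isOpen_compl).mem_nhds claim2)
    intro x'' h''
    apply Set.mem_preimage.2
    apply hU'sub
    by_contra hn
    exact h'' (claim1 x'' hn)
  -- ingredient for the inverse continuity
  have hinv : ∀ (x : X) (N : Set X), IsOpen N → x ∈ N →
      ∃ U : Set (StoneCech Y), IsOpen U ∧ σ x ∈ U ∧ ∀ x'', σ x'' ∈ U → x'' ∈ N := by
    intro x N hNopen hxN
    obtain ⟨ρ, hρc, hρx, hρ1⟩ := CompletelyRegularSpace.completely_regular x Nᶜ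
      hNopen.isClosed_compl (by simpa using hxN)
    have hρrc : Continuous (fun x'' => (ρ x'' : ℝ)) := continuous_subtype_val.comp hρc
    obtain ⟨φ, hφmem, hφ0, hφ1⟩ := exists_cut hAX hρrc (by norm_num : (1:ℝ)/3 < 2/3)
    set f₅ : AXE := ⟨fun x'' => φ x'' • (c : X → E) x'', hmulX φ hφmem _ c.2⟩ with hf₅
    set f₆ : AXE := c - f₅ with hf₆
    have hf₆val : ∀ x'', (f₆ : X → E) x'' = (c : X → E) x'' - φ x'' • (c : X → E) x'' :=
      fun _ => rfl
    refine ⟨(closure (stoneCechUnit '' zeroSet ((T f₆ : AYF) : Y → F)))ᶜ,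
      isClosed_closure.isOpen_compl, ?_, ?_⟩
    · intro hmem
      have := lemF hAXE hAX hmulX hAYF hAY hmulY hTsurj hT (hσ x) f₆ hmem
      rw [hf₆val, hφ0 x (by rw [hρx]; norm_num), zero_smul, sub_zero] at this
      exact hcne x this
    · intro x'' hx''
      by_contra hn
      have h1 : ρ x'' = 1 := hρ1 hn
      have h6 : (f₆ : X → E) x'' = 0 := by
        rw [hf₆val, hφ1 x'' (by rw [h1]; norm_num), one_smul, sub_self]
      exact hx'' (mem_K_of (hσ x'') f₆ h6)
  -- the homeomorphism
  set e := Equiv.ofInjective σ hinj with he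
  have hcoe : ∀ z : Set.range σ, σ (e.symm z) = (z : StoneCech Y) :=
    fun z => Equiv.apply_ofInjective_symm hinj z
  have hcont_to : Continuous (fun x : X => e x) := by
    have : (fun x : X => e x) = fun x => (⟨σ x, Set.mem_range_self x⟩ : Set.range σ) := by
      funext x
      exact Subtype.ext rfl
    rw [this]
    exact hσcont.subtype_mk _
  have hcont_inv : Continuous (fun z : Set.range σ => e.symm z) := by
    rw [continuous_iff_continuousAt]
    intro z
    rw [ContinuousAt, Filter.tendsto_def]
    intro N hN
    obtain ⟨N', hN'sub, hN'open, hxN'⟩ := mem_nhds_iff.1 hN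
    obtain ⟨U, hUopen, hσU, hUin⟩ := hinv (e.symm z) N' hN'open hxN'
    apply Filter.mem_of_superset
      (show Subtype.val ⁻¹' U ∈ nhds z from
        (hUopen.preimage continuous_subtype_val).mem_nhds
          (by rw [Set.mem_preimage, ← hcoe z]; exact hσU))
    intro z' hz'
    apply Set.mem_preimage.2
    apply hN'sub
    apply hUin
    rw [hcoe z']
    exact hz'
  set H : X ≃ₜ Set.range σ :=
    { toEquiv := e, continuous_toFun := hcont_to, continuous_invFun := hcont_inv } with hH
  refine ⟨Set.range σ, H.symm, ?_, ?_⟩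
  · -- density
    rw [dense_iff_inter_open]
    intro U hUopen hUne
    obtain ⟨y₀, hy₀⟩ := denseRange_stoneCechUnit.exists_mem_open hUopen hUne
    obtain ⟨Ψ, hΨ0, hΨ1, _⟩ := exists_continuous_zero_one_of_isClosed
      (isClosed_singleton (x := stoneCechUnit y₀)) hUopen.isClosed_compl
      (Set.disjoint_singleton_left.2 (by simpa using hy₀))
    obtain ⟨ψ, hψmem, hψ0, hψ1⟩ := exists_cutβ hAY Ψ.continuous
      (by norm_num : (1:ℝ)/3 < 2/3)
    set aY : AYF := ⟨fun y => ψ y • v₀, hmulY ψ hψmem _ hconstY⟩ with haY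
    obtain ⟨f₁, hf₁⟩ := hTsurj aY
    have hy₀mem : y₀ ∈ zeroSet ((T f₁ : AYF) : Y → F) := by
      rw [hf₁]
      show ψ y₀ • v₀ = 0
      rw [hψ0 y₀ (by rw [hΨ0 rfl]; norm_num), zero_smul]
    obtain ⟨x₀, hx₀⟩ := (pcz_single hT f₁).2 ⟨y₀, hy₀mem⟩
    have hσx₀ : σ x₀ ∈ closure (stoneCechUnit '' zeroSet ((T f₁ : AYF) : Y → F)) :=
      mem_K_of (hσ x₀) f₁ hx₀
    have hsub : closure (stoneCechUnit '' zeroSet ((T f₁ : AYF) : Y → F)) ⊆ U := by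
      have h1 : stoneCechUnit '' zeroSet ((T f₁ : AYF) : Y → F) ⊆ Ψ ⁻¹' (Set.Iic (2/3)) := by
        rintro _ ⟨y, hy, rfl⟩
        rw [Set.mem_preimage, Set.mem_Iic]
        by_contra hgt
        push_neg at hgt
        have h1 : ψ y = 1 := hψ1 y (le_of_lt hgt)
        rw [hf₁] at hy
        have : ψ y • v₀ = 0 := hy
        rw [h1, one_smul] at this
        exact hv₀ this
      refine (closure_minimal h1 (IsClosed.preimage Ψ.continuous isClosed_Iic)).trans ?_
      intro p hp
      by_contra hpn
      have : Ψ p = 1 := hΨ1 hpn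
      rw [Set.mem_preimage, Set.mem_Iic, this] at hp
      norm_num at hp
    exact ⟨σ x₀, hsub hσx₀, Set.mem_range_self x₀⟩
  · -- the pointwise properties
    intro y f
    have hσy : σ (H.symm y) = (y : StoneCech Y) := hcoe y
    set cst : AXE := ⟨fun _ => (f : X → E) (H.symm y), hAXE.2.1 _⟩ with hcst
    set d : AXE := f - cst with hd
    have hdx : (d : X → E) (H.symm y) = 0 := by
      show (f : X → E) (H.symm y) - (cst : X → E) (H.symm y) = 0
      rw [sub_self]
    have h1 : (y : StoneCech Y) ∈ closure (stoneCechUnit ''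
        zeroSet ((T d : AYF) : Y → F)) := by
      rw [← hσy]
      exact mem_K_of (hσ (H.symm y)) d hdx
    have hset : zeroSet ((T d : AYF) : Y → F) =
        {yα : Y | (T f : AYF).1 yα = (T cst : AYF).1 yα} := by
      ext yα
      have hTd : T d = T f - T cst := by rw [hd, map_sub]
      show ((T d : AYF) : Y → F) yα = 0 ↔ _
      rw [hTd]
      show ((T f : AYF) : Y → F) yα - ((T cst : AYF) : Y → F) yα = 0 ↔ _
      rw [sub_eq_zero]
      rfl
    rw [hset] at h1
    refine ⟨h1, ?_⟩
    set M := {yα : Y | (T f : AYF).1 yα = (T cst : AYF).1 yα} with hM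
    have hclosed : IsClosed {p : StoneCech Y |
        betaExt (hAYF.1 _ (T f).2) p = betaExt (hAYF.1 _ (T cst).2) p} :=
      isClosed_eq (continuous_stoneCechExtend _) (continuous_stoneCechExtend _)
    have hsub : stoneCechUnit '' M ⊆ {p : StoneCech Y |
        betaExt (hAYF.1 _ (T f).2) p = betaExt (hAYF.1 _ (T cst).2) p} := by
      rintro _ ⟨yα, hyα, rfl⟩
      have b1 : betaExt (hAYF.1 _ (T f).2) (stoneCechUnit yα) =
          stoneCechUnit (((T f : AYF) : Y → F) yα) := by
        have := congrFun (stoneCechExtend_extends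
          (continuous_stoneCechUnit.comp (hAYF.1 _ (T f).2))) yα
        simpa [betaExt, Function.comp] using this
      have b2 : betaExt (hAYF.1 _ (T cst).2) (stoneCechUnit yα) =
          stoneCechUnit (((T cst : AYF) : Y → F) yα) := by
        have := congrFun (stoneCechExtend_extends
          (continuous_stoneCechUnit.comp (hAYF.1 _ (T cst).2))) yα
        simpa [betaExt, Function.comp] using this
      show betaExt (hAYF.1 _ (T f).2) (stoneCechUnit yα) =
        betaExt (hAYF.1 _ (T cst).2) (stoneCechUnit yα)
      rw [b1, b2]
      exact congrArg stoneCechUnit hyα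
    exact closure_minimal hsub hclosed h1
end

section
/- Let T : A(X,E) → A(Y,F) be a surjective linear map that preserves common zeros, where A(X,E) and A(Y,F) are almost normally multiplicative vector subspaces of C(X,E) and C(Y,F). Suppose Z is a dense subset of βY and h : Z → X is a homeomorphism such that (Tf)^β(y) = (T𝐮)^β(y) for all y ∈ Z and f ∈ A(X,E), where u = f(h(y)). Then the map ι_X ∘ h : Z → βX admits a continuous extension h̃ : βY → βX. -/
open Set Filter Topology

open scoped NNReal


/-- In a `T1` topological additive group, a nonzero point can be separated from `0`
by a continuous real-valued function with values in `[0,1]`. -/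
lemma tg_exists_sep {F : Type*} [AddCommGroup F] [TopologicalSpace F]
    [IsTopologicalAddGroup F] [T1Space F] {v : F} (hv : v ≠ 0) :
    ∃ g : F → ℝ, Continuous g ∧ (∀ x, g x ∈ Set.Icc (0:ℝ) 1) ∧ g 0 = 0 ∧ g v = 1 := by
  classical
  have step : ∀ U : Set F, U ∈ 𝓝 (0:F) → ∃ V : Set F, V ∈ 𝓝 (0:F) ∧
      (∀ x ∈ V, -x ∈ V) ∧ ∀ a ∈ V, ∀ b ∈ V, ∀ c ∈ V, a + b + c ∈ U := by
    intro U hU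
    obtain ⟨V₁, hV₁, hV₁add⟩ := exists_nhds_zero_half hU
    obtain ⟨V₂, hV₂, hV₂add⟩ := exists_nhds_zero_half hV₁
    have h0V₂ : (0:F) ∈ V₂ := mem_of_mem_nhds hV₂
    have hV₂₁ : V₂ ⊆ V₁ := fun x hx => by simpa using hV₂add x hx 0 h0V₂
    have hnegmem : (Neg.neg ⁻¹' V₂ : Set F) ∈ 𝓝 (0:F) :=
      continuous_neg.continuousAt.preimage_mem_nhds (by simpa using hV₂)
    refine ⟨V₂ ∩ Neg.neg ⁻¹' V₂, Filter.inter_mem hV₂ hnegmem, ?_, ?_⟩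
    · rintro x ⟨hx1, hx2⟩
      exact ⟨hx2, by simpa using hx1⟩
    · rintro a ⟨ha, -⟩ b ⟨hb, -⟩ c ⟨hc, -⟩
      exact hV₁add _ (hV₂add a ha b hb) _ (hV₂₁ hc)
  choose! st hst_mem hst_symm hst_triple using step
  have hvc : ({v}ᶜ : Set F) ∈ 𝓝 (0:F) :=
    isOpen_compl_singleton.mem_nhds (by simpa using hv.symm)
  set W : ℕ → Set F := fun n => st^[n + 1] {v}ᶜ with hWdef
  have hW0 : W 0 = st {v}ᶜ := by simp [hWdef]
  have hW_succ : ∀ n, W (n + 1) = st (W n) := by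
    intro n
    simp only [hWdef]
    rw [Function.iterate_succ_apply']
  have hW_mem : ∀ n, W n ∈ 𝓝 (0:F) := by
    intro n; induction n with
    | zero => rw [hW0]; exact hst_mem _ hvc
    | succ n ih => rw [hW_succ]; exact hst_mem _ ih
  have hW_symm : ∀ n, ∀ x ∈ W n, -x ∈ W n := by
    intro n; cases n with
    | zero => rw [hW0]; exact hst_symm _ hvc
    | succ n => rw [hW_succ]; exact hst_symm _ (hW_mem n)
  have hW_triple : ∀ n, ∀ a ∈ W (n+1), ∀ b ∈ W (n+1), ∀ c ∈ W (n+1), a + b + c ∈ W n := by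
    intro n; rw [hW_succ]; exact hst_triple _ (hW_mem n)
  have hW_sub : ∀ n, W (n + 1) ⊆ W n := by
    intro n x hx
    have h0 : (0:F) ∈ W (n+1) := mem_of_mem_nhds (hW_mem (n+1))
    simpa using hW_triple n x hx 0 h0 0 h0
  have hW_anti : Antitone W := antitone_nat_of_succ_le hW_sub
  have hv0 : v ∉ W 0 := by
    intro hvW
    rw [hW0] at hvW
    have h0 : (0:F) ∈ W 0 := mem_of_mem_nhds (hW_mem 0)
    rw [hW0] at h0
    have : v + 0 + 0 ∈ ({v}ᶜ : Set F) := hst_triple _ hvc v hvW 0 h0 0 h0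
    simp at this
  -- the pre-distance
  set d : F → F → ℝ≥0 := fun x y => if h : ∃ n, y - x ∉ W n then (1/2 : ℝ≥0) ^ Nat.find h else 0
    with hd
  have find_eq : ∀ {p q : ℕ → Prop} [DecidablePred p] [DecidablePred q]
      (h : ∀ n, p n ↔ q n) (hp : ∃ n, p n) (hq : ∃ n, q n), Nat.find hp = Nat.find hq := by
    intro p q _ _ h hp hq
    exact le_antisymm (Nat.find_min' hp ((h _).2 (Nat.find_spec hq)))
      (Nat.find_min' hq ((h _).1 (Nat.find_spec hp)))
  have hWsymm_iff : ∀ (x y : F) (n : ℕ), y - x ∉ W n ↔ x - y ∉ W n := by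
    intro x y n
    constructor
    · intro hn hc
      exact hn (by simpa [neg_sub] using hW_symm n _ hc)
    · intro hn hc
      exact hn (by simpa [neg_sub] using hW_symm n _ hc)
  have hd_self : ∀ x, d x x = 0 := by
    intro x
    have hne : ¬∃ n, x - x ∉ W n := by
      rw [not_exists]
      intro n hn
      exact hn (by simpa using mem_of_mem_nhds (hW_mem n))
    simp only [hd]
    rw [dif_neg hne]
  have hd_symm : ∀ x y, d x y = d y x := by
    intro x y
    simp only [hd]
    by_cases hxy : ∃ n, y - x ∉ W n
    · have hyx : ∃ n, x - y ∉ W n := ⟨hxy.choose, (hWsymm_iff x y _).1 hxy.choose_spec⟩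
      rw [dif_pos hxy, dif_pos hyx, find_eq (hWsymm_iff x y) hxy hyx]
    · have hyx : ¬∃ n, x - y ∉ W n := fun ⟨n, hn⟩ => hxy ⟨n, (hWsymm_iff x y n).2 hn⟩
      rw [dif_neg hxy, dif_neg hyx]
  let I : PseudoMetricSpace F := PseudoMetricSpace.ofPreNNDist d hd_self hd_symm
  have hdist_le : ∀ x y, @dist F I.toDist x y ≤ d x y :=
    PseudoMetricSpace.dist_ofPreNNDist_le d hd_self hd_symm
  have hr : (1 / 2 : ℝ≥0) ∈ Set.Ioo (0 : ℝ≥0) 1 :=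
    ⟨half_pos one_pos, NNReal.half_lt_self one_ne_zero⟩
  have hle_d : ∀ {x y : F} {n : ℕ}, (1 / 2 : ℝ≥0) ^ n ≤ d x y ↔ y - x ∉ W n := by
    intro x y n
    simp only [hd]
    split_ifs with h
    · rw [(pow_right_strictAnti₀ hr.1 hr.2).le_iff_ge, Nat.find_le_iff]
      exact ⟨fun ⟨m, hmn, hm⟩ hn => hm (hW_anti hmn hn), fun h' => ⟨n, le_rfl, h'⟩⟩
    · push_neg at h
      simp only [h n, not_true_eq_false, iff_false, not_not.2 (h n), not_le]
      exact pow_pos hr.1 _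
  have hd_le : ∀ x y, ↑(d x y) ≤ 2 * @dist F I.toDist x y := by
    refine PseudoMetricSpace.le_two_mul_dist_ofPreNNDist _ _ _ fun x₁ x₂ x₃ x₄ => ?_
    by_cases H : ∃ n, x₄ - x₁ ∉ W n
    · refine (dif_pos H).trans_le ?_
      rw [← div_le_iff₀' zero_lt_two, ← mul_one_div (_ ^ _), ← pow_succ]
      simp only [le_max_iff, hle_d, ← not_and_or]
      rintro ⟨h₁₂, h₂₃, h₃₄⟩
      refine Nat.find_spec H ?_
      have hsum : (x₂ - x₁) + (x₃ - x₂) + (x₄ - x₃) = x₄ - x₁ := by abel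
      simpa [hsum] using hW_triple (Nat.find H) _ h₁₂ _ h₂₃ _ h₃₄
    · exact (dif_neg H).trans_le zero_le
  have hρcont : Continuous fun x : F => @dist F I.toDist 0 x := by
    rw [continuous_iff_continuousAt]
    intro x
    rw [ContinuousAt, Metric.tendsto_nhds]
    intro ε hε
    obtain ⟨n, hn⟩ : ∃ n : ℕ, ((1:ℝ)/2)^n < ε := exists_pow_lt_of_lt_one hε (by norm_num)
    have hnbhd : {y : F | y - x ∈ W n} ∈ 𝓝 x := by
      have hc : Continuous fun y : F => y - x := continuous_id.sub continuous_const
      have := hc.continuousAt (x := x) |>.preimage_mem_nhds (by simpa using hW_mem n)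
      exact this
    filter_upwards [hnbhd] with y hy
    have hdxy : @dist F I.toDist x y < ((1:ℝ)/2)^n := by
      have h1 : ¬ ((1/2:ℝ≥0)^n ≤ d x y) := by rw [hle_d]; simpa using hy
      have h2 : d x y < (1/2:ℝ≥0)^n := lt_of_not_ge h1
      calc @dist F I.toDist x y ≤ d x y := hdist_le x y
        _ < ((1:ℝ)/2)^n := by
            rw [show ((1:ℝ)/2)^n = ((((1/2 : ℝ≥0)^n : ℝ≥0)) : ℝ) by push_cast; ring]
            exact_mod_cast h2
    have htri : |@dist F I.toDist 0 y - @dist F I.toDist 0 x| ≤ @dist F I.toDist x y := by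
      rw [abs_le]
      constructor
      · have := @dist_triangle F I 0 y x
        have hc := @dist_comm F I y x
        linarith
      · have := @dist_triangle F I 0 x y
        linarith
    calc dist (@dist F I.toDist 0 y) (@dist F I.toDist 0 x)
        = |@dist F I.toDist 0 y - @dist F I.toDist 0 x| := Real.dist_eq _ _
      _ ≤ @dist F I.toDist x y := htri
      _ < ((1:ℝ)/2)^n := hdxy
      _ < ε := hn
  set ρ : F → ℝ := fun x => @dist F I.toDist 0 x with hρ
  have hρ0 : ρ 0 = 0 := @dist_self F I 0
  have hρv : (1:ℝ)/2 ≤ ρ v := by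
    have h1 : (1/2 : ℝ≥0) ^ 0 ≤ d 0 v := by
      rw [hle_d]
      simpa using hv0
    have h2 : (1:ℝ) ≤ (d 0 v : ℝ) := by exact_mod_cast by simpa using h1
    have h3 := hd_le 0 v
    rw [hρ]
    linarith
  have hρnonneg : ∀ x, 0 ≤ ρ x := fun x => @dist_nonneg F I 0 x
  have hρvpos : 0 < ρ v := lt_of_lt_of_le (by norm_num) hρv
  refine ⟨fun x => max 0 (min 1 (ρ x / ρ v)), ?_, ?_, ?_, ?_⟩
  · exact continuous_const.max (continuous_const.min (hρcont.div_const _))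
  · intro x
    constructor
    · exact le_max_left _ _
    · exact max_le (by norm_num) (min_le_left _ _)
  · simp [hρ0]
  · show max 0 (min 1 (ρ v / ρ v)) = 1
    rw [div_self hρvpos.ne', min_self]
    simp

lemma stoneCechUnit_ne_unit_zero {F : Type*} [AddCommGroup F] [TopologicalSpace F]
    [IsTopologicalAddGroup F] [T2Space F] {v : F} (hv : v ≠ 0) :
    stoneCechUnit v ≠ stoneCechUnit (0 : F) := by
  obtain ⟨g, hgc, hgr, hg0, hgv⟩ := tg_exists_sep hv
  intro heq
  haveI : CompactSpace (Set.Icc (0:ℝ) 1) := isCompact_iff_compactSpace.1 isCompact_Icc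
  have h1 := eq_if_stoneCechUnit_eq
    (f := fun x => (⟨g x, hgr x⟩ : Set.Icc (0:ℝ) 1)) (hgc.subtype_mk _) heq
  have h2 : g v = g 0 := congrArg Subtype.val h1
  rw [hgv, hg0] at h2
  exact one_ne_zero h2

lemma continuous_betaExt {Y F : Type*} [TopologicalSpace Y] [TopologicalSpace F]
    {g : Y → F} (hg : Continuous g) : Continuous (betaExt hg) :=
  continuous_stoneCechExtend _

lemma betaExt_const {Y F : Type*} [TopologicalSpace Y] [TopologicalSpace F]
    {g : Y → F} (hg : Continuous g) {w : F} (hgw : g = fun _ => w) (q : StoneCech Y) :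
    betaExt hg q = stoneCechUnit w := by
  subst hgw
  have hfun : betaExt hg = fun _ : StoneCech Y => stoneCechUnit w := by
    apply denseRange_stoneCechUnit.equalizer (continuous_betaExt hg) continuous_const
    funext y
    exact congrFun (stoneCechExtend_extends (continuous_stoneCechUnit.comp hg)) y
  exact congrFun hfun q


theorem extension_of_h {X Y E F : Type*}
    [TopologicalSpace X] [T2Space X] [CompletelyRegularSpace X]
    [TopologicalSpace Y] [T2Space Y] [CompletelyRegularSpace Y]
    [AddCommGroup E] [Module ℝ E] [TopologicalSpace E] [IsTopologicalAddGroup E]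
    [ContinuousSMul ℝ E] [T2Space E] [Nontrivial E]
    [AddCommGroup F] [Module ℝ F] [TopologicalSpace F] [IsTopologicalAddGroup F]
    [ContinuousSMul ℝ F] [T2Space F] [Nontrivial F]
    {AXE : Submodule ℝ (X → E)} {AYF : Submodule ℝ (Y → F)}
    (hAXE : AlmostNormallyMultiplicative X E AXE)
    (hAYF : AlmostNormallyMultiplicative Y F AYF)
    (T : AXE →ₗ[ℝ] AYF) (hTsurj : Function.Surjective T)
    (hT : PreservesCommonZeros (T : AXE → AYF))
    (Z : Set (StoneCech Y)) (hZ : Dense Z) (h : Z ≃ₜ X)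
    (hform : ∀ (y : Z) (f : AXE),
      betaExt (hAYF.1 _ (T f).2) (y : StoneCech Y) =
        betaExt (hAYF.1 _ (T ⟨fun _ => (f : X → E) (h y), hAXE.2.1 _⟩).2)
          (y : StoneCech Y)) :
    ∃ htilde : StoneCech Y → StoneCech X, Continuous htilde ∧
      ∀ y : Z, htilde (y : StoneCech Y) = stoneCechUnit (h y) := by
  classical
  have hval : IsDenseInducing ((↑) : Z → StoneCech Y) :=
    ⟨Topology.IsInducing.subtypeVal, hZ.denseRange_val⟩
  set g : Z → StoneCech X := fun z => stoneCechUnit (h z) with hgdef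
  have hgcont : Continuous g := continuous_stoneCechUnit.comp h.continuous
  obtain ⟨AX, hAXnorm, hmul⟩ := hAXE.2.2
  -- key uniqueness of cluster points
  have key : ∀ p : StoneCech Y, ∀ c₁ c₂ : StoneCech X,
      ClusterPt c₁ (Filter.map g (Filter.comap ((↑) : Z → StoneCech Y) (𝓝 p))) →
      ClusterPt c₂ (Filter.map g (Filter.comap ((↑) : Z → StoneCech Y) (𝓝 p))) →
      c₁ = c₂ := by
    intro p c₁ c₂ hc₁ hc₂
    by_contra hne
    obtain ⟨u, w, hu, hw, hc₁u, hc₂w, huw⟩ := t2_separation hne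
    obtain ⟨U₁, hU₁o, hc₁U₁, hU₁cl⟩ := normal_exists_closure_subset
      (isClosed_singleton (x := c₁)) hu (Set.singleton_subset_iff.2 hc₁u)
    obtain ⟨U₂, hU₂o, hc₂U₂, hU₂cl⟩ := normal_exists_closure_subset
      (isClosed_singleton (x := c₂)) hw (Set.singleton_subset_iff.2 hc₂w)
    set P : Set X := stoneCechUnit ⁻¹' U₁ with hP
    set Q : Set X := stoneCechUnit ⁻¹' U₂ with hQ
    have hPQ : Disjoint (closure (stoneCechUnit '' P)) (closure (stoneCechUnit '' Q)) := by
      refine huw.mono ?_ ?_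
      · exact (closure_mono (Set.image_preimage_subset _ _)).trans hU₁cl
      · exact (closure_mono (Set.image_preimage_subset _ _)).trans hU₂cl
    obtain ⟨φ, hφAX, hφP, hφQ⟩ := hAXnorm.2 P Q hPQ
    set G := Filter.comap ((↑) : Z → StoneCech Y) (𝓝 p) with hG
    have hval_tendsto : Filter.Tendsto ((↑) : Z → StoneCech Y) G (𝓝 p) := Filter.tendsto_comap
    set G₁ := G ⊓ Filter.principal (g ⁻¹' U₁) with hG₁
    set G₂ := G ⊓ Filter.principal (g ⁻¹' U₂) with hG₂
    haveI hG₁ne : G₁.NeBot := by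
      rw [← Filter.map_neBot_iff g, Filter.map_inf_principal_preimage]
      haveI := hc₁.neBot
      exact Filter.neBot_of_le (f := 𝓝 c₁ ⊓ Filter.map g G) (le_inf inf_le_right
        (inf_le_left.trans (Filter.le_principal_iff.2
          (hU₁o.mem_nhds (Set.singleton_subset_iff.1 hc₁U₁)))))
    haveI hG₂ne : G₂.NeBot := by
      rw [← Filter.map_neBot_iff g, Filter.map_inf_principal_preimage]
      haveI := hc₂.neBot
      exact Filter.neBot_of_le (f := 𝓝 c₂ ⊓ Filter.map g G) (le_inf inf_le_right
        (inf_le_left.trans (Filter.le_principal_iff.2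
          (hU₂o.mem_nhds (Set.singleton_subset_iff.1 hc₂U₂)))))
    -- every extension of T f vanishes at p
    have claim : ∀ f : AXE, betaExt (hAYF.1 _ (T f).2) p = stoneCechUnit (0 : F) := by
      intro f
      set f₁ : AXE := ⟨fun x => φ x • (f : X → E) x, hmul φ hφAX _ f.2⟩ with hf₁
      have hβ₁p : betaExt (hAYF.1 _ (T f₁).2) p = stoneCechUnit (0 : F) := by
        have hev : ∀ᶠ (z : Z) in G₁, betaExt (hAYF.1 _ (T f₁).2) (↑z) = stoneCechUnit (0:F) := by
          rw [hG₁, Filter.eventually_inf_principal]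
          refine Filter.Eventually.of_forall fun z hz => ?_
          have hzP : h z ∈ P := hz
          have hzero : (f₁ : X → E) (h z) = 0 := by
            show φ (h z) • (f : X → E) (h z) = 0
            rw [hφP _ hzP, zero_smul]
          rw [hform z f₁]
          refine betaExt_const _ ?_ _
          have hCeq : (⟨fun _ => (f₁ : X → E) (h z), hAXE.2.1 _⟩ : AXE) = 0 :=
            Subtype.ext (funext fun _ => hzero)
          rw [hCeq, map_zero]
          rfl
        have h1 : Filter.Tendsto (fun z : Z => betaExt (hAYF.1 _ (T f₁).2) (↑z)) G₁
            (𝓝 (betaExt (hAYF.1 _ (T f₁).2) p)) :=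
          ((continuous_betaExt _).tendsto p).comp (hval_tendsto.mono_left inf_le_left)
        have h2 : Filter.Tendsto (fun z : Z => betaExt (hAYF.1 _ (T f₁).2) (↑z)) G₁
            (𝓝 (stoneCechUnit (0:F))) :=
          Filter.Tendsto.congr' (Filter.EventuallyEq.symm hev) tendsto_const_nhds
        exact tendsto_nhds_unique h1 h2
      have hev2 : ∀ᶠ (z : Z) in G₂, betaExt (hAYF.1 _ (T f₁).2) (↑z) =
          betaExt (hAYF.1 _ (T f).2) (↑z) := by
        rw [hG₂, Filter.eventually_inf_principal]
        refine Filter.Eventually.of_forall fun z hz => ?_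
        have hzQ : h z ∈ Q := hz
        have hone : (f₁ : X → E) (h z) = (f : X → E) (h z) := by
          show φ (h z) • (f : X → E) (h z) = (f : X → E) (h z)
          rw [hφQ _ hzQ, one_smul]
        have hCeq : (⟨fun _ => (f₁ : X → E) (h z), hAXE.2.1 _⟩ : AXE)
            = (⟨fun _ => (f : X → E) (h z), hAXE.2.1 _⟩ : AXE) :=
          Subtype.ext (funext fun _ => hone)
        rw [hform z f₁, hform z f, hCeq]
      have h1 : Filter.Tendsto (fun z : Z => betaExt (hAYF.1 _ (T f₁).2) (↑z)) G₂
          (𝓝 (stoneCechUnit (0:F))) := by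
        rw [← hβ₁p]
        exact ((continuous_betaExt _).tendsto p).comp (hval_tendsto.mono_left inf_le_left)
      have h2 : Filter.Tendsto (fun z : Z => betaExt (hAYF.1 _ (T f).2) (↑z)) G₂
          (𝓝 (betaExt (hAYF.1 _ (T f).2) p)) :=
        ((continuous_betaExt _).tendsto p).comp (hval_tendsto.mono_left inf_le_left)
      have h3 : Filter.Tendsto (fun z : Z => betaExt (hAYF.1 _ (T f).2) (↑z)) G₂
          (𝓝 (stoneCechUnit (0:F))) :=
        Filter.Tendsto.congr' hev2 h1
      exact tendsto_nhds_unique h2 h3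
    obtain ⟨v, hv⟩ := exists_ne (0 : F)
    obtain ⟨f, hf⟩ := hTsurj ⟨fun _ => v, hAYF.2.1 v⟩
    have h1 := claim f
    have h2 : betaExt (hAYF.1 _ (T f).2) p = stoneCechUnit v := by
      refine betaExt_const _ ?_ _
      rw [hf]
    exact stoneCechUnit_ne_unit_zero hv (h2 ▸ h1)
  have hconv : ∀ p : StoneCech Y, ∃ c,
      Filter.Tendsto g (Filter.comap ((↑) : Z → StoneCech Y) (𝓝 p)) (𝓝 c) := by
    intro p
    haveI : (Filter.comap ((↑) : Z → StoneCech Y) (𝓝 p)).NeBot := hval.comap_nhds_neBot p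
    obtain ⟨c, hc⟩ := exists_clusterPt_of_compactSpace
      (Filter.map g (Filter.comap ((↑) : Z → StoneCech Y) (𝓝 p)))
    exact ⟨c, le_nhds_of_unique_clusterPt fun x hx => key p x c hx hc⟩
  exact ⟨hval.extend g, hval.continuous_extend hconv, fun y => hval.extend_eq hgcont y⟩
end

section
/- Let T : A(X,E) → A(Y,F) be a vector space isomorphism (linear bijection) that preserves common zeros, where A(X,E) and A(Y,F) are almost normally multiplicative vector subspaces of C(X,E) and C(Y,F). Then there are dense subsets Z ⊆ βY and W ⊆ βX and homeomorphisms h : Z → X and k : W → Y such that: (i) the map from Z ∪ ι_Y(Y) to ι_X(X) ∪ W which sends y ∈ Z to ι_X(h(y)) and ι_Y(y) (y ∈ Y) to k^{-1}(y) is well defined (the two prescriptions agree on Z ∩ ι_Y(Y)) and is a homeomorphism; (ii) for all f ∈ A(X,E) and y ∈ Z, (Tf)^β(y) = (T𝐮)^β(y) where u = f(h(y)); and (iii) for all g ∈ A(Y,F) and x ∈ W, (T^{-1}g)^β(x) = (T^{-1}𝐯)^β(x) where v = g(k(x)). -/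
open Set Filter Topology

namespace Thm2Aux

open Set

/-- In a compact Hausdorff (hence regular) space, an open neighborhood contains the closure of
a smaller open neighborhood. -/
theorem nested {K : Type*} [TopologicalSpace K] [CompactSpace K] [T2Space K]
    {U : Set K} {η : K} (hU : IsOpen U) (hη : η ∈ U) :
    ∃ V : Set K, IsOpen V ∧ η ∈ V ∧ closure V ⊆ U := by
  obtain ⟨t, ht, htc, hts⟩ := exists_mem_nhds_isClosed_subset (hU.mem_nhds hη)
  exact ⟨interior t, isOpen_interior, mem_interior_iff_mem_nhds.mpr ht,
    (closure_minimal interior_subset htc).trans hts⟩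

theorem extend_unit {Y K : Type*} [TopologicalSpace Y] [TopologicalSpace K]
    [T2Space K] [CompactSpace K] {g : Y → K} (hg : Continuous g) (y : Y) :
    stoneCechExtend hg (stoneCechUnit y) = g y :=
  congrFun (stoneCechExtend_extends hg) y

theorem betaExt_unit {Y F : Type*} [TopologicalSpace Y] [TopologicalSpace F]
    {g : Y → F} (hg : Continuous g) (y : Y) :
    betaExt hg (stoneCechUnit y) = stoneCechUnit (g y) :=
  congrFun (stoneCechExtend_extends (continuous_stoneCechUnit.comp hg)) y

theorem continuous_betaExt {Y F : Type*} [TopologicalSpace Y] [TopologicalSpace F]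
    {g : Y → F} (hg : Continuous g) : Continuous (betaExt hg) :=
  continuous_stoneCechExtend _

/-- The Stone–Čech unit is an embedding for completely regular Hausdorff spaces. -/
theorem unit_isEmbedding {X : Type*} [TopologicalSpace X] [T2Space X]
    [CompletelyRegularSpace X] :
    IsEmbedding (stoneCechUnit : X → StoneCech X) := by
  have hT35 : T35Space X := ⟨⟩
  refine ⟨isInducing_iff_nhds.mpr fun x => le_antisymm ?_ ?_,
    injective_stoneCechUnit_of_t35Space⟩
  · exact Filter.tendsto_iff_comap.mp continuous_stoneCechUnit.continuousAt
  · rw [(nhds_basis_opens x).ge_iff]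
    rintro U ⟨hxU, hUo⟩
    obtain ⟨φ, hφc, hφx, hφ1⟩ := CompletelyRegularSpace.completely_regular x Uᶜ
      hUo.isClosed_compl (by simp [hxU])
    refine Filter.mem_comap.mpr ⟨stoneCechExtend hφc ⁻¹' ({1}ᶜ), ?_, ?_⟩
    · refine IsOpen.mem_nhds (isOpen_compl_singleton.preimage (continuous_stoneCechExtend _)) ?_
      show stoneCechExtend hφc (stoneCechUnit x) ∈ ({1}ᶜ : Set unitInterval)
      rw [extend_unit hφc x, hφx]
      exact fun h => one_ne_zero (congrArg Subtype.val h.symm)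
    · intro x' hx'
      by_contra hU'
      apply (show stoneCechExtend hφc (stoneCechUnit x') ≠ 1 from hx')
      rw [extend_unit hφc x']
      exact hφ1 hU'

section Main

variable {X Y E F : Type*}
  [TopologicalSpace X] [T2Space X] [CompletelyRegularSpace X]
  [TopologicalSpace Y] [T2Space Y] [CompletelyRegularSpace Y]
  [AddCommGroup E] [Module ℝ E] [TopologicalSpace E] [IsTopologicalAddGroup E]
  [ContinuousSMul ℝ E] [T2Space E] [Nontrivial E]
  [AddCommGroup F] [Module ℝ F] [TopologicalSpace F] [IsTopologicalAddGroup F]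
  [ContinuousSMul ℝ F] [T2Space F] [Nontrivial F]
  {AXE : Submodule ℝ (X → E)} {AYF : Submodule ℝ (Y → F)}

theorem symm_pcz (T : AXE ≃ₗ[ℝ] AYF) (hT : PreservesCommonZeros (T : AXE → AYF)) :
    PreservesCommonZeros (T.symm : AYF → AXE) := by
  intro k g
  have h := hT k fun i => T.symm (g i)
  simp only [LinearEquiv.apply_symm_apply] at h
  exact h.symm

theorem notzero (T : AXE ≃ₗ[ℝ] AYF) (hT : PreservesCommonZeros (T : AXE → AYF))
    {f : AXE} (hf : ∀ x, (f : X → E) x ≠ 0) (y : Y) : (T f : Y → F) y ≠ 0 := by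
  intro h0
  obtain ⟨x, hx⟩ := (hT 0 fun _ => f).mpr ⟨y, Set.mem_iInter.mpr fun _ => h0⟩
  exact hf x (Set.mem_iInter.mp hx 0)

theorem zx_nonempty (T : AXE ≃ₗ[ℝ] AYF) (hT : PreservesCommonZeros (T : AXE → AYF)) (x : X) :
    (Zx (T : AXE → AYF) x).Nonempty := by
  classical
  by_contra hne
  rw [Set.not_nonempty_iff_eq_empty] at hne
  have hrw : Zx (T : AXE → AYF) x
      = ⋂ p : {f : AXE // (f : X → E) x = 0},
          closure (stoneCechUnit '' zeroSet ((T p.1 : Y → F))) := by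
    ext z
    simp only [Zx, Set.mem_iInter, Subtype.forall]
  rw [hrw] at hne
  obtain ⟨u, hu⟩ := isCompact_univ.elim_finite_subfamily_closed _
    (fun _ : {f : AXE // (f : X → E) x = 0} => isClosed_closure)
    (by rw [Set.univ_inter, hne])
  set d : {f : AXE // (f : X → E) x = 0} := ⟨0, by simp [Submodule.coe_zero, Pi.zero_apply]⟩
    with hd
  set Ff : Fin (u.card + 1) → AXE := fun i => (u.toList.getD i d).1 with hFf
  have hx : x ∈ ⋂ i, zeroSet ((Ff i : X → E)) :=
    Set.mem_iInter.mpr fun i => (u.toList.getD (i : ℕ) d).2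
  obtain ⟨y, hy⟩ := (hT u.card Ff).mp ⟨x, hx⟩
  have hmem : stoneCechUnit y ∈ Set.univ ∩
      ⋂ p ∈ u, closure (stoneCechUnit '' zeroSet ((T p.1 : Y → F))) := by
    refine ⟨trivial, Set.mem_iInter₂.mpr fun p hp => ?_⟩
    obtain ⟨j, hj⟩ := List.mem_iff_get.mp (Finset.mem_toList.mpr hp)
    have hjlen : (j : ℕ) < u.toList.length := j.2
    have hjcard : (j : ℕ) < u.card + 1 := by
      have h2 : u.toList.length = u.card := Finset.length_toList u
      omega
    have hFfj : Ff ⟨(j : ℕ), hjcard⟩ = p.1 := by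
      have h1 : u.toList.getD (((⟨(j : ℕ), hjcard⟩ : Fin (u.card + 1)) : ℕ)) d = p := by
        show u.toList.getD ((j : ℕ)) d = p
        rw [List.getD_eq_get _ _ j]
        exact hj
      simp only [hFf]
      rw [h1]
    have hyj := Set.mem_iInter.mp hy ⟨(j : ℕ), hjcard⟩
    rw [hFfj] at hyj
    exact subset_closure ⟨y, hyj, rfl⟩
  rw [hu] at hmem
  exact hmem

/-- The support-like map `μ : X → βY`, a choice of point in `Z_x`. -/
noncomputable def mu (T : AXE ≃ₗ[ℝ] AYF) (hT : PreservesCommonZeros (T : AXE → AYF))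
    (x : X) : StoneCech Y :=
  (zx_nonempty T hT x).choose

theorem mu_mem_closure (T : AXE ≃ₗ[ℝ] AYF) (hT : PreservesCommonZeros (T : AXE → AYF))
    {f : AXE} {x : X} (hf : (f : X → E) x = 0) :
    mu T hT x ∈ closure (stoneCechUnit '' zeroSet ((T f : Y → F))) := by
  have h := (zx_nonempty T hT x).choose_spec
  simp only [Zx, Set.mem_iInter] at h
  exact h f hf

theorem star (T : AXE ≃ₗ[ℝ] AYF) (hT : PreservesCommonZeros (T : AXE → AYF))
    {f g : AXE} {x : X} (hfg : (f : X → E) x = (g : X → E) x)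
    {cf : Continuous ((T f : AYF) : Y → F)} {cg : Continuous ((T g : AYF) : Y → F)} :
    betaExt cf (mu T hT x) = betaExt cg (mu T hT x) := by
  have h0 : ((f - g : AXE) : X → E) x = 0 := by
    simp [Submodule.coe_sub, Pi.sub_apply, hfg]
  have hmu := mu_mem_closure T hT h0
  have heq : Set.EqOn (betaExt cf) (betaExt cg)
      (stoneCechUnit '' zeroSet ((T (f - g) : AYF) : Y → F)) := by
    rintro _ ⟨y, hy, rfl⟩
    have hy' : ((T (f - g) : AYF) : Y → F) y = 0 := hy
    rw [map_sub] at hy'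
    have h1 : ((T f : AYF) : Y → F) y = ((T g : AYF) : Y → F) y := by
      have h2 : ((T f : AYF) : Y → F) y - ((T g : AYF) : Y → F) y = 0 := by
        simpa [Submodule.coe_sub, Pi.sub_apply] using hy'
      exact sub_eq_zero.mp h2
    rw [betaExt_unit, betaExt_unit, h1]
  exact heq.closure (continuous_betaExt cf) (continuous_betaExt cg) hmu

theorem lemV (hAXE : AlmostNormallyMultiplicative X E AXE)
    (T : AXE ≃ₗ[ℝ] AYF) (hT : PreservesCommonZeros (T : AXE → AYF))
    {f : AXE} {x : X} {O : Set (StoneCech Y)} (hO : IsOpen O) (hmem : mu T hT x ∈ O)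
    (hZ : ∀ y : Y, stoneCechUnit y ∈ O → ((T f : AYF) : Y → F) y = 0) :
    (f : X → E) x = 0 := by
  by_contra hv
  set c : AXE := ⟨fun _ => (f : X → E) x, hAXE.2.1 _⟩ with hc
  have h0 : ((f - c : AXE) : X → E) x = 0 := by
    simp [hc, Submodule.coe_sub, Pi.sub_apply]
  have hmu := mu_mem_closure T hT h0
  have hsub : stoneCechUnit '' zeroSet ((T (f - c) : AYF) : Y → F) ⊆ Oᶜ := by
    rintro _ ⟨y, hy, rfl⟩ hyO
    have hy' : ((T (f - c) : AYF) : Y → F) y = 0 := hy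
    rw [map_sub] at hy'
    have h1 : ((T f : AYF) : Y → F) y = ((T c : AYF) : Y → F) y := by
      have h2 : ((T f : AYF) : Y → F) y - ((T c : AYF) : Y → F) y = 0 := by
        simpa [Submodule.coe_sub, Pi.sub_apply] using hy'
      exact sub_eq_zero.mp h2
    have h2 : ((T c : AYF) : Y → F) y ≠ 0 := notzero T hT (fun _ => hv) y
    exact h2 (h1 ▸ hZ y hyO)
  exact (closure_minimal hsub hO.isClosed_compl hmu) hmem

theorem gadget (hAYF : AlmostNormallyMultiplicative Y F AYF)
    {AY : Submodule ℝ (Y → ℝ)} (hAY : AlmostNormal Y AY)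
    (hmul : ∀ φ ∈ AY, ∀ g ∈ AYF, (fun y => φ y • g y) ∈ AYF)
    (g₀ : AYF) (hg₀ : ∀ y, (g₀ : Y → F) y ≠ 0)
    {η : StoneCech Y} {U : Set (StoneCech Y)} (hU : IsOpen U) (hη : η ∈ U) :
    ∃ (g : AYF) (U'' V : Set (StoneCech Y)), IsOpen U'' ∧ IsOpen V ∧ η ∈ U'' ∧ Uᶜ ⊆ V ∧
      (∀ y, stoneCechUnit y ∈ U'' → (g : Y → F) y = 0) ∧
      (∀ y, (g : Y → F) y = 0 → stoneCechUnit y ∈ U) ∧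
      (∀ y, stoneCechUnit y ∈ V → (g : Y → F) y = (g₀ : Y → F) y) := by
  obtain ⟨U', hU'o, hηU', hclU'⟩ := nested hU hη
  obtain ⟨U'', hU''o, hηU'', hclU''⟩ := nested hU'o hηU'
  set P : Set Y := stoneCechUnit ⁻¹' U'' with hP
  set Q : Set Y := stoneCechUnit ⁻¹' (closure U')ᶜ with hQ
  have hdisj : Disjoint (closure (stoneCechUnit '' P)) (closure (stoneCechUnit '' Q)) := by
    have h1 : closure (stoneCechUnit '' P) ⊆ closure U'' :=
      closure_mono (Set.image_preimage_subset _ _)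
    have h2 : closure (stoneCechUnit '' Q) ⊆ closure ((closure U')ᶜ) :=
      closure_mono (Set.image_preimage_subset _ _)
    have hd : Disjoint U' ((closure U')ᶜ) :=
      Set.disjoint_left.mpr fun a haU' ha => ha (subset_closure haU')
    exact ((hd.closure_right hU'o).mono_left hclU'').mono h1 h2
  obtain ⟨ψ, hψmem, hψ0, hψ1⟩ := hAY.2 P Q hdisj
  refine ⟨⟨fun y => ψ y • (g₀ : Y → F) y, hmul ψ hψmem _ g₀.2⟩, U'', (closure U')ᶜ,
    hU''o, isClosed_closure.isOpen_compl, hηU'',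
    fun z hz hzC => hz (hclU' hzC), ?_, ?_, ?_⟩
  · intro y hy
    show ψ y • (g₀ : Y → F) y = 0
    rw [hψ0 y hy, zero_smul]
  · intro y hy
    by_contra hyU
    have hyQ : y ∈ Q := fun hmem => hyU (hclU' hmem)
    have : ψ y • (g₀ : Y → F) y = 0 := hy
    rw [hψ1 y hyQ, one_smul] at this
    exact hg₀ y this
  · intro y hy
    show ψ y • (g₀ : Y → F) y = (g₀ : Y → F) y
    rw [hψ1 y hy, one_smul]

theorem mu_cont (hAXE : AlmostNormallyMultiplicative X E AXE)
    (hAYF : AlmostNormallyMultiplicative Y F AYF)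
    (T : AXE ≃ₗ[ℝ] AYF) (hT : PreservesCommonZeros (T : AXE → AYF)) :
    Continuous (mu T hT) := by
  obtain ⟨u₀, hu₀⟩ := exists_ne (0 : E)
  obtain ⟨AY, hAY, hmulY⟩ := hAYF.2.2
  rw [continuous_iff_continuousAt]
  intro x
  rw [ContinuousAt, Filter.tendsto_def]
  intro M hM
  obtain ⟨U, hUM, hUo, hxU⟩ := mem_nhds_iff.mp hM
  set c : AXE := ⟨fun _ => u₀, hAXE.2.1 u₀⟩ with hcdef
  have hg₀ : ∀ y, ((T c : AYF) : Y → F) y ≠ 0 := notzero T hT (fun _ => hu₀)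
  obtain ⟨g, U'', V, hU''o, hVo, hηU'', hUV, ha, hb, hc'⟩ :=
    gadget hAYF hAY hmulY (T c) hg₀ hUo hxU
  have hTf : T (T.symm g) = g := T.apply_symm_apply g
  have key : ∀ x', ((T.symm g : AXE) : X → E) x' ≠ u₀ → mu T hT x' ∈ U := by
    intro x' hne
    by_contra hout
    apply hne
    have h0 : ((c - T.symm g : AXE) : X → E) x' = 0 := by
      refine lemV hAXE T hT hVo (hUV hout) ?_
      intro y hyV
      rw [map_sub, hTf]
      have := hc' y hyV
      simp [Submodule.coe_sub, Pi.sub_apply, this]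
    have : u₀ - ((T.symm g : AXE) : X → E) x' = 0 := by
      simpa [hcdef, Submodule.coe_sub, Pi.sub_apply] using h0
    have := sub_eq_zero.mp this
    exact this.symm
  have hfc : Continuous ((T.symm g : AXE) : X → E) := hAXE.1 _ (T.symm g).2
  have hNo : IsOpen {x' | ((T.symm g : AXE) : X → E) x' ≠ u₀} :=
    isOpen_compl_singleton.preimage hfc
  have hfx : ((T.symm g : AXE) : X → E) x = 0 :=
    lemV hAXE T hT hU''o hηU'' (fun y hy => by rw [hTf]; exact ha y hy)
  refine Filter.mem_of_superset (hNo.mem_nhds ?_) ?_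
  · show ((T.symm g : AXE) : X → E) x ≠ u₀
    rw [hfx]; exact fun h => hu₀ h.symm
  · intro x' hx'
    exact hUM (key x' hx')

theorem rel (hAXE : AlmostNormallyMultiplicative X E AXE)
    (T : AXE ≃ₗ[ℝ] AYF) (hT : PreservesCommonZeros (T : AXE → AYF))
    {ν' : Y → StoneCech X} (hν' : Continuous ν')
    (hprop : ∀ (p : AXE) (y : Y), ((T p : AYF) : Y → F) y = 0 →
      ν' y ∈ closure (stoneCechUnit '' zeroSet ((p : X → E))))
    (x : X) : stoneCechExtend hν' (mu T hT x) = stoneCechUnit x := by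
  have main : ∀ A : Set (StoneCech X), IsOpen A → stoneCechUnit x ∈ A →
      stoneCechExtend hν' (mu T hT x) ∈ closure A := by
    intro A hA hxA
    obtain ⟨AX, hAX, hmulX⟩ := hAXE.2.2
    obtain ⟨u₀, hu₀⟩ := exists_ne (0 : E)
    set c : AXE := ⟨fun _ => u₀, hAXE.2.1 u₀⟩ with hcdef
    have hc0 : ∀ x', (c : X → E) x' ≠ 0 := fun _ => hu₀
    obtain ⟨p, A'', V, hA''o, hVo, hmemA'', hAV, ha, hb, hc'⟩ :=
      gadget hAXE hAX hmulX c hc0 hA hxA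
    have hpx : (p : X → E) x = 0 := ha x hmemA''
    have hmu : mu T hT x ∈ closure (stoneCechUnit '' zeroSet ((T p : AYF) : Y → F)) :=
      mu_mem_closure T hT hpx
    have hsub : ∀ y ∈ zeroSet ((T p : AYF) : Y → F), ν' y ∈ closure A := by
      intro y hy
      have h1 := hprop p y hy
      have h2 : stoneCechUnit '' zeroSet ((p : X → E)) ⊆ A := by
        rintro _ ⟨x', hx', rfl⟩
        exact hb x' hx'
      exact closure_mono h2 h1
    have h3 : stoneCechExtend hν' (mu T hT x) ∈
        closure (stoneCechExtend hν' '' (stoneCechUnit '' zeroSet ((T p : AYF) : Y → F))) :=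
      image_closure_subset_closure_image (continuous_stoneCechExtend hν') ⟨_, hmu, rfl⟩
    have h4 : stoneCechExtend hν' '' (stoneCechUnit '' zeroSet ((T p : AYF) : Y → F))
        ⊆ closure A := by
      rintro _ ⟨_, ⟨y, hy, rfl⟩, rfl⟩
      rw [extend_unit hν' y]
      exact hsub y hy
    have h5 := closure_mono h4 h3
    rwa [closure_closure] at h5
  by_contra hne
  obtain ⟨B, A, hBo, hAo, hB, hxA, hABdisj⟩ :=
    t2_separation (show stoneCechExtend hν' (mu T hT x) ≠ stoneCechUnit x from hne)
  obtain ⟨V, hVo, hxV, hclV⟩ := nested hAo hxA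
  have := main V hVo hxV
  have hmemA : stoneCechExtend hν' (mu T hT x) ∈ A := hclV this
  exact Set.disjoint_left.mp hABdisj hB hmemA

theorem mu_dense (hAXE : AlmostNormallyMultiplicative X E AXE)
    (hAYF : AlmostNormallyMultiplicative Y F AYF)
    (T : AXE ≃ₗ[ℝ] AYF) (hT : PreservesCommonZeros (T : AXE → AYF)) :
    Dense (Set.range (mu T hT)) := by
  by_contra hd
  simp only [Dense, not_forall] at hd
  obtain ⟨η, hη⟩ := hd
  obtain ⟨u₀, hu₀⟩ := exists_ne (0 : E)
  obtain ⟨AY, hAY, hmulY⟩ := hAYF.2.2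
  set c : AXE := ⟨fun _ => u₀, hAXE.2.1 u₀⟩ with hcdef
  have hg₀ : ∀ y, ((T c : AYF) : Y → F) y ≠ 0 := notzero T hT (fun _ => hu₀)
  have hUo : IsOpen (closure (Set.range (mu T hT)))ᶜ := isClosed_closure.isOpen_compl
  obtain ⟨g, U'', V, hU''o, hVo, hηU'', hUV, ha, hb, hc'⟩ :=
    gadget hAYF hAY hmulY (T c) hg₀ hUo hη
  have hTf : T (T.symm g) = g := T.apply_symm_apply g
  have hall : ∀ x', ((c - T.symm g : AXE) : X → E) x' = 0 := by
    intro x'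
    refine lemV hAXE T hT hVo (hUV ?_) ?_
    · show mu T hT x' ∉ (closure (Set.range (mu T hT)))ᶜ
      exact fun h => h (subset_closure (Set.mem_range_self x'))
    · intro y hyV
      rw [map_sub, hTf]
      have := hc' y hyV
      simp [Submodule.coe_sub, Pi.sub_apply, this]
  have hceq : c - T.symm g = 0 := by
    ext x'
    exact hall x'
  have hgeq : g = T c := by
    have h1 : T.symm g = c := by
      have := sub_eq_zero.mp hceq
      exact this.symm
    rw [← h1, hTf]
  obtain ⟨y, hy⟩ := denseRange_stoneCechUnit.exists_mem_open hU''o ⟨η, hηU''⟩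
  apply hg₀ y
  rw [← hgeq]
  exact ha y hy

end Main

end Thm2Aux

theorem thm2 {X Y E F : Type*}
    [TopologicalSpace X] [T2Space X] [CompletelyRegularSpace X]
    [TopologicalSpace Y] [T2Space Y] [CompletelyRegularSpace Y]
    [AddCommGroup E] [Module ℝ E] [TopologicalSpace E] [IsTopologicalAddGroup E]
    [ContinuousSMul ℝ E] [T2Space E] [Nontrivial E]
    [AddCommGroup F] [Module ℝ F] [TopologicalSpace F] [IsTopologicalAddGroup F]
    [ContinuousSMul ℝ F] [T2Space F] [Nontrivial F]
    {AXE : Submodule ℝ (X → E)} {AYF : Submodule ℝ (Y → F)}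
    (hAXE : AlmostNormallyMultiplicative X E AXE)
    (hAYF : AlmostNormallyMultiplicative Y F AYF)
    (T : AXE ≃ₗ[ℝ] AYF)
    (hT : PreservesCommonZeros (T : AXE → AYF)) :
    ∃ (Z : Set (StoneCech Y)) (W : Set (StoneCech X)) (h : Z ≃ₜ X) (k : W ≃ₜ Y),
      Dense Z ∧ Dense W ∧
      -- (i) `h ∪ k⁻¹ : Z ∪ ι_Y(Y) → ι_X(X) ∪ W` is a well-defined homeomorphism
      (∃ H : (Z ∪ Set.range (stoneCechUnit : Y → StoneCech Y) : Set (StoneCech Y)) ≃ₜ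
          (Set.range (stoneCechUnit : X → StoneCech X) ∪ W : Set (StoneCech X)),
        (∀ (y : StoneCech Y) (hy : y ∈ Z),
          (H ⟨y, Set.mem_union_left _ hy⟩ : StoneCech X) = stoneCechUnit (h ⟨y, hy⟩)) ∧
        (∀ y : Y,
          (H ⟨stoneCechUnit y, Set.mem_union_right _ (Set.mem_range_self y)⟩ : StoneCech X) =
            (k.symm y : StoneCech X))) ∧
      -- (ii) the formula for `T`
      (∀ (f : AXE) (y : Z),
        betaExt (hAYF.1 _ (T f).2) (y : StoneCech Y) =
          betaExt (hAYF.1 _ (T ⟨fun _ => (f : X → E) (h y), hAXE.2.1 _⟩).2)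
            (y : StoneCech Y)) ∧
      -- (iii) the formula for `T⁻¹`
      (∀ (g : AYF) (x : W),
        betaExt (hAXE.1 _ (T.symm g).2) (x : StoneCech X) =
          betaExt (hAXE.1 _ (T.symm ⟨fun _ => (g : Y → F) (k x), hAYF.2.1 _⟩).2)
            (x : StoneCech X)) := by
  classical
  have hT' : PreservesCommonZeros (T.symm : AYF → AXE) := Thm2Aux.symm_pcz T hT
  set μ : X → StoneCech Y := Thm2Aux.mu T hT with hμdef
  set ν : Y → StoneCech X := Thm2Aux.mu T.symm hT' with hνdef
  have hμc : Continuous μ := Thm2Aux.mu_cont hAXE hAYF T hT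
  have hνc : Continuous ν := Thm2Aux.mu_cont hAYF hAXE T.symm hT'
  have hrel1 : ∀ x, stoneCechExtend hνc (μ x) = stoneCechUnit x := by
    refine Thm2Aux.rel hAXE T hT hνc ?_
    intro p y hpy
    have h := Thm2Aux.mu_mem_closure T.symm hT' (f := T p) (x := y) hpy
    rwa [T.symm_apply_apply] at h
  have hrel2 : ∀ y, stoneCechExtend hμc (ν y) = stoneCechUnit y := by
    refine Thm2Aux.rel hAYF T.symm hT' hμc ?_
    intro p x hpx
    have h := Thm2Aux.mu_mem_closure T hT (f := T.symm p) (x := x) hpx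
    rwa [T.apply_symm_apply] at h
  have hμemb : IsEmbedding μ := by
    have hcomp : stoneCechExtend hνc ∘ μ = stoneCechUnit := funext hrel1
    have h1 : IsEmbedding (stoneCechExtend hνc ∘ μ) := by
      rw [hcomp]; exact Thm2Aux.unit_isEmbedding
    exact IsEmbedding.of_comp hμc (continuous_stoneCechExtend hνc) h1
  have hνemb : IsEmbedding ν := by
    have hcomp : stoneCechExtend hμc ∘ ν = stoneCechUnit := funext hrel2
    have h1 : IsEmbedding (stoneCechExtend hμc ∘ ν) := by
      rw [hcomp]; exact Thm2Aux.unit_isEmbedding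
    exact IsEmbedding.of_comp hνc (continuous_stoneCechExtend hμc) h1
  set eX : X ≃ₜ (Set.range μ) := hμemb.toHomeomorph with heX
  set eY : Y ≃ₜ (Set.range ν) := hνemb.toHomeomorph with heY
  have hmemH : ∀ z : StoneCech Y,
      z ∈ Set.range μ ∪ Set.range (stoneCechUnit : Y → StoneCech Y) →
      stoneCechExtend hνc z ∈ Set.range (stoneCechUnit : X → StoneCech X) ∪ Set.range ν := by
    rintro z (⟨x, rfl⟩ | ⟨y, rfl⟩)
    · exact Or.inl ⟨x, (hrel1 x).symm⟩
    · exact Or.inr ⟨y, (Thm2Aux.extend_unit hνc y).symm⟩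
  have hmemG : ∀ w : StoneCech X,
      w ∈ Set.range (stoneCechUnit : X → StoneCech X) ∪ Set.range ν →
      stoneCechExtend hμc w ∈ Set.range μ ∪ Set.range (stoneCechUnit : Y → StoneCech Y) := by
    rintro w (⟨x, rfl⟩ | ⟨y, rfl⟩)
    · exact Or.inl ⟨x, (Thm2Aux.extend_unit hμc x).symm⟩
    · exact Or.inr ⟨y, (hrel2 y).symm⟩
  have hGH : ∀ z, z ∈ Set.range μ ∪ Set.range (stoneCechUnit : Y → StoneCech Y) →
      stoneCechExtend hμc (stoneCechExtend hνc z) = z := by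
    rintro z (⟨x, rfl⟩ | ⟨y, rfl⟩)
    · rw [hrel1 x]; exact Thm2Aux.extend_unit hμc x
    · rw [Thm2Aux.extend_unit hνc y]; exact hrel2 y
  have hHG : ∀ w, w ∈ Set.range (stoneCechUnit : X → StoneCech X) ∪ Set.range ν →
      stoneCechExtend hνc (stoneCechExtend hμc w) = w := by
    rintro w (⟨x, rfl⟩ | ⟨y, rfl⟩)
    · rw [Thm2Aux.extend_unit hμc x]; exact hrel1 x
    · rw [hrel2 y]; exact Thm2Aux.extend_unit hνc y
  let H : (Set.range μ ∪ Set.range (stoneCechUnit : Y → StoneCech Y) : Set (StoneCech Y)) ≃ₜ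
      (Set.range (stoneCechUnit : X → StoneCech X) ∪ Set.range ν : Set (StoneCech X)) :=
    { toFun := fun z => ⟨stoneCechExtend hνc z.1, hmemH z.1 z.2⟩
      invFun := fun w => ⟨stoneCechExtend hμc w.1, hmemG w.1 w.2⟩
      left_inv := fun z => Subtype.ext (hGH z.1 z.2)
      right_inv := fun w => Subtype.ext (hHG w.1 w.2)
      continuous_toFun := Continuous.subtype_mk
        ((continuous_stoneCechExtend hνc).comp continuous_subtype_val) _
      continuous_invFun := Continuous.subtype_mk
        ((continuous_stoneCechExtend hμc).comp continuous_subtype_val) _ }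
  refine ⟨Set.range μ, Set.range ν, eX.symm, eY.symm,
    Thm2Aux.mu_dense hAXE hAYF T hT, Thm2Aux.mu_dense hAYF hAXE T.symm hT',
    ⟨H, ?_, ?_⟩, ?_, ?_⟩
  · intro y hy
    show stoneCechExtend hνc y = stoneCechUnit (eX.symm ⟨y, hy⟩)
    have h1 : μ (eX.symm ⟨y, hy⟩) = y :=
      Equiv.apply_ofInjective_symm hμemb.injective ⟨y, hy⟩
    refine Eq.trans ?_ (hrel1 (eX.symm ⟨y, hy⟩))
    rw [h1]
  · intro y
    show stoneCechExtend hνc (stoneCechUnit y) = ((eY.symm.symm y : Set.range ν) : StoneCech X)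
    rw [Thm2Aux.extend_unit hνc y]
    rfl
  · intro f y
    have h1 : μ (eX.symm y) = (y : StoneCech Y) :=
      Equiv.apply_ofInjective_symm hμemb.injective y
    have h2 := Thm2Aux.star T hT
      (f := f) (g := ⟨fun _ => (f : X → E) (eX.symm y), hAXE.2.1 _⟩)
      (x := eX.symm y) rfl
      (cf := hAYF.1 _ (T f).2)
      (cg := hAYF.1 _ (T ⟨fun _ => (f : X → E) (eX.symm y), hAXE.2.1 _⟩).2)
    rw [← hμdef, h1] at h2
    exact h2
  · intro g x
    have h1 : ν (eY.symm x) = (x : StoneCech X) :=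
      Equiv.apply_ofInjective_symm hνemb.injective x
    have h2 := Thm2Aux.star T.symm hT'
      (f := g) (g := ⟨fun _ => (g : Y → F) (eY.symm x), hAYF.2.1 _⟩)
      (x := eY.symm x) rfl
      (cf := hAXE.1 _ (T.symm g).2)
      (cg := hAXE.1 _ (T.symm ⟨fun _ => (g : Y → F) (eY.symm x), hAYF.2.1 _⟩).2)
    rw [← hνdef, h1] at h2
    exact h2
end

section
/- Let T : C(X,E) → C(Y,F) be a surjective linear map that preserves common zeros. Then the set Z := ⋃_{x∈X} Z_x (where Z_x := ⋂_{f ∈ C(X,E), f(x)=0} cl_{βY}(ι_Y(Z(Tf)))) is contained in the Hewitt realcompactification υY ⊆ βY. -/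
open Set Filter Topology

/-- A map `T` between `C(X,E)` and `C(Y,F)` preserves common zeros if for every `k ∈ ℕ` and
every finite family `f₁, …, f_k` in `C(X,E)`, the zero sets of the `fᵢ` have a common point
iff the zero sets of the `T fᵢ` do. -/
def PreservesCommonZerosC {X Y E F : Type*} [TopologicalSpace X] [TopologicalSpace Y]
    [TopologicalSpace E] [Zero E] [TopologicalSpace F] [Zero F]
    (T : C(X, E) → C(Y, F)) : Prop :=
  ∀ (k : ℕ) (f : Fin (k + 1) → C(X, E)),
    (⋂ i, {x | f i x = 0}).Nonempty ↔ (⋂ i, {y | T (f i) y = 0}).Nonempty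

/-- The unique continuous extension `ψ* : βY → ℝ ∪ {∞}` of `ψ ∈ C(Y)` with values in the
one-point compactification of `ℝ`. -/
noncomputable def onePointExt {Y : Type*} [TopologicalSpace Y] (ψ : C(Y, ℝ)) :
    StoneCech Y → OnePoint ℝ :=
  stoneCechExtend (OnePoint.continuous_coe.comp ψ.continuous)

/-- The Hewitt realcompactification `υY ⊆ βY`: the set of points of `βY` at which the
extension of every real-valued continuous function on `Y` takes a finite value. -/
def hewittRealcompactification (Y : Type*) [TopologicalSpace Y] : Set (StoneCech Y) :=
  {p | ∀ ψ : C(Y, ℝ), onePointExt ψ p ≠ OnePoint.infty}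

/-- A completely regular Hausdorff space is realcompact if the image of the canonical map
`ι_X : X → βX` is exactly the Hewitt realcompactification `υX`. -/
def Realcompact (X : Type*) [TopologicalSpace X] : Prop :=
  Set.range (stoneCechUnit : X → StoneCech X) = hewittRealcompactification X

/-- The set `Z_x ⊆ βY` for `T : C(X,E) → C(Y,F)`. -/
def ZxC {X Y E F : Type*} [TopologicalSpace X] [TopologicalSpace Y]
    [TopologicalSpace E] [Zero E] [TopologicalSpace F] [Zero F]
    (T : C(X, E) → C(Y, F)) (x : X) : Set (StoneCech Y) :=
  ⋂ (f : C(X, E)) (_ : f x = 0), closure (stoneCechUnit '' {y | T f y = 0})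

theorem prop3 {X Y E F : Type*}
    [TopologicalSpace X] [T2Space X] [CompletelyRegularSpace X]
    [TopologicalSpace Y] [T2Space Y] [CompletelyRegularSpace Y]
    [AddCommGroup E] [Module ℝ E] [TopologicalSpace E] [IsTopologicalAddGroup E]
    [ContinuousSMul ℝ E] [T2Space E] [Nontrivial E]
    [AddCommGroup F] [Module ℝ F] [TopologicalSpace F] [IsTopologicalAddGroup F]
    [ContinuousSMul ℝ F] [T2Space F] [Nontrivial F]
    (T : C(X, E) →ₗ[ℝ] C(Y, F)) (hTsurj : Function.Surjective T)
    (hT : PreservesCommonZerosC (T : C(X, E) → C(Y, F))) :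
    (⋃ x : X, ZxC (T : C(X, E) → C(Y, F)) x) ⊆ hewittRealcompactification Y := by
  intro p hp
  rw [Set.mem_iUnion] at hp
  obtain ⟨x, hpx⟩ := hp
  simp only [hewittRealcompactification, Set.mem_setOf_eq]
  intro ψ
  simp only [ZxC, Set.mem_iInter] at hpx
  -- Key cancellation: if T of a constant function vanishes somewhere, the constant is 0.
  have key : ∀ (e : E) (y : Y), (T (ContinuousMap.const X e)) y = 0 → e = 0 := by
    intro e y h
    obtain ⟨x', hx'⟩ := (hT 0 fun _ => ContinuousMap.const X e).mpr
      ⟨y, Set.mem_iInter.mpr fun _ => h⟩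
    simpa using Set.mem_iInter.mp hx' 0
  obtain ⟨e₀, he₀⟩ := exists_ne (0 : E)
  set φ : C(Y, ℝ) := 1 + ψ * ψ with hφdef
  have hφ : ∀ y, φ y = 1 + ψ y * ψ y := by intro y; simp [hφdef]
  have hφne : ∀ y, φ y ≠ 0 := by
    intro y; rw [hφ]; nlinarith [mul_self_nonneg (ψ y)]
  set u : C(Y, F) := T (ContinuousMap.const X e₀) with hu
  have hg : Continuous fun y => (φ y)⁻¹ • u y :=
    (φ.continuous.inv₀ hφne).smul u.continuous
  obtain ⟨f, hf⟩ := hTsurj ⟨_, hg⟩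
  set e₁ := f x with he₁def
  set f₀ := f - ContinuousMap.const X e₁ with hf₀def
  have hf₀x : f₀ x = 0 := by simp [hf₀def, he₁def]
  have hpZ := hpx f₀ hf₀x
  have hkey : ∀ y, (T f₀) y = 0 → e₀ = φ y • e₁ := by
    intro y hy
    have h1 : (T f₀) y = (φ y)⁻¹ • u y - (T (ContinuousMap.const X e₁)) y := by
      rw [hf₀def, map_sub, ContinuousMap.sub_apply, hf, ContinuousMap.coe_mk]
    have h2 : (φ y)⁻¹ • u y - (T (ContinuousMap.const X e₁)) y = 0 := by
      rw [← h1]; exact hy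
    have h3 : u y = φ y • (T (ContinuousMap.const X e₁)) y := by
      rw [← sub_eq_zero.mp h2, smul_smul, mul_inv_cancel₀ (hφne y), one_smul]
    have hconst : ContinuousMap.const X (e₀ - φ y • e₁)
        = ContinuousMap.const X e₀ - φ y • ContinuousMap.const X e₁ := by
      ext z; simp
    have h4 : (T (ContinuousMap.const X (e₀ - φ y • e₁))) y = 0 := by
      rw [hconst, map_sub, map_smul, ContinuousMap.sub_apply, ContinuousMap.smul_apply,
        ← hu, h3, sub_self]
    have h5 := key _ _ h4
    exact sub_eq_zero.mp h5
  have hS : {y | (T f₀) y = 0}.Nonempty := by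
    by_contra h
    rw [Set.not_nonempty_iff_eq_empty] at h
    rw [h] at hpZ
    simp at hpZ
  obtain ⟨y₀, hy₀⟩ := hS
  set c := φ y₀ with hc
  have he₁ : e₁ ≠ 0 := by
    intro h
    exact he₀ (by rw [hkey y₀ hy₀, h, smul_zero])
  have hconstφ : ∀ y, (T f₀) y = 0 → φ y = c := by
    intro y hy
    have h1 := hkey y hy
    have h2 := hkey y₀ hy₀
    have h3 : (φ y - c) • e₁ = 0 := by rw [sub_smul, ← h1, ← h2, sub_self]
    rcases smul_eq_zero.mp h3 with h | h
    · linarith [sub_eq_zero.mp (by linarith [h] : φ y - c = 0)]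
    · exact absurd h he₁
  set b := |c| + 1 with hb
  have hbound : ∀ y, (T f₀) y = 0 → ψ y ∈ Set.Icc (-b) b := by
    intro y hy
    have h1 : 1 + ψ y * ψ y = c := by rw [← hφ y, hconstφ y hy]
    constructor <;>
      nlinarith [sq_nonneg (ψ y - 1), sq_nonneg (ψ y + 1), le_abs_self c, neg_abs_le c]
  have hmaps : Set.MapsTo (onePointExt ψ) (stoneCechUnit '' {y | (T f₀) y = 0})
      ((fun t : ℝ => (t : OnePoint ℝ)) '' Set.Icc (-b) b) := by
    rintro q ⟨y, hyS, rfl⟩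
    refine ⟨ψ y, hbound y hyS, ?_⟩
    exact (congrFun (stoneCechExtend_extends (OnePoint.continuous_coe.comp ψ.continuous)) y).symm
  have hcont : Continuous (onePointExt ψ) := continuous_stoneCechExtend _
  have hmem := map_mem_closure hcont hpZ hmaps
  have hclosed : IsClosed ((fun t : ℝ => (t : OnePoint ℝ)) '' Set.Icc (-b) b) :=
    (isCompact_Icc.image OnePoint.continuous_coe).isClosed
  rw [hclosed.closure_eq] at hmem
  obtain ⟨t, -, ht⟩ := hmem
  rw [← ht]
  exact OnePoint.coe_ne_infty t
end

section
/- Let X and Y be realcompact (completely regular Hausdorff) spaces and let E and F be nontrivial Hausdorff topological real vector spaces. Suppose T : C(X,E) → C(Y,F) is a vector space isomorphism (linear bijection) that preserves common zeros. Then there are a homeomorphism h : Y → X and, for each y ∈ Y, a vector space isomorphism S_y : E → F such that Tf(y) = S_y(f(h(y))) for all f ∈ C(X,E) and all y ∈ Y. Conversely, if a vector space isomorphism T : C(X,E) → C(Y,F) has this form for some homeomorphism h : Y → X and linear isomorphisms S_y, then T preserves common zeros. -/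
open Set Filter Topology

section Aux

variable {X Y E F : Type*}

/-- Separation of points by vector-valued continuous functions on a completely regular
Hausdorff space. -/
lemma sep_point_aux [TopologicalSpace X] [T2Space X] [CompletelyRegularSpace X]
    [AddCommGroup E] [Module ℝ E] [TopologicalSpace E] [IsTopologicalAddGroup E]
    [ContinuousSMul ℝ E] [Nontrivial E]
    (x x' : X) (h : ∀ f : C(X, E), f x = 0 → f x' = 0) : x' = x := by
  by_contra hne
  obtain ⟨φ, hφc, hφx', hφx⟩ := CompletelyRegularSpace.completely_regular x' {x}
    isClosed_singleton (by simpa using hne)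
  obtain ⟨e, he⟩ := exists_ne (0 : E)
  set f : C(X, E) := ⟨fun z => (1 - (φ z : ℝ)) • e,
    (continuous_const.sub (continuous_subtype_val.comp hφc)).smul continuous_const⟩ with hf
  have h1 : f x = 0 := by
    have : φ x = 1 := hφx rfl
    simp [hf, this]
  have h2 := h f h1
  have : φ x' = 0 := hφx'
  simp [hf, this] at h2
  exact he h2

/-- The key lemma: if `T` is a linear bijection preserving common zeros and `X` is
realcompact, then for every `y₀` there is a point `x₀ ∈ X` at which all members of the
kernel of `f ↦ T f y₀` vanish. -/
lemma key_point [TopologicalSpace X] [T2Space X] [CompletelyRegularSpace X]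
    [TopologicalSpace Y]
    [AddCommGroup E] [Module ℝ E] [TopologicalSpace E] [IsTopologicalAddGroup E]
    [ContinuousSMul ℝ E] [T2Space E] [Nontrivial E]
    [AddCommGroup F] [Module ℝ F] [TopologicalSpace F] [IsTopologicalAddGroup F]
    [ContinuousSMul ℝ F] [T2Space F] [Nontrivial F]
    (hX : Realcompact X) (T : C(X, E) ≃ₗ[ℝ] C(Y, F))
    (hT : PreservesCommonZerosC (T : C(X, E) → C(Y, F))) (y₀ : Y) :
    ∃ x₀ : X, ∀ f : C(X, E), T f y₀ = 0 → f x₀ = 0 := by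
  classical
  -- single-function version of the preservation property
  have hT1 : ∀ u : C(X, E), {x | u x = 0}.Nonempty ↔ {y' | T u y' = 0}.Nonempty := by
    intro u
    simpa [Set.iInter_const] using hT 0 (fun _ => u)
  -- finite intersection property for the kernel of `f ↦ T f y₀`
  have fip : ∀ l : List C(X, E), (∀ f ∈ l, T f y₀ = 0) → ∃ x, ∀ f ∈ l, f x = 0 := by
    intro l hl
    have hq : ∀ i : Fin (l.length + 1), T (l.getD i 0) y₀ = 0 := by
      intro i
      by_cases hi : (i : ℕ) < l.length
      · exact hl _ (List.getD_eq_getElem l 0 hi ▸ List.getElem_mem hi)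
      · rw [List.getD_eq_default l 0 (not_lt.mp hi)]
        simp
    have hne : (⋂ i, {y' | T ((fun i : Fin (l.length + 1) => l.getD i 0) i) y' = 0}).Nonempty :=
      ⟨y₀, mem_iInter.mpr fun i => hq i⟩
    obtain ⟨x, hx⟩ := (hT l.length (fun i => l.getD i 0)).mpr hne
    rw [mem_iInter] at hx
    refine ⟨x, fun f hf => ?_⟩
    obtain ⟨n, hn, rfl⟩ := List.getElem_of_mem hf
    have h9 : l.getD n 0 x = 0 := hx ⟨n, Nat.lt_succ_of_lt hn⟩
    rwa [List.getD_eq_getElem l 0 hn] at h9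
  -- an ultrafilter containing all zero sets of kernel elements
  obtain ⟨U, hU⟩ := Ultrafilter.exists_ultrafilter_of_finite_inter_nonempty
      {s | ∃ g : C(X, E), T g y₀ = 0 ∧ s = {x | g x = 0}} (by
    intro Tf hTf
    have hsel : ∀ s ∈ Tf, ∃ g : C(X, E), T g y₀ = 0 ∧ s = {x | g x = 0} :=
      fun s hs => hTf hs
    choose! gf hgf1 hgf2 using hsel
    obtain ⟨x, hx⟩ := fip (Tf.toList.map gf) (by
      intro f hfm
      obtain ⟨s, hs, rfl⟩ := List.mem_map.mp hfm
      exact hgf1 s (Finset.mem_toList.mp hs))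
    refine ⟨x, ?_⟩
    rw [mem_sInter]
    intro s hs
    have hs' : s ∈ Tf := hs
    rw [hgf2 s hs']
    exact hx (gf s) (List.mem_map.mpr ⟨s, Finset.mem_toList.mpr hs', rfl⟩))
  have hUZ : ∀ g : C(X, E), T g y₀ = 0 → {x | g x = 0} ∈ U :=
    fun g hg => hU ⟨g, hg, rfl⟩
  -- every real-valued continuous function is bounded on a set of the ultrafilter
  have bound : ∀ ψ : C(X, ℝ), ∃ M : ℝ, {x | |ψ x| ≤ M} ∈ U := by
    intro ψ
    set χ : C(X, ℝ) := ⟨fun x => 1 + ψ x * ψ x,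
      continuous_const.add (ψ.continuous.mul ψ.continuous)⟩ with hχ
    suffices hc : ∃ M, {x | χ x ≤ M} ∈ U by
      obtain ⟨M, hM⟩ := hc
      refine ⟨M, mem_of_superset hM ?_⟩
      intro x hx
      have h1 : |ψ x| ≤ χ x := by
        simp only [hχ, ContinuousMap.coe_mk]
        nlinarith [sq_nonneg (|ψ x| - 1), sq_abs (ψ x), abs_nonneg (ψ x)]
      exact le_trans h1 hx
    by_contra hcon
    push_neg at hcon
    have hbig : ∀ M : ℝ, {x | M < χ x} ∈ U := by
      intro M
      have h1 := Ultrafilter.compl_mem_iff_notMem.mpr (hcon M)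
      have h2 : {x | χ x ≤ M}ᶜ = {x | M < χ x} := by
        ext x; simp [not_le]
      rwa [h2] at h1
    obtain ⟨e, he⟩ := exists_ne (0 : E)
    set ce : C(X, E) := ContinuousMap.const X e with hce
    set χe : C(X, E) := ⟨fun x => χ x • e, χ.continuous.smul continuous_const⟩ with hχe
    set w₀ := T ce y₀ with hw₀def
    have hw₀ : w₀ ≠ 0 := by
      intro h
      obtain ⟨x, hx⟩ := U.nonempty_of_mem (hUZ ce h)
      exact he hx
    set v := T χe y₀ with hvdef
    set c₀ := T.symm (ContinuousMap.const Y w₀) with hc₀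
    set Cs := T.symm (ContinuousMap.const Y v) with hCsdef
    have hf₁ : T (ce - c₀) y₀ = 0 := by
      rw [map_sub, hc₀, T.apply_symm_apply]
      simp [hw₀def]
    have hA := hUZ _ hf₁
    have hf₂ : T (χe - Cs) y₀ = 0 := by
      rw [map_sub, hCsdef, T.apply_symm_apply]
      simp [hvdef]
    have hB := hUZ _ hf₂
    obtain ⟨x₁, hx₁A, hx₁B⟩ := U.nonempty_of_mem (inter_mem hA hB)
    have hc₀x₁ : c₀ x₁ = e := by
      have : ce x₁ - c₀ x₁ = 0 := hx₁A
      have := sub_eq_zero.mp this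
      simpa [hce] using this.symm
    have hCsx₁ : Cs x₁ = χ x₁ • e := by
      have : χe x₁ - Cs x₁ = 0 := hx₁B
      have := sub_eq_zero.mp this
      simpa [hχe] using this.symm
    set s₁ := χ x₁ with hs₁
    -- the function Cs - s₁ • c₀ has a zero, hence v = s₁ • w₀
    have hdz : {x | (Cs - s₁ • c₀) x = 0}.Nonempty := by
      refine ⟨x₁, ?_⟩
      show Cs x₁ - s₁ • c₀ x₁ = 0
      rw [hCsx₁, hc₀x₁]
      exact sub_self _
    obtain ⟨y₁, hy₁⟩ := (hT1 _).mp hdz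
    have hv : v = s₁ • w₀ := by
      have hTd : T (Cs - s₁ • c₀) y₁ = v - s₁ • w₀ := by
        rw [map_sub, map_smul, hCsdef, hc₀, T.apply_symm_apply, T.apply_symm_apply]
        simp
      have : v - s₁ • w₀ = 0 := by rw [← hTd]; exact hy₁
      exact sub_eq_zero.mp this
    have hconst : ContinuousMap.const Y v = s₁ • ContinuousMap.const Y w₀ := by
      ext y
      simp [hv]
    have hCseq : Cs = s₁ • c₀ := by
      rw [hCsdef, hconst, map_smul, ← hc₀]
    obtain ⟨x₂, ⟨hx₂A, hx₂B⟩, hx₂s⟩ := U.nonempty_of_mem (inter_mem (inter_mem hA hB) (hbig s₁))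
    have h1 : c₀ x₂ = e := by
      have : ce x₂ - c₀ x₂ = 0 := hx₂A
      have := sub_eq_zero.mp this
      simpa [hce] using this.symm
    have h2 : χ x₂ • e = s₁ • e := by
      have h3 : χe x₂ - Cs x₂ = 0 := hx₂B
      have h4 := sub_eq_zero.mp h3
      rw [hCseq] at h4
      have : χ x₂ • e = s₁ • c₀ x₂ := by simpa [hχe] using h4
      rwa [h1] at this
    have h5 : (χ x₂ - s₁) • e = 0 := by rw [sub_smul, h2, sub_self]
    have h6 : χ x₂ = s₁ := by
      by_contra h7
      have h8 : e = 0 := by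
        have := congrArg (fun z => (χ x₂ - s₁)⁻¹ • z) h5
        simpa [inv_smul_smul₀ (sub_ne_zero.mpr h7)] using this
      exact he h8
    have : s₁ < χ x₂ := hx₂s
    rw [h6] at this
    exact lt_irrefl _ this
  -- the point of βX determined by U
  set p : StoneCech X := T2Quotient.mk (Quot.mk _ U) with hp
  have hev : ∀ {g : X → OnePoint ℝ} (hg : Continuous g),
      stoneCechExtend hg p = Ultrafilter.extend g U := by
    intro g hg
    rw [hp, stoneCechExtend]
    rfl
  have htend : ∀ (g : X → OnePoint ℝ) (hg : Continuous g),
      Tendsto g U (𝓝 (stoneCechExtend hg p)) := by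
    intro g hg
    rw [hev hg]
    have h2 := ultrafilter_extend_eq_iff.mp (rfl :
      Ultrafilter.extend g U = Ultrafilter.extend g U)
    rwa [Ultrafilter.coe_map] at h2
  have hhew : p ∈ hewittRealcompactification X := by
    intro ψ
    obtain ⟨M, hM⟩ := bound ψ
    intro hbad
    have ht := htend ((fun r : ℝ => (r : OnePoint ℝ)) ∘ ψ)
      (OnePoint.continuous_coe.comp ψ.continuous)
    have hteq : onePointExt ψ p = stoneCechExtend
        (OnePoint.continuous_coe.comp ψ.continuous) p := rfl
    rw [← hteq, hbad] at ht
    have hcl : OnePoint.infty ∈ closure ((fun r : ℝ => (r : OnePoint ℝ)) '' Set.Icc (-M) M) := by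
      apply mem_closure_of_tendsto ht
      filter_upwards [hM] with x hx
      exact ⟨ψ x, by constructor <;> [exact (abs_le.mp hx).1; exact (abs_le.mp hx).2], rfl⟩
    have hclosed : IsClosed ((fun r : ℝ => (r : OnePoint ℝ)) '' Set.Icc (-M) M) :=
      (isCompact_Icc.image OnePoint.continuous_coe).isClosed
    rw [hclosed.closure_eq] at hcl
    obtain ⟨r, -, hr⟩ := hcl
    exact OnePoint.coe_ne_infty r hr
  have hrange : p ∈ Set.range (stoneCechUnit : X → StoneCech X) := by
    rw [hX]; exact hhew
  obtain ⟨x₀, hx₀⟩ := hrange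
  refine ⟨x₀, ?_⟩
  intro f hf
  by_contra hfx
  have hZclosed : IsClosed {x | f x = 0} := by
    have : {x | f x = 0} = f ⁻¹' {0} := rfl
    rw [this]
    exact isClosed_singleton.preimage f.continuous
  obtain ⟨φ, hφc, hφx₀, hφK⟩ :=
    CompletelyRegularSpace.completely_regular x₀ {x | f x = 0} hZclosed hfx
  set g : C(X, ℝ) := ⟨fun x => (φ x : ℝ), continuous_subtype_val.comp hφc⟩ with hg
  have ht := htend ((fun r : ℝ => (r : OnePoint ℝ)) ∘ g)
    (OnePoint.continuous_coe.comp g.continuous)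
  have h1 : stoneCechExtend (OnePoint.continuous_coe.comp g.continuous) p
      = ((g x₀ : ℝ) : OnePoint ℝ) := by
    rw [← hx₀]
    exact congrFun (stoneCechExtend_extends (OnePoint.continuous_coe.comp g.continuous)) x₀
  have h2 : stoneCechExtend (OnePoint.continuous_coe.comp g.continuous) p
      = (((1 : ℝ)) : OnePoint ℝ) := by
    have hcl : stoneCechExtend (OnePoint.continuous_coe.comp g.continuous) p
        ∈ closure {(((1 : ℝ)) : OnePoint ℝ)} := by
      apply mem_closure_of_tendsto ht
      filter_upwards [hUZ f hf] with x hx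
      have hx1 : φ x = 1 := hφK hx
      simp [hg, hx1]
    rwa [closure_singleton, mem_singleton_iff] at hcl
  rw [h1] at h2
  have h3 : (g x₀ : ℝ) = 1 := by
    exact_mod_cast h2
  have h4 : (g x₀ : ℝ) = 0 := by
    simp [hg, hφx₀]
  rw [h4] at h3
  norm_num at h3

/-- Continuity of the support map, from the zero-set correspondence. -/
lemma cont_of_ziff [TopologicalSpace X] [T2Space X] [CompletelyRegularSpace X]
    [TopologicalSpace Y]
    [AddCommGroup E] [Module ℝ E] [TopologicalSpace E] [IsTopologicalAddGroup E]
    [ContinuousSMul ℝ E] [Nontrivial E]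
    [AddCommGroup F] [TopologicalSpace F] [T2Space F] [IsTopologicalAddGroup F]
    (A : C(X, E) → C(Y, F)) (hm : Y → X)
    (ziff : ∀ (f : C(X, E)) (y : Y), A f y = 0 ↔ f (hm y) = 0) : Continuous hm := by
  rw [continuous_iff_isClosed]
  intro C hC
  rw [← isOpen_compl_iff]
  rw [isOpen_iff_forall_mem_open]
  intro y hy
  have hy' : hm y ∉ C := hy
  obtain ⟨φ, hφc, hφy, hφC⟩ := CompletelyRegularSpace.completely_regular (hm y) C hC hy'
  obtain ⟨e, he⟩ := exists_ne (0 : E)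
  set u : C(X, E) := ⟨fun z => (1 - (φ z : ℝ)) • e,
    (continuous_const.sub (continuous_subtype_val.comp hφc)).smul continuous_const⟩ with hu
  refine ⟨{y' | A u y' ≠ 0}, ?_, ?_, ?_⟩
  · intro y' hy1 hy2
    apply hy1
    rw [ziff]
    have h1 : φ (hm y') = 1 := hφC hy2
    simp [hu, h1]
  · have : {y' | A u y' ≠ 0} = (A u) ⁻¹' ({0}ᶜ) := rfl
    rw [this]
    exact isClosed_singleton.isOpen_compl.preimage (A u).continuous
  · intro h0
    have h0' : A u y = 0 := h0
    rw [ziff] at h0'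
    have : φ (hm y) = 0 := hφy
    simp [hu, this] at h0'
    exact he h0'

end Aux

theorem thm4 {X Y E F : Type*}
    [TopologicalSpace X] [T2Space X] [CompletelyRegularSpace X]
    [TopologicalSpace Y] [T2Space Y] [CompletelyRegularSpace Y]
    (hX : Realcompact X) (hY : Realcompact Y)
    [AddCommGroup E] [Module ℝ E] [TopologicalSpace E] [IsTopologicalAddGroup E]
    [ContinuousSMul ℝ E] [T2Space E] [Nontrivial E]
    [AddCommGroup F] [Module ℝ F] [TopologicalSpace F] [IsTopologicalAddGroup F]
    [ContinuousSMul ℝ F] [T2Space F] [Nontrivial F]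
    (T : C(X, E) ≃ₗ[ℝ] C(Y, F)) :
    PreservesCommonZerosC (T : C(X, E) → C(Y, F)) ↔
      ∃ (h : Y ≃ₜ X) (S : Y → (E ≃ₗ[ℝ] F)),
        ∀ (f : C(X, E)) (y : Y), T f y = S y (f (h y)) := by
  constructor
  · intro hT
    have hTsymm : PreservesCommonZerosC (T.symm : C(Y, F) → C(X, E)) := by
      intro k g
      have h1 := hT k (fun i => T.symm (g i))
      simp only [LinearEquiv.apply_symm_apply] at h1
      exact h1.symm
    choose hm hhm using fun y => key_point hX T hT y
    choose hn hhn using fun x => key_point hY T.symm hTsymm x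
    have left : ∀ y, hn (hm y) = y := by
      intro y
      apply sep_point_aux (E := F)
      intro g hg
      have h1 : T (T.symm g) y = 0 := by rw [T.apply_symm_apply]; exact hg
      exact hhn _ _ (hhm _ _ h1)
    have right : ∀ x, hm (hn x) = x := by
      intro x
      apply sep_point_aux (E := E)
      intro f hf
      have h1 : T.symm (T f) x = 0 := by rw [T.symm_apply_apply]; exact hf
      exact hhm _ _ (hhn _ _ h1)
    have ziff : ∀ (f : C(X, E)) (y : Y), T f y = 0 ↔ f (hm y) = 0 := by
      intro f y
      constructor
      · exact hhm y f
      · intro hf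
        have h1 : T.symm (T f) (hm y) = 0 := by rw [T.symm_apply_apply]; exact hf
        have h2 := hhn (hm y) (T f) h1
        rwa [left y] at h2
    have ziff' : ∀ (g : C(Y, F)) (x : X), T.symm g x = 0 ↔ g (hn x) = 0 := by
      intro g x
      constructor
      · exact hhn x g
      · intro hg
        have h1 : T (T.symm g) (hn x) = 0 := by rw [T.apply_symm_apply]; exact hg
        have h2 := hhm (hn x) (T.symm g) h1
        rwa [right x] at h2
    have contm : Continuous hm := cont_of_ziff (fun f => T f) hm ziff
    have contn : Continuous hn := cont_of_ziff (fun g => T.symm g) hn ziff'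
    refine ⟨Homeomorph.mk ⟨hm, hn, left, right⟩ contm contn, fun y =>
      { toFun := fun v => T (ContinuousMap.const X v) y
        map_add' := by
          intro a b
          show T (ContinuousMap.const X (a + b)) y
              = T (ContinuousMap.const X a) y + T (ContinuousMap.const X b) y
          have h1 : ContinuousMap.const X (a + b)
              = ContinuousMap.const X a + ContinuousMap.const X b := by
            ext z; simp
          rw [h1, map_add]
          simp
        map_smul' := by
          intro r a
          show T (ContinuousMap.const X (r • a)) y
              = (RingHom.id ℝ) r • T (ContinuousMap.const X a) y
          have h1 : ContinuousMap.const X (r • a) = r • ContinuousMap.const X a := by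
            ext z; simp
          rw [h1, map_smul]
          simp
        invFun := fun w => T.symm (ContinuousMap.const Y w) (hm y)
        left_inv := by
          intro v
          have h1 : T (ContinuousMap.const X v
              - T.symm (ContinuousMap.const Y (T (ContinuousMap.const X v) y))) y = 0 := by
            rw [map_sub, T.apply_symm_apply]
            simp
          have h2 := (ziff _ _).mp h1
          rw [ContinuousMap.sub_apply] at h2
          have h3 := sub_eq_zero.mp h2
          simpa using h3.symm
        right_inv := by
          intro w
          have h0 : (T.symm (ContinuousMap.const Y w)
              - ContinuousMap.const X (T.symm (ContinuousMap.const Y w) (hm y))) (hm y) = 0 := by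
            rw [ContinuousMap.sub_apply]
            simp
          have h1 := (ziff _ _).mpr h0
          rw [map_sub, T.apply_symm_apply] at h1
          have h2 : w - T (ContinuousMap.const X
              (T.symm (ContinuousMap.const Y w) (hm y))) y = 0 := by
            simpa using h1
          have h3 := sub_eq_zero.mp h2
          exact h3.symm }, ?_⟩
    intro f y
    have h0 : (f - ContinuousMap.const X (f (hm y))) (hm y) = 0 := by
      rw [ContinuousMap.sub_apply]
      simp
    have h1 := (ziff _ _).mpr h0
    rw [map_sub] at h1
    have h2 : T f y - T (ContinuousMap.const X (f (hm y))) y = 0 := by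
      simpa using h1
    exact sub_eq_zero.mp h2
  · rintro ⟨h, S, hS⟩ k f
    constructor
    · rintro ⟨x, hx⟩
      simp only [mem_iInter, mem_setOf_eq] at hx
      refine ⟨h.symm x, ?_⟩
      simp only [mem_iInter, mem_setOf_eq]
      intro i
      rw [hS, h.apply_symm_apply, hx i]
      simp
    · rintro ⟨y, hy⟩
      simp only [mem_iInter, mem_setOf_eq] at hy
      refine ⟨h y, ?_⟩
      simp only [mem_iInter, mem_setOf_eq]
      intro i
      have h1 := hy i
      rw [hS] at h1
      exact (LinearEquiv.map_eq_zero_iff _).mp h1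
end
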